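/- arXiv:2405.14447 — 6 statements merged into one kernel-verified Lean document; each statement's English description precedes it below -/
import Mathlib

section
/- Let T be an ergodic measure-preserving ℤ³-action on a probability space (Ω,A,μ). Let I̅₁ be the σ-algebra of sets invariant under the ℤ²-action (T_{0,j,k}), I̅₂ the σ-algebra of sets invariant under (T_{i,0,k}), and I̅₃ the σ-algebra of sets invariant under (T_{i,j,0}). Then the σ-algebras I̅₁, I̅₂ and I̅₃ are independent: for all A₁∈I̅₁, A₂∈I̅₂, A₃∈I̅₃, μ(A₁∩A₂∩A₃)=μ(A₁)μ(A₂)μ(A₃). -/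
open MeasureTheory

section Aux

variable {Ω : Type*} [MeasurableSpace Ω] {μ : Measure Ω}
  {T : ℤ × ℤ × ℤ → Ω → Ω}

private lemma tinv_add (hTadd : ∀ p q : ℤ × ℤ × ℤ, T (p + q) = T p ∘ T q)
    {s : Set Ω} {p q : ℤ × ℤ × ℤ}
    (hp : T p ⁻¹' s = s) (hq : T q ⁻¹' s = s) : T (p + q) ⁻¹' s = s := by
  rw [hTadd, Set.preimage_comp, hp, hq]

private lemma tinv_neg (hT0 : T 0 = id) (hTadd : ∀ p q : ℤ × ℤ × ℤ, T (p + q) = T p ∘ T q)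
    {s : Set Ω} {p : ℤ × ℤ × ℤ} (hp : T p ⁻¹' s = s) : T (-p) ⁻¹' s = s := by
  conv_lhs => rw [← hp, ← Set.preimage_comp, ← hTadd, add_neg_cancel, hT0, Set.preimage_id]

private lemma tinv_zsmul (hT0 : T 0 = id) (hTadd : ∀ p q : ℤ × ℤ × ℤ, T (p + q) = T p ∘ T q)
    {s : Set Ω} {e : ℤ × ℤ × ℤ} (he : T e ⁻¹' s = s) (n : ℤ) : T (n • e) ⁻¹' s = s := by
  induction n using Int.induction_on with
  | zero => simp [hT0]
  | succ k ih =>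
      have : ((k : ℤ) + 1) • e = (k : ℤ) • e + e := by rw [add_smul, one_smul]
      rw [this]; exact tinv_add hTadd ih he
  | pred k ih =>
      have : (-(k : ℤ) - 1) • e = (-(k : ℤ)) • e + (-e) := by
        rw [sub_smul, one_smul, sub_eq_add_neg]
      rw [this]; exact tinv_add hTadd ih (tinv_neg hT0 hTadd he)

/-- A set that is a.e. invariant under an ergodic action has measure `0` or `1`. -/
private lemma ae_invariant_trivial
    (hT0 : T 0 = id)
    (hTadd : ∀ p q : ℤ × ℤ × ℤ, T (p + q) = T p ∘ T q)
    (hTerg : ∀ s : Set Ω, MeasurableSet s → (∀ p, T p ⁻¹' s = s) → μ s = 0 ∨ μ s = 1)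
    (hTmeas : ∀ p, Measurable (T p))
    {s : Set Ω} (hs : MeasurableSet s)
    (hinv : ∀ p, μ (s \ T p ⁻¹' s) = 0) : μ s = 0 ∨ μ s = 1 := by
  set t : Set Ω := ⋂ p, T p ⁻¹' s with ht
  have ht_meas : MeasurableSet t := MeasurableSet.iInter fun p => (hTmeas p) hs
  have ht_sub : t ⊆ s := by
    intro x hx
    have := Set.mem_iInter.mp hx 0
    rwa [hT0, Set.preimage_id] at this
  have ht_inv : ∀ q, T q ⁻¹' t = t := by
    intro q
    ext x
    simp only [ht, Set.mem_preimage, Set.mem_iInter]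
    constructor
    · intro h r
      have := h (r - q)
      rw [← Function.comp_apply (f := T (r - q)) (g := T q), ← hTadd, sub_add_cancel] at this
      exact this
    · intro h p
      have := h (p + q)
      rw [hTadd] at this
      exact this
  have hst : μ (s \ t) = 0 := by
    refine measure_mono_null ?_ (measure_iUnion_null hinv)
    intro x hx
    obtain ⟨hxs, hxt⟩ := hx
    rw [ht, Set.mem_iInter] at hxt
    push_neg at hxt
    obtain ⟨p, hp⟩ := hxt
    exact Set.mem_iUnion.mpr ⟨p, hxs, hp⟩
  have hμts : μ t = μ s := by
    refine le_antisymm (measure_mono ht_sub) ?_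
    calc μ s ≤ μ (t ∪ (s \ t)) := measure_mono fun x hx => by
                by_cases hxt : x ∈ t
                · exact Or.inl hxt
                · exact Or.inr ⟨hx, hxt⟩
      _ ≤ μ t + μ (s \ t) := measure_union_le _ _
      _ = μ t := by rw [hst, add_zero]
  rw [← hμts]
  exact hTerg t ht_meas ht_inv

/-- A measurable function a.e. invariant under an ergodic action is a.e. constant. -/
private lemma ae_const_of_ae_invariant [IsProbabilityMeasure μ]
    (hT0 : T 0 = id)
    (hTadd : ∀ p q : ℤ × ℤ × ℤ, T (p + q) = T p ∘ T q)
    (hTerg : ∀ s : Set Ω, MeasurableSet s → (∀ p, T p ⁻¹' s = s) → μ s = 0 ∨ μ s = 1)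
    (hTmeas : ∀ p, Measurable (T p))
    {g : Ω → ℝ} (hg : Measurable g)
    (hinv : ∀ p, (fun x => g (T p x)) =ᵐ[μ] g) :
    ∃ c : ℝ, g =ᵐ[μ] fun _ => c := by
  set s : ℝ → Set Ω := fun a => {x | g x ≤ a} with hs
  have hs_meas : ∀ a, MeasurableSet (s a) := fun a => measurableSet_le hg measurable_const
  have hs_mono : ∀ {a b : ℝ}, a ≤ b → s a ⊆ s b := fun hab x hx => le_trans hx hab
  have h01 : ∀ a, μ (s a) = 0 ∨ μ (s a) = 1 := by
    intro a
    refine ae_invariant_trivial hT0 hTadd hTerg hTmeas (hs_meas a) ?_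
    intro p
    refine measure_mono_null ?_ (ae_iff.mp (hinv p))
    intro x hx
    obtain ⟨hx1, hx2⟩ := hx
    simp only [Set.mem_setOf_eq]
    intro heq
    exact hx2 (by simpa [hs, Set.mem_preimage, heq] using hx1)
  -- the set of levels of full measure
  set A : Set ℝ := {a | μ (s a) = 1} with hA
  have hA_ne : A.Nonempty := by
    by_contra hemp
    have hzero : ∀ a, μ (s a) = 0 := by
      intro a
      rcases h01 a with h | h
      · exact h
      · exact (hemp ⟨a, h⟩).elim
    have huniv : (⋃ n : ℕ, s (n : ℝ)) = Set.univ := by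
      ext x
      simp only [Set.mem_iUnion, Set.mem_univ, iff_true]
      obtain ⟨n, hn⟩ := exists_nat_ge (g x)
      exact ⟨n, hn⟩
    have : μ (Set.univ : Set Ω) = 0 := by
      rw [← huniv]
      exact measure_iUnion_null fun n => hzero _
    simp at this
  have hA_bdd : BddBelow A := by
    obtain ⟨n, hn⟩ : ∃ n : ℕ, μ (s (-(n : ℝ))) = 0 := by
      by_contra hnone
      push_neg at hnone
      have hone : ∀ n : ℕ, μ (s (-(n : ℝ))) = 1 := by
        intro n
        rcases h01 (-(n : ℝ)) with h | h
        · exact absurd h (hnone n)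
        · exact h
      have hcompl : μ (⋃ n : ℕ, (s (-(n : ℝ)))ᶜ) = 0 :=
        measure_iUnion_null fun n =>
          (prob_compl_eq_zero_iff (hs_meas _)).mpr (hone n)
      have huniv : (⋃ n : ℕ, (s (-(n : ℝ)))ᶜ) = Set.univ := by
        ext x
        simp only [Set.mem_iUnion, Set.mem_univ, iff_true, Set.mem_compl_iff]
        obtain ⟨n, hn⟩ := exists_nat_gt (-(g x))
        exact ⟨n, by simp only [hs, Set.mem_setOf_eq, not_le]; linarith⟩
      rw [huniv] at hcompl
      simp at hcompl
    refine ⟨-(n : ℝ), fun a ha => ?_⟩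
    by_contra hlt
    push_neg at hlt
    have : μ (s a) ≤ μ (s (-(n : ℝ))) := measure_mono (hs_mono hlt.le)
    rw [ha, hn] at this
    simp at this
  set c : ℝ := sInf A with hc
  refine ⟨c, ?_⟩
  -- bad sets
  set bad : ℚ → Set Ω := fun q =>
    if (q : ℝ) < c then s q else if c < (q : ℝ) then (s q)ᶜ else ∅ with hbad
  have hbad_null : ∀ q : ℚ, μ (bad q) = 0 := by
    intro q
    rcases lt_trichotomy (q : ℝ) c with h | h | h
    · rw [hbad]; simp only [if_pos h]
      rcases h01 (q : ℝ) with h0 | h0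
      · exact h0
      · exact absurd (csInf_le hA_bdd h0) (not_le.mpr h)
    · rw [hbad]; simp [h, lt_irrefl]
    · rw [hbad]; simp only [if_neg (not_lt.mpr h.le), if_pos h]
      obtain ⟨a, haA, hal⟩ := exists_lt_of_csInf_lt hA_ne h
      have : μ (s (q : ℝ)) = 1 := by
        refine le_antisymm prob_le_one ?_
        calc (1 : ENNReal) = μ (s a) := haA.symm
          _ ≤ μ (s (q : ℝ)) := measure_mono (hs_mono hal.le)
      exact (prob_compl_eq_zero_iff (hs_meas _)).mpr this
  have hN : μ (⋃ q : ℚ, bad q) = 0 := measure_iUnion_null hbad_null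
  refine measure_mono_null ?_ hN
  intro x hx
  simp only [Set.mem_setOf_eq] at hx
  rcases lt_trichotomy (g x) c with h | h | h
  · obtain ⟨q, hq1, hq2⟩ := exists_rat_btwn h
    refine Set.mem_iUnion.mpr ⟨q, ?_⟩
    rw [hbad]
    simp only [if_pos hq2]
    exact le_of_lt hq1
  · exact absurd h hx
  · obtain ⟨q, hq1, hq2⟩ := exists_rat_btwn h
    refine Set.mem_iUnion.mpr ⟨q, ?_⟩
    rw [hbad]
    simp only [if_neg (not_lt.mpr hq1.le), if_pos hq1]
    exact not_le.mpr hq2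

private def invAlg {Ω : Type*} [MeasurableSpace Ω] (T : ℤ × ℤ × ℤ → Ω → Ω)
    (e : ℤ × ℤ × ℤ) : MeasurableSpace Ω where
  MeasurableSet' u := MeasurableSet u ∧ T e ⁻¹' u = u
  measurableSet_empty := ⟨MeasurableSet.empty, by simp⟩
  measurableSet_compl u hu := ⟨hu.1.compl, by rw [Set.preimage_compl, hu.2]⟩
  measurableSet_iUnion f hf := ⟨MeasurableSet.iUnion fun i => (hf i).1, by
    simp only [Set.preimage_iUnion]
    exact Set.iUnion_congr fun i => (hf i).2⟩

/-- Key product formula via the conditional expectation onto the invariant σ-algebra. -/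
private lemma product_aux [IsProbabilityMeasure μ]
    (hT0 : T 0 = id)
    (hTadd : ∀ p q : ℤ × ℤ × ℤ, T (p + q) = T p ∘ T q)
    (hTmp : ∀ p, MeasurePreserving (T p) μ μ)
    (hTerg : ∀ s : Set Ω, MeasurableSet s → (∀ p, T p ⁻¹' s = s) → μ s = 0 ∨ μ s = 1)
    (e : ℤ × ℤ × ℤ) (ζ : ℤ × ℤ → ℤ × ℤ × ℤ)
    (hgen : ∀ p : ℤ × ℤ × ℤ, ∃ (n : ℤ) (u : ℤ × ℤ), p = n • e + ζ u)
    (B C : Set Ω) (hB : MeasurableSet B) (hC : MeasurableSet C)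
    (hBinv : T e ⁻¹' B = B) (hCinv : ∀ u, T (ζ u) ⁻¹' C = C) :
    μ (B ∩ C) = μ B * μ C := by
  classical
  have hcomm : ∀ (p q : ℤ × ℤ × ℤ) (s : Set Ω),
      T p ⁻¹' (T q ⁻¹' s) = T q ⁻¹' (T p ⁻¹' s) := by
    intro p q s
    rw [← Set.preimage_comp, ← hTadd, add_comm, hTadd, Set.preimage_comp]
  -- the invariant σ-algebra of `T e`
  have hImem : ∀ u : Set Ω, MeasurableSet[invAlg T e] u ↔ MeasurableSet u ∧ T e ⁻¹' u = u :=
    fun u => Iff.rfl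
  have hm : invAlg T e ≤ ‹MeasurableSpace Ω› := fun u hu => ((hImem u).mp hu).1
  haveI : SigmaFinite (μ.trim hm) := by infer_instance
  -- every `T q` is `I`-measurable
  have hTqI : ∀ q, @Measurable Ω Ω (invAlg T e) (invAlg T e) (T q) := by
    intro q u hu
    exact ⟨(hTmp q).measurable hu.1, by rw [hcomm e q u, hu.2]⟩
  -- `T q` is a measurable embedding
  have hTemb : ∀ q, MeasurableEmbedding (T q) := by
    intro q
    have li : Function.LeftInverse (T (-q)) (T q) := by
      intro x
      rw [← Function.comp_apply (f := T (-q)) (g := T q), ← hTadd, neg_add_cancel, hT0, id]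
    have ri : Function.RightInverse (T (-q)) (T q) := by
      intro x
      rw [← Function.comp_apply (f := T q) (g := T (-q)), ← hTadd, add_neg_cancel, hT0, id]
    exact (MeasurableEquiv.mk ⟨T q, T (-q), li, ri⟩
      (hTmp q).measurable (hTmp (-q)).measurable).measurableEmbedding
  set f : Ω → ℝ := C.indicator (fun _ => (1 : ℝ)) with hf
  have hf_int : Integrable f μ := (integrable_const (1 : ℝ)).indicator hC
  have hfS : ∀ (u : ℤ × ℤ) (x : Ω), f (T (ζ u) x) = f x := by
    intro u x
    have hmem : T (ζ u) x ∈ C ↔ x ∈ C := by rw [← Set.mem_preimage, hCinv]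
    rw [hf]
    simp only [Set.indicator_apply]
    exact if_congr hmem rfl rfl
  set g : Ω → ℝ := μ[f | invAlg T e] with hg
  -- `g ∘ T (ζ u) =ᵐ[μ] g`
  have hgS : ∀ u : ℤ × ℤ, (g ∘ T (ζ u)) =ᵐ[μ] g := by
    intro u
    refine ae_eq_condExp_of_forall_setIntegral_eq hm hf_int ?_ ?_ ?_
    · intro s _ _
      exact (((hTmp (ζ u)).integrable_comp_emb (hTemb (ζ u))).mpr
        integrable_condExp).integrableOn
    · intro s hsI _
      set s' : Set Ω := T (-ζ u) ⁻¹' s with hs'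
      have hs'I : MeasurableSet[invAlg T e] s' := hTqI (-ζ u) hsI
      have hpre : T (ζ u) ⁻¹' s' = s := by
        rw [hs', ← Set.preimage_comp, ← hTadd, neg_add_cancel, hT0, Set.preimage_id]
      calc ∫ x in s, (g ∘ T (ζ u)) x ∂μ
          = ∫ x in T (ζ u) ⁻¹' s', g (T (ζ u) x) ∂μ := by rw [hpre]; rfl
        _ = ∫ x in s', g x ∂μ :=
            (hTmp (ζ u)).setIntegral_preimage_emb (hTemb (ζ u)) _ _
        _ = ∫ x in s', f x ∂μ := setIntegral_condExp hm hf_int hs'I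
        _ = ∫ x in T (ζ u) ⁻¹' s', f (T (ζ u) x) ∂μ :=
            ((hTmp (ζ u)).setIntegral_preimage_emb (hTemb (ζ u)) _ _).symm
        _ = ∫ x in s, f x ∂μ := by
            rw [hpre]
            exact setIntegral_congr_fun (hm s hsI) fun x _ => hfS u x
    · exact (stronglyMeasurable_condExp.comp_measurable (hTqI (ζ u))).aestronglyMeasurable
  -- `g` is pointwise invariant under `T (n • e)`
  have hge : ∀ (n : ℤ) (x : Ω), g (T (n • e) x) = g x := by
    intro n x
    have hsing : MeasurableSet[invAlg T e] (g ⁻¹' {g x}) :=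
      stronglyMeasurable_condExp.measurable (measurableSet_singleton (g x))
    have h2 : T (n • e) ⁻¹' (g ⁻¹' {g x}) = g ⁻¹' {g x} :=
      tinv_zsmul hT0 hTadd hsing.2 n
    have hx : x ∈ g ⁻¹' {g x} := rfl
    rw [← h2] at hx
    exact hx
  -- `g` is a.e. invariant under the whole action
  have hg_inv : ∀ p, (fun x => g (T p x)) =ᵐ[μ] g := by
    intro p
    obtain ⟨n, u, rfl⟩ := hgen p
    have heq : ∀ x, g (T (n • e + ζ u) x) = g (T (ζ u) x) := by
      intro x
      rw [hTadd]
      exact hge n (T (ζ u) x)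
    filter_upwards [hgS u] with x hx
    rw [heq x]
    exact hx
  -- hence a.e. constant
  obtain ⟨c, hconst⟩ := ae_const_of_ae_invariant hT0 hTadd hTerg
    (fun p => (hTmp p).measurable)
    ((stronglyMeasurable_condExp.mono hm).measurable) hg_inv
  -- identify the constant
  have hint_g : ∫ x, g x ∂μ = (μ C).toReal := by
    rw [hg, integral_condExp hm, hf, integral_indicator hC, setIntegral_const,
      smul_eq_mul, mul_one, Measure.real]
  have hint_c : ∫ x, g x ∂μ = c := by
    rw [integral_congr_ae hconst]
    simp [measure_univ]
  have hc_val : c = (μ C).toReal := by rw [← hint_c, hint_g]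
  -- compute the set integral over B
  have hBI : MeasurableSet[invAlg T e] B := ⟨hB, hBinv⟩
  have h1 : ∫ x in B, g x ∂μ = ∫ x in B, f x ∂μ := setIntegral_condExp hm hf_int hBI
  have h2 : ∫ x in B, f x ∂μ = (μ (B ∩ C)).toReal := by
    rw [hf, setIntegral_indicator hC, setIntegral_const, smul_eq_mul, mul_one, Measure.real]
  have h3 : ∫ x in B, g x ∂μ = (μ C).toReal * (μ B).toReal := by
    rw [integral_congr_ae (ae_restrict_of_ae hconst), setIntegral_const, hc_val,
      smul_eq_mul, mul_comm, Measure.real]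
  have key : (μ (B ∩ C)).toReal = (μ B).toReal * (μ C).toReal := by
    rw [← h2, ← h1, h3]; ring
  have hfin1 : μ (B ∩ C) ≠ ⊤ := measure_ne_top μ _
  have hfin2 : μ B * μ C ≠ ⊤ := ENNReal.mul_ne_top (measure_ne_top μ B) (measure_ne_top μ C)
  rw [← ENNReal.toReal_eq_toReal_iff' hfin1 hfin2, ENNReal.toReal_mul]
  exact key

end Aux

/-- **Independence of the three invariant σ-algebras.**
For an ergodic measure-preserving `ℤ³`-action `T` on a probability space,
if `A₁` is invariant under the sub-action `(T_{0,j,k})`, `A₂` under `(T_{i,0,k})`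
and `A₃` under `(T_{i,j,0})`, then `μ (A₁ ∩ A₂ ∩ A₃) = μ A₁ * μ A₂ * μ A₃`. -/
theorem independence_of_invariant_sigma_algebras
    {Ω : Type*} [MeasurableSpace Ω] (μ : Measure Ω) [IsProbabilityMeasure μ]
    (T : ℤ × ℤ × ℤ → Ω → Ω)
    (hT0 : T 0 = id)
    (hTadd : ∀ p q : ℤ × ℤ × ℤ, T (p + q) = T p ∘ T q)
    (hTmp : ∀ p, MeasurePreserving (T p) μ μ)
    (hTerg : ∀ s : Set Ω, MeasurableSet s → (∀ p, T p ⁻¹' s = s) → μ s = 0 ∨ μ s = 1)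
    (A₁ A₂ A₃ : Set Ω)
    (hA₁ : MeasurableSet A₁) (hA₂ : MeasurableSet A₂) (hA₃ : MeasurableSet A₃)
    (hA₁inv : ∀ j k : ℤ, T (0, j, k) ⁻¹' A₁ = A₁)
    (hA₂inv : ∀ i k : ℤ, T (i, 0, k) ⁻¹' A₂ = A₂)
    (hA₃inv : ∀ i j : ℤ, T (i, j, 0) ⁻¹' A₃ = A₃) :
    μ (A₁ ∩ A₂ ∩ A₃) = μ A₁ * μ A₂ * μ A₃ := by
  have step1 : μ (A₂ ∩ A₃) = μ A₂ * μ A₃ := by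
    refine product_aux hT0 hTadd hTmp hTerg (0, 0, 1) (fun u => (u.1, u.2, 0))
      ?_ A₂ A₃ hA₂ hA₃ (hA₂inv 0 1) (fun u => hA₃inv u.1 u.2)
    rintro ⟨i, j, k⟩
    exact ⟨k, (i, j), by simp [Prod.ext_iff]⟩
  have step2 : μ ((A₂ ∩ A₃) ∩ A₁) = μ (A₂ ∩ A₃) * μ A₁ := by
    refine product_aux hT0 hTadd hTmp hTerg (1, 0, 0) (fun u => (0, u.1, u.2))
      ?_ (A₂ ∩ A₃) A₁ (hA₂.inter hA₃) hA₁ ?_ (fun u => hA₁inv u.1 u.2)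
    · rintro ⟨i, j, k⟩
      exact ⟨i, (j, k), by simp [Prod.ext_iff]⟩
    · rw [Set.preimage_inter, hA₂inv 1 0, hA₃inv 1 0]
  have hset : A₁ ∩ A₂ ∩ A₃ = (A₂ ∩ A₃) ∩ A₁ := by
    ext x; simp only [Set.mem_inter_iff]; tauto
  rw [hset, step2, step1]
  ring
end

section
/- Let U=(U_{i,j}) be a measure-preserving ℤ²-action on a probability space (X,B,ν), let J be the σ-algebra of U-invariant sets, let F be a U-invariant sub-σ-algebra of B (i.e. U_{i,j}(F)=F for all i,j), and let C be a sub-σ-algebra of F. Then for every f ∈ L²(J∨C), the conditional expectation E[f | F] is (J∨C)-measurable. -/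
set_option maxHeartbeats 1000000
set_option synthInstance.maxHeartbeats 400000


open MeasureTheory

/-- The σ-algebra of subsets of `X` that are `m`-measurable and invariant under every map
of the family `U : ι → X → X`. -/
def invariantSets {X ι : Type*} (m : MeasurableSpace X) (U : ι → X → X) :
    MeasurableSpace X where
  MeasurableSet' s := MeasurableSet[m] s ∧ ∀ i, U i ⁻¹' s = s
  measurableSet_empty := ⟨m.measurableSet_empty, fun _ => by simp⟩
  measurableSet_compl := fun s hs =>
    ⟨m.measurableSet_compl s hs.1, fun i => by rw [Set.preimage_compl, hs.2 i]⟩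
  measurableSet_iUnion := fun f hf =>
    ⟨m.measurableSet_iUnion f (fun n => (hf n).1), fun i => by
      rw [Set.preimage_iUnion]
      exact Set.iUnion_congr fun n => (hf n).2 i⟩

open Filter Set

section Aux

variable {X : Type*} [m0 : MeasurableSpace X] {ν : Measure X} {U : ℤ × ℤ → X → X}

/-- A measurable function that is a.e. invariant under a countable group action is a.e.
equal to a function measurable with respect to the invariant σ-algebra. -/
theorem aesm'_invariantSets
    (hU0 : U 0 = id) (hUadd : ∀ p q : ℤ × ℤ, U (p + q) = U p ∘ U q)
    (hUmp : ∀ p, MeasurePreserving (U p) ν ν)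
    {g : X → ℝ} (hg : Measurable g)
    (hinv : ∀ p, (fun x => g (U p x)) =ᵐ[ν] g) :
    AEStronglyMeasurable[invariantSets m0 U] g ν := by
  set N : Set X := ⋃ q, {x | g (U q x) ≠ g x} with hNdef
  have hNmeas : MeasurableSet N := by
    refine MeasurableSet.iUnion fun q => ?_
    exact (measurableSet_eq_fun (hg.comp (hUmp q).measurable) hg).compl
  have hNnull : ν N = 0 := measure_iUnion_null fun q => ae_iff.1 (hinv q)
  set N' : Set X := ⋃ p, U p ⁻¹' N with hN'def
  have hN'meas : MeasurableSet N' :=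
    MeasurableSet.iUnion fun p => (hUmp p).measurable hNmeas
  have hN'null : ν N' = 0 := measure_iUnion_null fun p => by
    rw [(hUmp p).measure_preimage hNmeas.nullMeasurableSet]; exact hNnull
  have hNsub : N ⊆ N' := by
    intro x hx
    refine Set.mem_iUnion.2 ⟨0, ?_⟩
    simpa [hU0] using hx
  have hN'inv : ∀ q, U q ⁻¹' N' = N' := by
    intro q
    ext x
    simp only [hN'def, Set.mem_iUnion, Set.mem_preimage]
    constructor
    · rintro ⟨p, hp⟩
      exact ⟨p + q, by rw [hUadd p q]; exact hp⟩
    · rintro ⟨r, hr⟩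
      refine ⟨r - q, ?_⟩
      have h1 : U (r - q) (U q x) = U r x := by
        have h2 := congrFun (hUadd (r - q) q) x
        simp only [Function.comp_apply] at h2
        rw [sub_add_cancel] at h2
        exact h2.symm
      rw [h1]; exact hr
  set g' : X → ℝ := N'ᶜ.indicator g with hg'def
  have hg'inv : ∀ q x, g' (U q x) = g' x := by
    intro q x
    by_cases hx : x ∈ N'
    · have hUx : U q x ∈ N' := by
        rw [← hN'inv q] at hx; exact hx
      rw [hg'def]
      rw [Set.indicator_of_notMem (by simpa using hUx),
        Set.indicator_of_notMem (by simpa using hx)]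
    · have hUx : U q x ∉ N' := fun h => hx (by rw [← hN'inv q]; exact h)
      have hxN : x ∉ N := fun h => hx (hNsub h)
      have hgx : g (U q x) = g x := by
        by_contra hne
        exact hxN (Set.mem_iUnion.2 ⟨q, hne⟩)
      rw [hg'def, Set.indicator_of_mem (by simpa using hUx),
        Set.indicator_of_mem (by simpa using hx), hgx]
  have hg'm0 : Measurable g' := hg.indicator hN'meas.compl
  have hg'J : Measurable[invariantSets m0 U] g' := by
    intro t ht
    refine ⟨hg'm0 ht, fun q => ?_⟩
    ext x
    simp only [Set.mem_preimage]
    rw [hg'inv q x]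
  refine ⟨g', hg'J.stronglyMeasurable, ?_⟩
  have hae : ∀ᵐ x ∂ν, x ∉ N' := measure_eq_zero_iff_ae_notMem.1 hN'null
  filter_upwards [hae] with x hx
  rw [hg'def, Set.indicator_of_mem (by simpa using hx)]

/-- The conditional expectation w.r.t. an invariant σ-algebra of the indicator of an
invariant set is a.e. measurable w.r.t. the invariant σ-algebra. -/
theorem aesm'_condexp_indicator_invariant [IsFiniteMeasure ν]
    (hU0 : U 0 = id) (hUadd : ∀ p q : ℤ × ℤ, U (p + q) = U p ∘ U q)
    (hUmp : ∀ p, MeasurePreserving (U p) ν ν)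
    {F : MeasurableSpace X} (hF : F ≤ m0)
    (hFinv : ∀ (p : ℤ × ℤ) (s : Set X), MeasurableSet[F] s → MeasurableSet[F] (U p ⁻¹' s))
    {A : Set X} (hA : MeasurableSet[invariantSets m0 U] A) :
    AEStronglyMeasurable[invariantSets m0 U] (ν[A.indicator (fun _ => (1:ℝ))|F]) ν := by
  letI : MeasurableSpace X := m0
  have hUcomp : ∀ (p q : ℤ × ℤ) (x : X), U p (U q x) = U (p + q) x := fun p q x =>
    (congrFun (hUadd p q) x).symm
  have hUinv : ∀ (p : ℤ × ℤ) (x : X), U (-p) (U p x) = x := by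
    intro p x; rw [hUcomp, neg_add_cancel, hU0]; rfl
  have hUinv' : ∀ (p : ℤ × ℤ) (x : X), U p (U (-p) x) = x := by
    intro p x; rw [hUcomp, add_neg_cancel, hU0]; rfl
  have hemb : ∀ p : ℤ × ℤ, MeasurableEmbedding (U p) := fun p =>
    (MeasurableEquiv.mk ⟨U p, U (-p), hUinv p, hUinv' p⟩
      (hUmp p).measurable (hUmp (-p)).measurable).measurableEmbedding
  have hind : Integrable (A.indicator fun _ => (1:ℝ)) ν :=
    (integrable_const (1:ℝ)).indicator hA.1
  set g : X → ℝ := ν[A.indicator (fun _ => (1:ℝ))|F] with hgdef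
  have hgsm : StronglyMeasurable[F] g := stronglyMeasurable_condExp
  apply aesm'_invariantSets hU0 hUadd hUmp ((hgsm.mono hF).measurable)
  intro p
  have hUF : @Measurable X X F F (U p) := fun s hs => hFinv p s hs
  have hgF : StronglyMeasurable[F] (g ∘ U p) :=
    (Measurable.comp hgsm.measurable hUF).stronglyMeasurable
  have hint_comp : Integrable (g ∘ U p) ν :=
    ((hUmp p).integrable_comp_emb (hemb p)).2 integrable_condExp
  have hcalc : ∀ s : Set X, MeasurableSet[F] s → ν s < ⊤ →
      ∫ x in s, (g ∘ U p) x ∂ν = ∫ x in s, A.indicator (fun _ => (1:ℝ)) x ∂ν := by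
    intro s hs _
    set t : Set X := U (-p) ⁻¹' s with htdef
    have htF : MeasurableSet[F] t := hFinv (-p) s hs
    have hpre : U p ⁻¹' t = s := by
      ext x
      simp only [htdef, Set.mem_preimage]
      rw [hUinv p x]
    have h1 : ∫ x in s, (g ∘ U p) x ∂ν = ∫ x in t, g x ∂ν := by
      rw [← hpre]
      exact (hUmp p).setIntegral_preimage_emb (hemb p) g t
    have h2 : ∫ x in t, g x ∂ν = ∫ x in t, A.indicator (fun _ => (1:ℝ)) x ∂ν :=
      setIntegral_condExp hF hind htF
    have h3 : ∀ u : Set X, MeasurableSet u →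
        ∫ x in u, A.indicator (fun _ => (1:ℝ)) x ∂ν = (ν (u ∩ A)).toReal := by
      intro u hu
      rw [setIntegral_indicator hA.1, setIntegral_const]
      simp
      rfl
    have hmeas_t : ν (t ∩ A) = ν (s ∩ A) := by
      have h4 : U p ⁻¹' (t ∩ A) = s ∩ A := by
        rw [Set.preimage_inter, hpre, hA.2 p]
      rw [← h4, (hUmp p).measure_preimage ((hF t htF).inter hA.1).nullMeasurableSet]
    rw [h1, h2, h3 t (hF t htF), h3 s (hF s hs), hmeas_t]
  exact ae_eq_condExp_of_forall_setIntegral_eq hF hind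
    (fun s _ _ => hint_comp.integrableOn) hcalc ⟨g ∘ U p, hgF, EventuallyEq.rfl⟩

/-- An a.e. limit of functions a.e. measurable w.r.t. `m` is a.e. measurable w.r.t. `m`. -/
theorem aesm'_of_tendsto_ae {m : MeasurableSpace X}
    {g : ℕ → X → ℝ} {f : X → ℝ}
    (hg : ∀ n, AEStronglyMeasurable[m] (g n) ν)
    (h : ∀ᵐ x ∂ν, Tendsto (fun n => g n x) atTop (nhds (f x))) :
    AEStronglyMeasurable[m] f ν := by
  set G : ℕ → X → ℝ := fun n => (hg n).mk (g n) with hGdef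
  have hGsm : ∀ n, StronglyMeasurable[m] (G n) := fun n => (hg n).stronglyMeasurable_mk
  have hGmeas : ∀ n, Measurable[m] (G n) := fun n => (hGsm n).measurable
  set s : Set X := {x | ∃ c, Tendsto (fun n => G n x) atTop (nhds c)} with hsdef
  have hsm : MeasurableSet[m] s := by
    letI := m
    exact measurableSet_exists_tendsto hGmeas
  set Gs : ℕ → X → ℝ := fun n => s.indicator (G n) with hGsdef
  have hGs_meas : ∀ n, Measurable[m] (Gs n) := fun n => (hGmeas n).indicator hsm
  have hconv : ∀ x, ∃ c, Tendsto (fun n => Gs n x) atTop (nhds c) := by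
    intro x
    by_cases hx : x ∈ s
    · obtain ⟨c, hc⟩ := id hx
      refine ⟨c, ?_⟩
      have : (fun n => Gs n x) = fun n => G n x := by
        funext n; simp only [hGsdef]; rw [Set.indicator_of_mem hx]
      rw [this]; exact hc
    · refine ⟨0, ?_⟩
      have : (fun n => Gs n x) = fun _ => (0:ℝ) := by
        funext n; simp only [hGsdef]; rw [Set.indicator_of_notMem hx]
      rw [this]; exact tendsto_const_nhds
  set L : X → ℝ := fun x => limUnder atTop (fun n => Gs n x) with hLdef
  have hL : ∀ x, Tendsto (fun n => Gs n x) atTop (nhds (L x)) := fun x =>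
    tendsto_nhds_limUnder (hconv x)
  have hLmeas : Measurable[m] L := by
    letI := m
    exact measurable_of_tendsto_metrizable' atTop hGs_meas (tendsto_pi_nhds.mpr hL)
  refine ⟨L, hLmeas.stronglyMeasurable, ?_⟩
  have hGe : ∀ᵐ x ∂ν, ∀ n, g n x = G n x := ae_all_iff.2 fun n => (hg n).ae_eq_mk
  filter_upwards [h, hGe] with x hx hxe
  have hxs : x ∈ s := by
    refine ⟨f x, ?_⟩
    have : (fun n => G n x) = fun n => g n x := funext fun n => (hxe n).symm
    rw [this]; exact hx
  have hGsx : Tendsto (fun n => Gs n x) atTop (nhds (f x)) := by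
    have : (fun n => Gs n x) = fun n => g n x := by
      funext n
      simp only [hGsdef]
      rw [Set.indicator_of_mem hxs, ← hxe n]
    rw [this]; exact hx
  exact tendsto_nhds_unique hGsx (hL x)

end Aux

/-- **Projection measurability, first half.**
Let `U` be a measure-preserving `ℤ²`-action on a probability space `(X, B, ν)`, `J` the
σ-algebra of `U`-invariant sets, `F` a `U`-invariant sub-σ-algebra of `B` and `C` a
sub-σ-algebra of `F`.  Then for every `f ∈ L²(J ∨ C)`, the conditional expectation
`E[f | F]` is `(J ∨ C)`-measurable (modulo null sets). -/
theorem condexp_invariant_measurable_join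
    {X : Type*} [m0 : MeasurableSpace X] (ν : Measure X) [IsProbabilityMeasure ν]
    (U : ℤ × ℤ → X → X)
    (hU0 : U 0 = id)
    (hUadd : ∀ p q : ℤ × ℤ, U (p + q) = U p ∘ U q)
    (hUmp : ∀ p, MeasurePreserving (U p) ν ν)
    (F : MeasurableSpace X) (hF : F ≤ m0)
    (hFinv : ∀ (p : ℤ × ℤ) (s : Set X), MeasurableSet[F] s → MeasurableSet[F] (U p ⁻¹' s))
    (C : MeasurableSpace X) (hC : C ≤ F)
    (f : X → ℝ) (hf2 : MemLp f 2 ν)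
    (hfmeas : AEStronglyMeasurable[invariantSets m0 U ⊔ C] f ν) :
    AEStronglyMeasurable[invariantSets m0 U ⊔ C] (ν[f|F]) ν := by
  have hJ : invariantSets m0 U ≤ m0 := fun s hs => hs.1
  set J : MeasurableSpace X := invariantSets m0 U with hJdef
  set mJC : MeasurableSpace X := J ⊔ C with hmJCdef
  have hJC : mJC ≤ m0 := sup_le hJ (hC.trans hF)
  letI : MeasurableSpace X := m0
  -- closure of the motive under L¹ convergence
  have hclos : ∀ (g : ℕ → X → ℝ) (h : X → ℝ), (∀ n, Integrable (g n) ν) → Integrable h ν →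
      Tendsto (fun n => eLpNorm (g n - h) 1 ν) atTop (nhds 0) →
      (∀ n, AEStronglyMeasurable[mJC] (ν[g n|F]) ν) →
      AEStronglyMeasurable[mJC] (ν[h|F]) ν := by
    intro g h hgi hhi hconv hP
    have hcond : ∀ n, eLpNorm (ν[g n|F] - ν[h|F]) 1 ν ≤ eLpNorm (g n - h) 1 ν := by
      intro n
      rw [eLpNorm_congr_ae (condExp_sub (hgi n) hhi F).symm]
      exact eLpNorm_one_condExp_le_eLpNorm _
    have htend : Tendsto (fun n => eLpNorm (ν[g n|F] - ν[h|F]) 1 ν) atTop (nhds 0) :=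
      tendsto_of_tendsto_of_tendsto_of_le_of_le tendsto_const_nhds hconv
        (fun n => zero_le) hcond
    have hTM : TendstoInMeasure ν (fun n => ν[g n|F]) atTop (ν[h|F]) :=
      tendstoInMeasure_of_tendsto_eLpNorm one_ne_zero
        (fun n => (stronglyMeasurable_condExp.mono hF).aestronglyMeasurable)
        (stronglyMeasurable_condExp.mono hF).aestronglyMeasurable htend
    obtain ⟨ns, _, hns⟩ := hTM.exists_seq_tendsto_ae
    exact aesm'_of_tendsto_ae (fun n => hP (ns n)) hns
  -- indicators of invariant sets
  have hindJ : ∀ A : Set X, MeasurableSet[J] A →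
      AEStronglyMeasurable[mJC] (ν[A.indicator (fun _ => (1:ℝ))|F]) ν := fun A hA =>
    (aesm'_condexp_indicator_invariant hU0 hUadd hUmp hF hFinv hA).mono le_sup_left
  -- indicator of the empty set
  have hPempty : AEStronglyMeasurable[mJC] (ν[(∅ : Set X).indicator (fun _ => (1:ℝ))|F]) ν := by
    have h0 : (∅ : Set X).indicator (fun _ => (1:ℝ)) = fun _ => (0:ℝ) := by
      funext x; simp
    rw [h0]
    refine ⟨fun _ => 0, stronglyMeasurable_const, ?_⟩
    rw [condExp_const hF]
  -- indicators of all sets in mJC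
  have hsets : ∀ ⦃t : Set X⦄, MeasurableSet[mJC] t →
      AEStronglyMeasurable[mJC] (ν[t.indicator (fun _ => (1:ℝ))|F]) ν := by
    have h_eq : mJC = MeasurableSpace.generateFrom
        {t : Set X | ∃ A B : Set X, MeasurableSet[J] A ∧ MeasurableSet[C] B ∧ t = A ∩ B} := by
      apply le_antisymm
      · refine sup_le ?_ ?_
        · exact fun t ht => MeasurableSpace.measurableSet_generateFrom
            ⟨t, Set.univ, ht, (MeasurableSet.univ : MeasurableSet[C] Set.univ),
              (Set.inter_univ t).symm⟩
        · exact fun t ht => MeasurableSpace.measurableSet_generateFrom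
            ⟨Set.univ, t, (MeasurableSet.univ : MeasurableSet[J] Set.univ), ht,
              (Set.univ_inter t).symm⟩
      · refine MeasurableSpace.generateFrom_le ?_
        rintro t ⟨A, B, hA, hB, rfl⟩
        exact MeasurableSet.inter ((le_sup_left : J ≤ mJC) A hA)
          ((le_sup_right : C ≤ mJC) B hB)
    have h_pi : IsPiSystem
        {t : Set X | ∃ A B : Set X, MeasurableSet[J] A ∧ MeasurableSet[C] B ∧ t = A ∩ B} := by
      rintro t1 ⟨A1, B1, hA1, hB1, rfl⟩ t2 ⟨A2, B2, hA2, hB2, rfl⟩ -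
      exact ⟨A1 ∩ A2, B1 ∩ B2, hA1.inter hA2, hB1.inter hB2,
        Set.inter_inter_inter_comm A1 B1 A2 B2⟩
    refine MeasurableSpace.induction_on_inter (m := mJC) h_eq h_pi hPempty ?_ ?_ ?_
    · -- basic sets A ∩ B
      rintro t ⟨A, B, hA, hB, rfl⟩
      have hBF : MeasurableSet[F] B := hC B hB
      have hAint : Integrable (A.indicator fun _ => (1:ℝ)) ν :=
        (integrable_const 1).indicator (hJ A hA)
      have h1 : ν[(A ∩ B).indicator (fun _ => (1:ℝ))|F] =ᵐ[ν]
          B.indicator (ν[A.indicator (fun _ => (1:ℝ))|F]) := by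
        have h2 := condExp_indicator (m := F) (μ := ν) hAint hBF
        rw [Set.indicator_indicator, Set.inter_comm B A] at h2
        exact h2
      refine AEStronglyMeasurable.congr ?_ h1.symm
      obtain ⟨h', hsm', hae'⟩ := hindJ A hA
      refine ⟨B.indicator h', hsm'.indicator ((le_sup_right : C ≤ mJC) B hB), ?_⟩
      filter_upwards [hae'] with x hx
      by_cases hxB : x ∈ B <;> simp [Set.indicator_apply, hxB, hx]
    · -- complements
      intro t htm hPt
      have hti : Integrable (t.indicator fun _ => (1:ℝ)) ν :=
        (integrable_const 1).indicator (hJC t htm)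
      have h1 : tᶜ.indicator (fun _ => (1:ℝ)) =
          (fun _ => (1:ℝ)) - t.indicator (fun _ => (1:ℝ)) := by
        funext x
        by_cases hx : x ∈ t <;> simp [Set.indicator_apply, hx]
      rw [h1]
      have h2 := condExp_sub (m := F) (μ := ν) (integrable_const (1:ℝ)) hti
      refine AEStronglyMeasurable.congr ?_ h2.symm
      refine AEStronglyMeasurable.sub ?_ hPt
      refine ⟨fun _ => 1, stronglyMeasurable_const, ?_⟩
      rw [condExp_const hF]
    · -- countable disjoint unions
      intro g hdisj hgm hPg
      set s : ℕ → Set X := fun n => ⋃ i ∈ Finset.range n, g i with hsdef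
      set T : Set X := ⋃ i, g i with hTdef
      have hsub : ∀ n, s n ⊆ T := fun n =>
        Set.iUnion₂_subset fun i _ => Set.subset_iUnion g i
      have hsm : ∀ n, MeasurableSet[mJC] (s n) := fun n => by
        letI := mJC
        exact MeasurableSet.biUnion (Finset.range n).countable_toSet (fun i _ => hgm i)
      have hTm : MeasurableSet[mJC] T := by
        letI := mJC
        exact MeasurableSet.iUnion hgm
      have hPs : ∀ n, AEStronglyMeasurable[mJC] (ν[(s n).indicator (fun _ => (1:ℝ))|F]) ν := by
        intro n
        induction n with
        | zero =>
          have h0 : s 0 = (∅ : Set X) := by simp [hsdef]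
          rw [h0]; exact hPempty
        | succ n ih =>
          have hdisj' : Disjoint (s n) (g n) := by
            refine Set.disjoint_left.mpr ?_
            rintro x hx hxg
            obtain ⟨i, hi, hxi⟩ := Set.mem_iUnion₂.mp hx
            exact Set.disjoint_left.mp (hdisj (Finset.mem_range.mp hi).ne) hxi hxg
          have hstep : s (n + 1) = g n ∪ s n := by
            ext x
            simp only [hsdef, Set.mem_iUnion, Finset.mem_range, Set.mem_union, exists_prop,
              Nat.lt_succ_iff_lt_or_eq]
            constructor
            · rintro ⟨i, hi | rfl, hx⟩
              · exact Or.inr ⟨i, hi, hx⟩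
              · exact Or.inl hx
            · rintro (hx | ⟨i, hi, hx⟩)
              · exact ⟨n, Or.inr rfl, hx⟩
              · exact ⟨i, Or.inl hi, hx⟩
          have hind_eq : (s (n + 1)).indicator (fun _ => (1:ℝ)) =
              (g n).indicator (fun _ => (1:ℝ)) + (s n).indicator (fun _ => (1:ℝ)) := by
            rw [hstep, Set.indicator_union_of_disjoint hdisj'.symm]
            rfl
          rw [hind_eq]
          have hgint : Integrable ((g n).indicator fun _ => (1:ℝ)) ν :=
            (integrable_const 1).indicator (hJC _ (hgm n))
          have hsint : Integrable ((s n).indicator fun _ => (1:ℝ)) ν :=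
            (integrable_const 1).indicator (hJC _ (hsm n))
          exact ((hPg n).add ih).congr (condExp_add hgint hsint F).symm
      have hTi : Integrable (T.indicator fun _ => (1:ℝ)) ν :=
        (integrable_const 1).indicator (hJC _ hTm)
      have hsi : ∀ n, Integrable ((s n).indicator fun _ => (1:ℝ)) ν := fun n =>
        (integrable_const 1).indicator (hJC _ (hsm n))
      refine hclos _ _ hsi hTi ?_ hPs
      have hdiff : ∀ n, (s n).indicator (fun _ => (1:ℝ)) - T.indicator (fun _ => (1:ℝ)) =
          -((T \ s n).indicator (fun _ => (1:ℝ))) := by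
        intro n
        rw [Set.indicator_sdiff (hsub n), neg_sub]
      have heq : ∀ n, eLpNorm
          ((s n).indicator (fun _ => (1:ℝ)) - T.indicator (fun _ => (1:ℝ))) 1 ν =
          ν (T \ s n) := by
        intro n
        rw [hdiff n, eLpNorm_neg,
          eLpNorm_indicator_const ((hJC _ hTm).diff (hJC _ (hsm n))) one_ne_zero
            ENNReal.one_ne_top]
        simp
      have hfe : (fun n => eLpNorm
          ((s n).indicator (fun _ => (1:ℝ)) - T.indicator (fun _ => (1:ℝ))) 1 ν) =
          fun n => ν (T \ s n) := funext heq
      rw [hfe]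
      have hmono : Monotone s := fun a b hab =>
        Set.biUnion_subset_biUnion_left (Finset.range_subset_range.mpr hab)
      have hanti : Antitone fun n => T \ s n := fun a b hab =>
        Set.diff_subset_diff_right (hmono hab)
      have hiInter : ⋂ n, (T \ s n) = (∅ : Set X) := by
        apply Set.eq_empty_iff_forall_notMem.mpr
        intro x hx
        have hxT : x ∈ T := (Set.mem_iInter.mp hx 0).1
        obtain ⟨i, hxi⟩ := Set.mem_iUnion.mp hxT
        exact (Set.mem_iInter.mp hx (i + 1)).2
          (Set.mem_biUnion (Finset.self_mem_range_succ i) hxi)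
      have htd := tendsto_measure_iInter_atTop (μ := ν)
        (fun n => ((hJC _ hTm).diff (hJC _ (hsm n))).nullMeasurableSet) hanti
        ⟨0, measure_ne_top ν _⟩
      rw [hiInter, measure_empty] at htd
      exact htd
  -- all integrable (w.r.t. the trimmed measure) functions
  have hint : ∀ ⦃g : X → ℝ⦄, Integrable g (ν.trim hJC) →
      AEStronglyMeasurable[mJC] (ν[g|F]) ν := by
    refine @Integrable.induction X ℝ mJC _ (ν.trim hJC)
      (fun g => AEStronglyMeasurable[mJC] (ν[g|F]) ν) ?_ ?_ ?_ ?_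
    · intro c u hu _
      have h1 : u.indicator (fun _ => c) = c • u.indicator (fun _ => (1:ℝ)) := by
        funext x
        by_cases hx : x ∈ u <;> simp [Set.indicator_apply, hx]
      rw [h1]
      exact ((hsets hu).const_smul c).congr (condExp_smul c _ F).symm
    · intro g1 g2 _ hi1 hi2 hP1 hP2
      have h1 : Integrable g1 ν := integrable_of_integrable_trim hJC hi1
      have h2 : Integrable g2 ν := integrable_of_integrable_trim hJC hi2
      exact (hP1.add hP2).congr (condExp_add h1 h2 F).symm
    · -- closedness in L¹ of the trimmed measure
      haveI hseq : SequentialSpace ↥(Lp ℝ 1 (ν.trim hJC)) := inferInstance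
      letI := mJC
      refine IsSeqClosed.isClosed ?_
      intro gs flim hgs hlim
      haveI : Fact ((1:ENNReal) ≤ 1) := ⟨le_refl _⟩
      have hconv : Tendsto (fun n => eLpNorm (⇑(gs n) - ⇑flim) 1 (ν.trim hJC)) atTop
          (nhds 0) := (Lp.tendsto_Lp_iff_tendsto_eLpNorm' gs flim).mp hlim
      have hν : ∀ n, eLpNorm (⇑(gs n) - ⇑flim) 1 (ν.trim hJC) =
          eLpNorm (⇑(gs n) - ⇑flim) 1 ν := fun n =>
        eLpNorm_trim_ae hJC ((Lp.aestronglyMeasurable _).sub (Lp.aestronglyMeasurable _))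
      have hconv' : Tendsto (fun n => eLpNorm (⇑(gs n) - ⇑flim) 1 ν) atTop (nhds 0) := by
        have hfe : (fun n => eLpNorm (⇑(gs n) - ⇑flim) 1 ν) =
            fun n => eLpNorm (⇑(gs n) - ⇑flim) 1 (ν.trim hJC) := funext fun n => (hν n).symm
        rw [hfe]; exact hconv
      exact hclos (fun n => ⇑(gs n)) ⇑flim
        (fun n => integrable_of_integrable_trim hJC (L1.integrable_coeFn _))
        (integrable_of_integrable_trim hJC (L1.integrable_coeFn _)) hconv' hgs
    · intro g1 g2 hae _ hP1
      exact hP1.congr (condExp_congr_ae (ae_eq_of_ae_eq_trim hae))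
  obtain ⟨f', hf'sm, hff'⟩ := hfmeas
  have hfi : Integrable f ν := hf2.integrable one_le_two
  have hf'tr : Integrable f' (ν.trim hJC) := (hfi.congr hff').trim hJC hf'sm
  exact (hint hf'tr).congr (condExp_congr_ae hff'.symm)
end

section
/- Let U=(U_{i,j}) be a measure-preserving ℤ²-action on a probability space (X,B,ν), let J be the σ-algebra of U-invariant sets, let F be a U-invariant sub-σ-algebra of B (i.e. U_{i,j}(F)=F for all i,j), and let C be a sub-σ-algebra of F. Then for every f ∈ L²(F), the conditional expectation E[f | J∨C] is F-measurable. -/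
open MeasureTheory

set_option maxHeartbeats 1000000
set_option synthInstance.maxHeartbeats 1000000

namespace CondexpJoinAux

open Set Filter

variable {X : Type*} {m0 : MeasurableSpace X} {ν : Measure X}

lemma integrable_mul2 {f g : X → ℝ} (hf : MemLp f 2 ν) (hg : MemLp g 2 ν) :
    Integrable (f * g) ν := by
  refine (hf.integrable_sq.add hg.integrable_sq).mono' (hf.1.mul hg.1) ?_
  filter_upwards with x
  simp only [Pi.mul_apply, Pi.add_apply, Real.norm_eq_abs]
  rcases abs_cases (f x * g x) with ⟨h, _⟩ | ⟨h, _⟩ <;> nlinarith [sq_nonneg (f x - g x),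
    sq_nonneg (f x + g x), sq_nonneg (f x), sq_nonneg (g x)]

lemma memL2_condexp {X : Type*} {m : MeasurableSpace X} {m0 : MeasurableSpace X}
    {ν : Measure X} [IsFiniteMeasure ν] (hm : m ≤ m0) {f : X → ℝ}
    (hf : MemLp f 2 ν) : MemLp (ν[f|m]) 2 ν := by
  haveI : SigmaFinite (ν.trim hm) := inferInstance
  set K : Lp ℝ 2 ν := ↑(condExpL2 ℝ ℝ hm (hf.toLp f)) with hKdef
  have hK : AEStronglyMeasurable[m] (K : X → ℝ) ν := lpMeas.aestronglyMeasurable _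
  have hKmem : MemLp (K : X → ℝ) 2 ν := Lp.memLp K
  have heq : (K : X → ℝ) =ᵐ[ν] ν[f|m] := by
    refine ae_eq_condExp_of_forall_setIntegral_eq hm (hf.integrable one_le_two)
      (fun s _ _ => (hKmem.integrable one_le_two).integrableOn)
      (fun s hs hμs => ?_) hK
    rw [hKdef, integral_condExpL2_eq (𝕜 := ℝ) hm (hf.toLp f) hs hμs.ne]
    exact setIntegral_congr_ae (hm s hs) (hf.coeFn_toLp.mono fun x hx _ => hx)
  exact hKmem.ae_eq heq

lemma condExp_comp_ae_eq {X : Type*} (F : MeasurableSpace X) {m0 : MeasurableSpace X}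
    {ν : Measure X} [IsProbabilityMeasure ν]
    (U : ℤ × ℤ → X → X) (hU0 : U 0 = id) (hUadd : ∀ p q : ℤ × ℤ, U (p + q) = U p ∘ U q)
    (hUmp : ∀ p, MeasurePreserving (U p) ν ν)
    (hF : F ≤ m0)
    (hFinv : ∀ (p : ℤ × ℤ) (s : Set X), MeasurableSet[F] s → MeasurableSet[F] (U p ⁻¹' s))
    {φ : X → ℝ} (hφ : Integrable φ ν) (p : ℤ × ℤ) :
    (ν[φ|F]) ∘ U p =ᵐ[ν] ν[φ ∘ U p|F] := by
  haveI : SigmaFinite (ν.trim hF) := inferInstance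
  have hUU : ∀ (q : ℤ × ℤ) (x : X), U (-q) (U q x) = x := by
    intro q x
    have h := congrFun (hUadd (-q) q) x
    simp only [neg_add_cancel, hU0, id_eq, Function.comp_apply] at h
    exact h.symm
  let e : X ≃ᵐ X :=
    { toFun := U p
      invFun := U (-p)
      left_inv := fun x => hUU p x
      right_inv := fun x => by have := hUU (-p) x; rwa [neg_neg] at this
      measurable_toFun := (hUmp p).measurable
      measurable_invFun := (hUmp (-p)).measurable }
  have key : ∀ (ψ : X → ℝ) (s : Set X), MeasurableSet[m0] s →
      MeasurableSet[m0] (U (-p) ⁻¹' s) →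
      ∫ x in s, ψ (U p x) ∂ν = ∫ y in U (-p) ⁻¹' s, ψ y ∂ν := by
    intro ψ s hs ht
    have hpre : U p ⁻¹' (U (-p) ⁻¹' s) = s := by
      rw [← Set.preimage_comp, ← hUadd, neg_add_cancel, hU0, Set.preimage_id]
    have hmem : ∀ x, U p x ∈ U (-p) ⁻¹' s ↔ x ∈ s := by
      intro x
      conv_rhs => rw [← hpre]
      exact Iff.rfl
    rw [← integral_indicator hs, ← integral_indicator ht]
    have hind : ∀ x, Set.indicator s (fun x => ψ (U p x)) x
        = Set.indicator (U (-p) ⁻¹' s) ψ (U p x) := by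
      intro x
      by_cases hx : x ∈ s
      · rw [Set.indicator_of_mem hx, Set.indicator_of_mem ((hmem x).mpr hx)]
      · rw [Set.indicator_of_notMem hx,
          Set.indicator_of_notMem (fun h => hx ((hmem x).mp h))]
    simp_rw [hind]
    exact (hUmp p).integral_comp e.measurableEmbedding _
  have hcomp_int : Integrable (φ ∘ U p) ν := ((hUmp p).integrable_comp hφ.1).mpr hφ
  have hgint : Integrable ((ν[φ|F]) ∘ U p) ν :=
    ((hUmp p).integrable_comp
      (stronglyMeasurable_condExp.mono hF).aestronglyMeasurable).mpr integrable_condExp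
  have hUF : @Measurable X X F F (U p) := fun s hs => hFinv p s hs
  have hmeas' : AEStronglyMeasurable[F] ((ν[φ|F]) ∘ U p) ν :=
    ⟨(ν[φ|F]) ∘ U p, stronglyMeasurable_condExp.comp_measurable hUF,
      Filter.EventuallyEq.rfl⟩
  refine ae_eq_condExp_of_forall_setIntegral_eq hF hcomp_int
    (fun s _ _ => hgint.integrableOn) (fun s hs _ => ?_) hmeas'
  calc ∫ x in s, ((ν[φ|F]) ∘ U p) x ∂ν
      = ∫ x in s, (ν[φ|F]) (U p x) ∂ν := rfl
    _
      = ∫ y in U (-p) ⁻¹' s, (ν[φ|F]) y ∂ν :=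
        key _ s (hF s hs) (hF _ (hFinv (-p) s hs))
    _ = ∫ y in U (-p) ⁻¹' s, φ y ∂ν := setIntegral_condExp hF hφ (hFinv (-p) s hs)
    _ = ∫ x in s, φ (U p x) ∂ν := (key φ s (hF s hs) (hF _ (hFinv (-p) s hs))).symm
    _ = ∫ x in s, (φ ∘ U p) x ∂ν := rfl

lemma aesm'_inv {X : Type*} {m0 : MeasurableSpace X} {ν : Measure X}
    (U : ℤ × ℤ → X → X) (hU0 : U 0 = id) (hUadd : ∀ p q : ℤ × ℤ, U (p + q) = U p ∘ U q)
    (hUmp : ∀ p, MeasurePreserving (U p) ν ν)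
    {g : X → ℝ} (hgm : Measurable g)
    (hg : ∀ p : ℤ × ℤ, (fun x => g (U p x)) =ᵐ[ν] g) :
    AEStronglyMeasurable[invariantSets m0 U] g ν := by
  set N : Set X := ⋃ p : ℤ × ℤ, {x | g (U p x) ≠ g x} with hN
  have hNmeas : MeasurableSet N :=
    MeasurableSet.iUnion fun p =>
      (measurableSet_eq_fun (hgm.comp (hUmp p).measurable) hgm).compl
  have hNnull : ν N = 0 := by
    refine measure_iUnion_null fun p => ?_
    have := hg p
    rw [Filter.EventuallyEq, ae_iff] at this
    exact this
  set M : Set X := ⋃ p : ℤ × ℤ, U p ⁻¹' N with hM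
  have hMmeas : MeasurableSet M :=
    MeasurableSet.iUnion fun p => (hUmp p).measurable hNmeas
  have hMnull : ν M = 0 :=
    measure_iUnion_null fun p => by
      rw [(hUmp p).measure_preimage hNmeas.nullMeasurableSet]; exact hNnull
  have hNM : N ⊆ M := by
    intro x hx
    refine Set.mem_iUnion.2 ⟨0, ?_⟩
    simpa [hU0] using hx
  have hMinv : ∀ p : ℤ × ℤ, U p ⁻¹' M = M := by
    intro p
    ext x
    simp only [hM, Set.mem_iUnion, Set.mem_preimage]
    constructor
    · rintro ⟨q, hq⟩
      refine ⟨q + p, ?_⟩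
      rw [hUadd]
      exact hq
    · rintro ⟨q, hq⟩
      refine ⟨q + -p, ?_⟩
      have h1 : U (q + -p) (U p x) = U q x := by
        have := congrFun (hUadd (q + -p) p) x
        rw [neg_add_cancel_right] at this
        exact this.symm
      rw [h1]
      exact hq
  set g' : X → ℝ := Mᶜ.indicator g with hg'
  have hgg' : g =ᵐ[ν] g' := by
    have : ∀ᵐ x ∂ν, x ∉ M := by
      rw [ae_iff]
      simpa using hMnull
    filter_upwards [this] with x hx
    rw [hg', Set.indicator_of_mem (show x ∈ Mᶜ by simpa using hx)]
  have hg'inv : ∀ (p : ℤ × ℤ) (x : X), g' (U p x) = g' x := by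
    intro p x
    have hmemM : U p x ∈ M ↔ x ∈ M := by
      conv_rhs => rw [← hMinv p]
      exact Iff.rfl
    by_cases hx : x ∈ M
    · rw [hg', Set.indicator_of_notMem (show U p x ∉ Mᶜ by simpa using hmemM.mpr hx),
        Set.indicator_of_notMem (show x ∉ Mᶜ by simpa using hx)]
    · have hxN : x ∉ N := fun h => hx (hNM h)
      have hval : g (U p x) = g x := by
        by_contra h
        exact hxN (Set.mem_iUnion.2 ⟨p, h⟩)
      rw [hg', Set.indicator_of_mem (show U p x ∈ Mᶜ by
          simpa using fun h => hx (hmemM.mp h)),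
        Set.indicator_of_mem (show x ∈ Mᶜ by simpa using hx), hval]
  have hg'm : StronglyMeasurable[invariantSets m0 U] g' := by
    refine Measurable.stronglyMeasurable ?_
    intro s hs
    refine ⟨(hgm.indicator hMmeas.compl) hs, fun p => ?_⟩
    ext x
    simp only [Set.mem_preimage]
    rw [hg'inv p x]
  exact ⟨g', hg'm, hgg'⟩

lemma aesm'_of_tendsto_L1 {X : Type*} {G : MeasurableSpace X} {m0 : MeasurableSpace X}
    {ν : Measure X} [IsProbabilityMeasure ν] (hG : G ≤ m0)
    {k : ℕ → X → ℝ} {K : X → ℝ} (hki : ∀ n, Integrable (k n) ν) (hKi : Integrable K ν)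
    (hkG : ∀ n, AEStronglyMeasurable[G] (k n) ν)
    (hlim : Filter.Tendsto (fun n => ∫ x, |k n x - K x| ∂ν) Filter.atTop (nhds 0)) :
    AEStronglyMeasurable[G] K ν := by
  haveI : SigmaFinite (ν.trim hG) := inferInstance
  have h1 : ∀ n, ν[k n|G] =ᵐ[ν] k n := fun n =>
    condExp_of_aestronglyMeasurable' hG (hkG n) (hki n)
  have h2 : ∀ n, ∫ x, |(ν[K|G]) x - K x| ∂ν ≤ 2 * ∫ x, |k n x - K x| ∂ν := by
    intro n
    have ht : ∀ᵐ x ∂ν,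
        |(ν[K|G]) x - K x| ≤ |(ν[K|G]) x - (ν[k n|G]) x| + |k n x - K x| := by
      filter_upwards [h1 n] with x hx
      calc |(ν[K|G]) x - K x|
          ≤ |(ν[K|G]) x - (ν[k n|G]) x| + |(ν[k n|G]) x - K x| := abs_sub_le _ _ _
        _ = |(ν[K|G]) x - (ν[k n|G]) x| + |k n x - K x| := by rw [hx]
    have hIa : Integrable (fun x => |(ν[K|G]) x - K x|) ν := (integrable_condExp.sub hKi).abs
    have hIb1 : Integrable (fun x => |(ν[K|G]) x - (ν[k n|G]) x|) ν :=
      (integrable_condExp.sub integrable_condExp).abs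
    have hIb2 : Integrable (fun x => |k n x - K x|) ν := ((hki n).sub hKi).abs
    have hc := integral_mono_ae hIa (hIb1.add hIb2) ht
    simp only [Pi.add_apply] at hc
    rw [integral_add hIb1 hIb2] at hc
    have hb : ∫ x, |(ν[K|G]) x - (ν[k n|G]) x| ∂ν ≤ ∫ x, |k n x - K x| ∂ν := by
      have e1 : (fun x => |(ν[K|G]) x - (ν[k n|G]) x|)
          =ᵐ[ν] fun x => |(ν[K - k n|G]) x| := by
        filter_upwards [condExp_sub hKi (hki n) (m := G)] with x hx
        rw [hx, Pi.sub_apply]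
      rw [integral_congr_ae e1]
      refine (integral_abs_condExp_le (μ := ν) (m := G) (K - k n)).trans (le_of_eq ?_)
      refine integral_congr_ae (Filter.Eventually.of_forall fun x => ?_)
      simp [abs_sub_comm]
    linarith
  have hnn : 0 ≤ ∫ x, |(ν[K|G]) x - K x| ∂ν := integral_nonneg fun x => abs_nonneg _
  have hlim2 : Filter.Tendsto (fun n => 2 * ∫ x, |k n x - K x| ∂ν)
      Filter.atTop (nhds 0) := by
    simpa using hlim.const_mul 2
  have h3 : ∫ x, |(ν[K|G]) x - K x| ∂ν = 0 :=
    le_antisymm (ge_of_tendsto' hlim2 h2) hnn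
  have hint : Integrable (fun x => |(ν[K|G]) x - K x|) ν := (integrable_condExp.sub hKi).abs
  have h5 := (integral_eq_zero_iff_of_nonneg_ae
    (Filter.Eventually.of_forall fun x => abs_nonneg _) hint).mp h3
  have h6 : ν[K|G] =ᵐ[ν] K := by
    filter_upwards [h5] with x hx
    have hx' : |(ν[K|G]) x - K x| = 0 := hx
    exact sub_eq_zero.mp (abs_eq_zero.mp hx')
  exact stronglyMeasurable_condExp.aestronglyMeasurable.congr h6

section Wrappers

variable {X : Type*}

lemma msInter {m : MeasurableSpace X} {s t : Set X} (hs : MeasurableSet[m] s)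
    (ht : MeasurableSet[m] t) : MeasurableSet[m] (s ∩ t) := hs.inter ht

lemma msUnion {m : MeasurableSpace X} {f : ℕ → Set X} (h : ∀ i, MeasurableSet[m] (f i)) :
    MeasurableSet[m] (⋃ i, f i) := MeasurableSet.iUnion h

lemma msAccumulate {m : MeasurableSpace X} {f : ℕ → Set X} (h : ∀ i, MeasurableSet[m] (f i))
    (n : ℕ) : MeasurableSet[m] (Set.accumulate f n) := by
  rw [Set.accumulate_def]
  exact MeasurableSet.biUnion (Set.to_countable _) fun i _ => h i

lemma smIndicatorConst {m : MeasurableSpace X} {s : Set X} (hs : MeasurableSet[m] s) (c : ℝ) :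
    StronglyMeasurable[m] (s.indicator fun _ => c) := stronglyMeasurable_const.indicator hs

lemma smMul {m : MeasurableSpace X} {f g : X → ℝ} (hf : StronglyMeasurable[m] f)
    (hg : StronglyMeasurable[m] g) : StronglyMeasurable[m] (fun x => f x * g x) := hf.mul hg

lemma smConstSub {m : MeasurableSpace X} {f : X → ℝ} (c : ℝ) (hf : StronglyMeasurable[m] f) :
    StronglyMeasurable[m] (fun x => c - f x) := stronglyMeasurable_const.sub hf

lemma smZero {m : MeasurableSpace X} : StronglyMeasurable[m] (fun _ : X => (0 : ℝ)) :=
  stronglyMeasurable_const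

end Wrappers

/-- `L¹`-contractivity of conditional expectation, difference form. -/
lemma condExp_L1_lip {X : Type*} (F : MeasurableSpace X) {m0 : MeasurableSpace X}
    {ν : Measure X} [IsProbabilityMeasure ν] (hF : F ≤ m0)
    {a b : X → ℝ} (ha : Integrable a ν) (hb : Integrable b ν) :
    ∫ x, |(ν[a|F]) x - (ν[b|F]) x| ∂ν ≤ ∫ x, |a x - b x| ∂ν := by
  haveI : SigmaFinite (ν.trim hF) := inferInstance
  have e1 : (fun x => |(ν[a|F]) x - (ν[b|F]) x|) =ᵐ[ν] fun x => |(ν[a - b|F]) x| := by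
    filter_upwards [condExp_sub ha hb (m := F)] with x hx
    rw [hx, Pi.sub_apply]
  rw [integral_congr_ae e1]
  exact integral_abs_condExp_le _

lemma aesm'_condExp_indicator {X : Type*} (F Cm : MeasurableSpace X) {m0 : MeasurableSpace X}
    {ν : Measure X} [IsProbabilityMeasure ν]
    (U : ℤ × ℤ → X → X) (hU0 : U 0 = id) (hUadd : ∀ p q : ℤ × ℤ, U (p + q) = U p ∘ U q)
    (hUmp : ∀ p, MeasurePreserving (U p) ν ν)
    (hF : F ≤ m0)
    (hFinv : ∀ (p : ℤ × ℤ) (s : Set X), MeasurableSet[F] s → MeasurableSet[F] (U p ⁻¹' s))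
    (hC : Cm ≤ F) :
    ∀ s : Set X, MeasurableSet[invariantSets m0 U ⊔ Cm] s →
      AEStronglyMeasurable[invariantSets m0 U ⊔ Cm]
        (ν[s.indicator (fun _ => (1:ℝ))|F]) ν := by
  have hJ : invariantSets m0 U ≤ m0 := fun s hs => hs.1
  have hG : invariantSets m0 U ⊔ Cm ≤ m0 := sup_le hJ (hC.trans hF)
  haveI : SigmaFinite (ν.trim hF) := inferInstance
  -- base case: s = A ∩ B with A invariant and B in Cm
  have hbase : ∀ A B : Set X, MeasurableSet[invariantSets m0 U] A → MeasurableSet[Cm] B →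
      AEStronglyMeasurable[invariantSets m0 U ⊔ Cm]
        (ν[(A ∩ B).indicator (fun _ => (1:ℝ))|F]) ν := by
    intro A B hA hB
    have hAm0 : MeasurableSet[m0] A := hA.1
    have hBF : MeasurableSet[F] B := hC B hB
    have hindA : Integrable (A.indicator (fun _ => (1:ℝ))) ν :=
      (integrable_const (1:ℝ)).indicator hAm0
    have hinv : ∀ p : ℤ × ℤ, (fun x => (ν[A.indicator (fun _ => (1:ℝ))|F]) (U p x)) =ᵐ[ν]
        ν[A.indicator (fun _ => (1:ℝ))|F] := by
      intro p
      have h1 := condExp_comp_ae_eq F U hU0 hUadd hUmp hF hFinv hindA p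
      have h2 : (A.indicator (fun _ => (1:ℝ))) ∘ U p = A.indicator (fun _ => (1:ℝ)) := by
        funext x
        have hmem : U p x ∈ A ↔ x ∈ A := by
          conv_rhs => rw [← hA.2 p]
          exact Iff.rfl
        by_cases hx : x ∈ A
        · rw [Function.comp_apply, Set.indicator_of_mem (hmem.mpr hx),
            Set.indicator_of_mem hx]
        · rw [Function.comp_apply, Set.indicator_of_notMem (fun h => hx (hmem.mp h)),
            Set.indicator_of_notMem hx]
      rw [h2] at h1
      exact h1
    have hJmeas : AEStronglyMeasurable[invariantSets m0 U]
        (ν[A.indicator (fun _ => (1:ℝ))|F]) ν :=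
      aesm'_inv U hU0 hUadd hUmp ((stronglyMeasurable_condExp.mono hF).measurable) hinv
    have hprod : (A ∩ B).indicator (fun _ => (1:ℝ)) =
        fun x => B.indicator (fun _ => (1:ℝ)) x * A.indicator (fun _ => (1:ℝ)) x := by
      funext x
      by_cases hxA : x ∈ A <;> by_cases hxB : x ∈ B <;>
        simp [Set.indicator_apply, hxA, hxB, Set.mem_inter_iff]
    have hBsm : StronglyMeasurable[F] (B.indicator (fun _ => (1:ℝ))) :=
      smIndicatorConst hBF 1
    have hprodInt : Integrable
        (B.indicator (fun _ => (1:ℝ)) * A.indicator (fun _ => (1:ℝ))) ν := by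
      have : B.indicator (fun _ => (1:ℝ)) * A.indicator (fun _ => (1:ℝ))
          = (A ∩ B).indicator (fun _ => (1:ℝ)) := by
        rw [hprod]; rfl
      rw [this]
      exact (integrable_const (1:ℝ)).indicator (hAm0.inter (hF B hBF))
    have hpull := condExp_mul_of_stronglyMeasurable_left hBsm hprodInt hindA
    rw [hprod]
    have hpull' : ν[(fun x => B.indicator (fun _ => (1:ℝ)) x * A.indicator (fun _ => (1:ℝ)) x)|F]
        =ᵐ[ν] fun x => B.indicator (fun _ => (1:ℝ)) x * (ν[A.indicator (fun _ => (1:ℝ))|F]) x :=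
      hpull
    refine AEStronglyMeasurable.congr ?_ hpull'.symm
    obtain ⟨w, hw, hww⟩ := hJmeas
    refine ⟨fun x => B.indicator (fun _ => (1:ℝ)) x * w x, ?_, ?_⟩
    · exact smMul (smIndicatorConst ((le_sup_right : Cm ≤ invariantSets m0 U ⊔ Cm) B hB) 1)
        (hw.mono le_sup_left)
    · filter_upwards [hww] with x hx
      rw [hx]
  -- π-system generating the sup
  have hgen : invariantSets m0 U ⊔ Cm = MeasurableSpace.generateFrom
      {s : Set X | ∃ A B, MeasurableSet[invariantSets m0 U] A ∧ MeasurableSet[Cm] B ∧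
        s = A ∩ B} := by
    refine le_antisymm (sup_le ?_ ?_) (MeasurableSpace.generateFrom_le ?_)
    · intro A hA
      exact MeasurableSpace.measurableSet_generateFrom
        ⟨A, Set.univ, hA, MeasurableSet.univ, (Set.inter_univ A).symm⟩
    · intro B hB
      exact MeasurableSpace.measurableSet_generateFrom
        ⟨Set.univ, B, MeasurableSet.univ, hB, (Set.univ_inter B).symm⟩
    · rintro s ⟨A, B, hA, hB, rfl⟩
      exact msInter ((le_sup_left : invariantSets m0 U ≤ invariantSets m0 U ⊔ Cm) A hA)
        ((le_sup_right : Cm ≤ invariantSets m0 U ⊔ Cm) B hB)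
  have hPi : IsPiSystem {s : Set X | ∃ A B, MeasurableSet[invariantSets m0 U] A ∧
      MeasurableSet[Cm] B ∧ s = A ∩ B} := by
    rintro s ⟨A1, B1, hA1, hB1, rfl⟩ t ⟨A2, B2, hA2, hB2, rfl⟩ -
    exact ⟨A1 ∩ A2, B1 ∩ B2, msInter hA1 hA2, msInter hB1 hB2, by
      ext x; simp only [Set.mem_inter_iff]; tauto⟩
  intro s hs
  refine MeasurableSpace.induction_on_inter (m := invariantSets m0 U ⊔ Cm)
    (C := fun t _ => AEStronglyMeasurable[invariantSets m0 U ⊔ Cm]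
      (ν[t.indicator (fun _ => (1:ℝ))|F]) ν)
    hgen hPi ?_ ?_ ?_ ?_ s hs
  · -- empty set
    have h0 : (∅ : Set X).indicator (fun _ => (1:ℝ)) = fun _ => (0:ℝ) := by
      funext x; simp
    rw [h0]
    have hz : ν[(fun _ => (0:ℝ))|F] = fun _ => (0:ℝ) := condExp_zero
    rw [hz]
    exact ⟨fun _ => 0, smZero, Filter.EventuallyEq.rfl⟩
  · rintro t ⟨A, B, hA, hB, rfl⟩
    exact hbase A B hA hB
  · -- complement
    intro t ht hP
    have hcompl_ind : tᶜ.indicator (fun _ => (1:ℝ))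
        = fun x => 1 - t.indicator (fun _ => (1:ℝ)) x := by
      funext x; by_cases hx : x ∈ t <;> simp [hx]
    rw [hcompl_ind]
    have hIt : Integrable (t.indicator (fun _ => (1:ℝ))) ν :=
      (integrable_const (1:ℝ)).indicator (hG t ht)
    have hsub : ν[(fun x => 1 - t.indicator (fun _ => (1:ℝ)) x)|F]
        =ᵐ[ν] fun x => 1 - (ν[t.indicator (fun _ => (1:ℝ))|F]) x := by
      have h1 : (fun x => (1:ℝ) - t.indicator (fun _ => (1:ℝ)) x)
          = (fun _ => (1:ℝ)) - t.indicator (fun _ => (1:ℝ)) := rfl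
      rw [h1]
      refine (condExp_sub (integrable_const (1:ℝ)) hIt (m := F)).trans ?_
      have h3 : ν[(fun _ => (1:ℝ))|F] = fun _ => (1:ℝ) := condExp_const hF (1:ℝ)
      rw [h3]
      exact Filter.EventuallyEq.rfl
    refine AEStronglyMeasurable.congr ?_ hsub.symm
    obtain ⟨w, hw, hww⟩ := hP
    refine ⟨fun x => 1 - w x, smConstSub 1 hw, ?_⟩
    filter_upwards [hww] with x hx
    rw [hx]
  · -- countable disjoint union
    intro f hdisj hfG hPf
    have hQ : ∀ n, AEStronglyMeasurable[invariantSets m0 U ⊔ Cm]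
        (ν[(Set.accumulate f n).indicator (fun _ => (1:ℝ))|F]) ν := by
      intro n
      induction n with
      | zero =>
        have h00 : Set.accumulate f 0 = f 0 := by
          ext x; simp [Set.mem_accumulate, Nat.le_zero]
        rw [h00]
        exact hPf 0
      | succ n ih =>
        have hsucc : Set.accumulate f (n + 1) = Set.accumulate f n ∪ f (n + 1) := by
          ext x
          simp only [Set.mem_accumulate, Set.mem_union]
          constructor
          · rintro ⟨y, hy, hx⟩
            by_cases hyn : y ≤ n
            · exact Or.inl ⟨y, hyn, hx⟩
            · have : y = n + 1 := by omega
              subst this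
              exact Or.inr hx
          · rintro (⟨y, hy, hx⟩ | hx)
            · exact ⟨y, by omega, hx⟩
            · exact ⟨n + 1, le_rfl, hx⟩
        have hdisj2 : Disjoint (Set.accumulate f n) (f (n + 1)) := by
          rw [Set.disjoint_left]
          intro x hx hx'
          obtain ⟨y, hy, hxy⟩ := Set.mem_accumulate.mp hx
          exact Set.disjoint_left.mp (hdisj (show y ≠ n + 1 by omega)) hxy hx'
        have hind : (Set.accumulate f (n + 1)).indicator (fun _ => (1:ℝ))
            = (Set.accumulate f n).indicator (fun _ => (1:ℝ))
              + (f (n + 1)).indicator (fun _ => (1:ℝ)) := by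
          rw [hsucc, Set.indicator_union_of_disjoint hdisj2]
          rfl
        rw [hind]
        have hI1 : Integrable ((Set.accumulate f n).indicator (fun _ => (1:ℝ))) ν :=
          (integrable_const (1:ℝ)).indicator (hG _ (msAccumulate hfG n))
        have hI2 : Integrable ((f (n + 1)).indicator (fun _ => (1:ℝ))) ν :=
          (integrable_const (1:ℝ)).indicator (hG _ (hfG (n + 1)))
        exact (ih.add (hPf (n + 1))).congr (condExp_add hI1 hI2 (m := F)).symm
    refine aesm'_of_tendsto_L1 hG (fun n => integrable_condExp) integrable_condExp hQ ?_
    have hIAcc : ∀ n, Integrable ((Set.accumulate f n).indicator (fun _ => (1:ℝ))) ν :=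
      fun n => (integrable_const (1:ℝ)).indicator (hG _ (msAccumulate hfG n))
    have hIU : Integrable ((⋃ i, f i).indicator (fun _ => (1:ℝ))) ν :=
      (integrable_const (1:ℝ)).indicator (hG _ (msUnion hfG))
    have hbound : ∀ n, ∫ x, |(ν[(Set.accumulate f n).indicator (fun _ => (1:ℝ))|F]) x
          - (ν[(⋃ i, f i).indicator (fun _ => (1:ℝ))|F]) x| ∂ν
        ≤ ∫ x, |(Set.accumulate f n).indicator (fun _ => (1:ℝ)) x
          - (⋃ i, f i).indicator (fun _ => (1:ℝ)) x| ∂ν :=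
      fun n => condExp_L1_lip F hF (hIAcc n) hIU
    have htend0 : Filter.Tendsto (fun n => ∫ x, |(Set.accumulate f n).indicator (fun _ => (1:ℝ)) x
        - (⋃ i, f i).indicator (fun _ => (1:ℝ)) x| ∂ν) Filter.atTop (nhds 0) := by
      have := tendsto_integral_of_dominated_convergence (μ := ν)
        (F := fun n x => |(Set.accumulate f n).indicator (fun _ => (1:ℝ)) x
          - (⋃ i, f i).indicator (fun _ => (1:ℝ)) x|)
        (f := fun _ => (0:ℝ)) (bound := fun _ => (1:ℝ))
        (fun n => ((hIAcc n).sub hIU).abs.aestronglyMeasurable)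
        (integrable_const 1)
        (fun n => Filter.Eventually.of_forall fun x => ?_)
        (Filter.Eventually.of_forall fun x => ?_)
      · simpa using this
      · -- bound
        simp only [Real.norm_eq_abs, abs_abs]
        by_cases hx1 : x ∈ Set.accumulate f n <;> by_cases hx2 : x ∈ ⋃ i, f i <;>
          simp [Set.indicator_apply, hx1, hx2] <;> norm_num
      · -- pointwise limit
        by_cases hx : x ∈ ⋃ i, f i
        · obtain ⟨i, hi⟩ := Set.mem_iUnion.mp hx
          refine Filter.Tendsto.congr' ?_ tendsto_const_nhds
          filter_upwards [Filter.eventually_ge_atTop i] with n hn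
          have hxa : x ∈ Set.accumulate f n :=
            Set.monotone_accumulate hn (Set.subset_accumulate hi)
          simp [Set.indicator_of_mem hxa, Set.indicator_of_mem hx]
        · refine Filter.Tendsto.congr' ?_ tendsto_const_nhds
          filter_upwards with n
          have hxa : x ∉ Set.accumulate f n :=
            fun h => hx (Set.accumulate_subset_iUnion n h)
          simp [Set.indicator_of_notMem hxa, Set.indicator_of_notMem hx]
    exact squeeze_zero (fun n => integral_nonneg fun x => abs_nonneg _) hbound htend0

lemma aesm'_condExp_of_meas {X : Type*} (F Cm : MeasurableSpace X) {m0 : MeasurableSpace X}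
    {ν : Measure X} [IsProbabilityMeasure ν]
    (U : ℤ × ℤ → X → X) (hU0 : U 0 = id) (hUadd : ∀ p q : ℤ × ℤ, U (p + q) = U p ∘ U q)
    (hUmp : ∀ p, MeasurePreserving (U p) ν ν)
    (hF : F ≤ m0)
    (hFinv : ∀ (p : ℤ × ℤ) (s : Set X), MeasurableSet[F] s → MeasurableSet[F] (U p ⁻¹' s))
    (hC : Cm ≤ F)
    (h : X → ℝ) (hint : Integrable h ν)
    (hsm : StronglyMeasurable[invariantSets m0 U ⊔ Cm] h) :
    AEStronglyMeasurable[invariantSets m0 U ⊔ Cm] (ν[h|F]) ν := by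
  have hJ : invariantSets m0 U ≤ m0 := fun s hs => hs.1
  have hG : invariantSets m0 U ⊔ Cm ≤ m0 := sup_le hJ (hC.trans hF)
  haveI : SigmaFinite (ν.trim hG) := inferInstance
  have main : ∀ ⦃φ : X → ℝ⦄, Integrable φ (ν.trim hG) →
      AEStronglyMeasurable[invariantSets m0 U ⊔ Cm] (ν[φ|F]) ν := by
    refine @Integrable.induction X ℝ (invariantSets m0 U ⊔ Cm) _ (ν.trim hG)
      (fun φ => AEStronglyMeasurable[invariantSets m0 U ⊔ Cm] (ν[φ|F]) ν)
      ?_ ?_ ?_ ?_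
    · intro c t ht _
      have hconst : t.indicator (fun _ => c) = c • t.indicator (fun _ => (1:ℝ)) := by
        funext x; by_cases hx : x ∈ t <;> simp [hx]
      rw [hconst]
      exact ((aesm'_condExp_indicator F Cm U hU0 hUadd hUmp hF hFinv hC t ht).const_smul
        c).congr (condExp_smul (μ := ν) (m := F) c (t.indicator (fun _ => (1:ℝ)))).symm
    · intro φ ψ _ hφ hψ hPφ hPψ
      have hφν : Integrable φ ν := integrable_of_integrable_trim hG hφ
      have hψν : Integrable ψ ν := integrable_of_integrable_trim hG hψ
      exact (hPφ.add hPψ).congr (condExp_add hφν hψν (m := F)).symm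
    · refine IsSeqClosed.isClosed ?_
      intro φs φ hmem hconv
      have hin : ∀ n, Integrable (↑(φs n) : X → ℝ) ν :=
        fun n => integrable_of_integrable_trim hG (L1.integrable_coeFn (φs n))
      have hiφ : Integrable (↑φ : X → ℝ) ν :=
        integrable_of_integrable_trim hG (L1.integrable_coeFn φ)
      have hd : ∀ n, ∫ x, |(↑(φs n) : X → ℝ) x - (↑φ : X → ℝ) x| ∂ν = dist (φs n) φ := by
        intro n
        have h1 : AEStronglyMeasurable[invariantSets m0 U ⊔ Cm] (fun x => |(↑(φs n) : X → ℝ) x - (↑φ : X → ℝ) x|)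
            (ν.trim hG) :=
          ((L1.integrable_coeFn (φs n)).sub (L1.integrable_coeFn φ)).abs.aestronglyMeasurable
        rw [integral_trim_ae hG h1, L1.dist_eq_integral_dist]
        exact integral_congr_ae (Filter.Eventually.of_forall fun x => by simp [Real.dist_eq])
      have hconv2 : Filter.Tendsto (fun n => ∫ x, |(↑(φs n) : X → ℝ) x - (↑φ : X → ℝ) x| ∂ν)
          Filter.atTop (nhds 0) := by
        simp_rw [hd]
        exact tendsto_iff_dist_tendsto_zero.mp hconv
      exact aesm'_of_tendsto_L1 hG (fun _ => integrable_condExp) integrable_condExp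
        (fun n => hmem n)
        (squeeze_zero (fun n => integral_nonneg fun x => abs_nonneg _)
          (fun n => condExp_L1_lip F hF (hin n) hiφ) hconv2)
    · intro φ ψ hφψ _ hP
      exact hP.congr (condExp_congr_ae (ae_eq_of_ae_eq_trim hφψ))
  exact main (hint.trim hG hsm)

end CondexpJoinAux

/-- **Projection measurability, second half.**
Let `U` be a measure-preserving `ℤ²`-action on a probability space `(X, B, ν)`, `J` the
σ-algebra of `U`-invariant sets, `F` a `U`-invariant sub-σ-algebra of `B` and `C` a
sub-σ-algebra of `F`.  Then for every `f ∈ L²(F)`, the conditional expectation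
`E[f | J ∨ C]` is `F`-measurable (modulo null sets). -/
theorem condexp_join_measurable_invariant
    {X : Type*} [m0 : MeasurableSpace X] (ν : Measure X) [IsProbabilityMeasure ν]
    (U : ℤ × ℤ → X → X)
    (hU0 : U 0 = id)
    (hUadd : ∀ p q : ℤ × ℤ, U (p + q) = U p ∘ U q)
    (hUmp : ∀ p, MeasurePreserving (U p) ν ν)
    (F : MeasurableSpace X) (hF : F ≤ m0)
    (hFinv : ∀ (p : ℤ × ℤ) (s : Set X), MeasurableSet[F] s → MeasurableSet[F] (U p ⁻¹' s))
    (C : MeasurableSpace X) (hC : C ≤ F)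
    (f : X → ℝ) (hf2 : MemLp f 2 ν)
    (hfmeas : AEStronglyMeasurable[F] f ν) :
    AEStronglyMeasurable[F] (ν[f|invariantSets m0 U ⊔ C]) ν := by
  have hJ : invariantSets m0 U ≤ m0 := fun s hs => hs.1
  have hG : invariantSets m0 U ⊔ C ≤ m0 := sup_le hJ (hC.trans hF)
  haveI : SigmaFinite (ν.trim hG) := inferInstance
  haveI : SigmaFinite (ν.trim hF) := inferInstance
  have hint_f : Integrable f ν := hf2.integrable one_le_two
  set h : X → ℝ := ν[f|invariantSets m0 U ⊔ C] with hh_def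
  set g : X → ℝ := ν[h|F] with hg_def
  have hint_h : Integrable h ν := hh_def ▸ integrable_condExp
  have hint_g : Integrable g ν := hg_def ▸ integrable_condExp
  have hh2 : MemLp h 2 ν := hh_def ▸ CondexpJoinAux.memL2_condexp hG hf2
  have hg2 : MemLp g 2 ν := hg_def ▸ CondexpJoinAux.memL2_condexp hF hh2
  have hhsm : StronglyMeasurable[invariantSets m0 U ⊔ C] h := hh_def ▸ stronglyMeasurable_condExp
  have hgsm : StronglyMeasurable[F] g := hg_def ▸ stronglyMeasurable_condExp
  have hgG : AEStronglyMeasurable[invariantSets m0 U ⊔ C] g ν :=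
    hg_def ▸ CondexpJoinAux.aesm'_condExp_of_meas F C U hU0 hUadd hUmp hF hFinv hC h hint_h hhsm
  have Ihh : Integrable (h * h) ν := CondexpJoinAux.integrable_mul2 hh2 hh2
  have Igh : Integrable (g * h) ν := CondexpJoinAux.integrable_mul2 hg2 hh2
  have Igg : Integrable (g * g) ν := CondexpJoinAux.integrable_mul2 hg2 hg2
  have Igf : Integrable (g * f) ν := CondexpJoinAux.integrable_mul2 hg2 hf2
  have Ifh : Integrable (f * h) ν := CondexpJoinAux.integrable_mul2 hf2 hh2
  have Ihf : Integrable (h * f) ν := CondexpJoinAux.integrable_mul2 hh2 hf2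
  have T1 : ∫ x, (g * h) x ∂ν = ∫ x, (g * g) x ∂ν := by
    have e : ν[g * h|F] =ᵐ[ν] g * g := by
      have := condExp_mul_of_stronglyMeasurable_left hgsm Igh hint_h
      rw [← hg_def] at this
      exact this
    calc ∫ x, (g * h) x ∂ν = ∫ x, (ν[g * h|F]) x ∂ν := (integral_condExp hF).symm
      _ = ∫ x, (g * g) x ∂ν := integral_congr_ae e
  have T2a : ∫ x, (g * f) x ∂ν = ∫ x, (g * h) x ∂ν := by
    have e : ν[g * f|invariantSets m0 U ⊔ C] =ᵐ[ν] g * h := by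
      have := condExp_mul_of_aestronglyMeasurable_left hgG Igf hint_f
      rw [← hh_def] at this
      exact this
    calc ∫ x, (g * f) x ∂ν
        = ∫ x, (ν[g * f|invariantSets m0 U ⊔ C]) x ∂ν := (integral_condExp hG).symm
      _ = ∫ x, (g * h) x ∂ν := integral_congr_ae e
  have T2b : ∫ x, (f * h) x ∂ν = ∫ x, (f * g) x ∂ν := by
    have e : ν[f * h|F] =ᵐ[ν] f * g := by
      have := condExp_mul_of_aestronglyMeasurable_left hfmeas Ifh hint_h
      rw [← hg_def] at this
      exact this
    calc ∫ x, (f * h) x ∂ν = ∫ x, (ν[f * h|F]) x ∂ν := (integral_condExp hF).symm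
      _ = ∫ x, (f * g) x ∂ν := integral_congr_ae e
  have T2c : ∫ x, (h * f) x ∂ν = ∫ x, (h * h) x ∂ν := by
    have e : ν[h * f|invariantSets m0 U ⊔ C] =ᵐ[ν] h * h := by
      have := condExp_mul_of_stronglyMeasurable_left hhsm Ihf hint_f
      rw [← hh_def] at this
      exact this
    calc ∫ x, (h * f) x ∂ν
        = ∫ x, (ν[h * f|invariantSets m0 U ⊔ C]) x ∂ν := (integral_condExp hG).symm
      _ = ∫ x, (h * h) x ∂ν := integral_congr_ae e
  have comm1 : ∫ x, (g * f) x ∂ν = ∫ x, (f * g) x ∂ν :=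
    integral_congr_ae (Filter.Eventually.of_forall fun x => by
      simp [Pi.mul_apply, mul_comm])
  have comm2 : ∫ x, (f * h) x ∂ν = ∫ x, (h * f) x ∂ν :=
    integral_congr_ae (Filter.Eventually.of_forall fun x => by
      simp [Pi.mul_apply, mul_comm])
  have T2 : ∫ x, (g * h) x ∂ν = ∫ x, (h * h) x ∂ν := by
    rw [← T2a, comm1, ← T2b, comm2, T2c]
  have hsq : Integrable (fun x => (h x - g x) ^ 2) ν := by
    have := (hh2.sub hg2).integrable_sq
    simpa using this
  have T3 : ∫ x, (h x - g x) ^ 2 ∂ν = 0 := by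
    have expand : ∀ x, (h x - g x) ^ 2 = ((h * h) x - 2 * (g * h) x) + (g * g) x := by
      intro x
      simp only [Pi.mul_apply]
      ring
    rw [integral_congr_ae (Filter.Eventually.of_forall expand)]
    have I1 : Integrable (fun a => (h * h) a - 2 * (g * h) a) ν := Ihh.sub (Igh.const_mul 2)
    have e1 : ∫ a, ((h * h) a - 2 * (g * h) a) + (g * g) a ∂ν
        = (∫ a, (h * h) a - 2 * (g * h) a ∂ν) + ∫ a, (g * g) a ∂ν := integral_add I1 Igg
    have e2 : ∫ a, (h * h) a - 2 * (g * h) a ∂ν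
        = (∫ a, (h * h) a ∂ν) - ∫ a, 2 * (g * h) a ∂ν := integral_sub Ihh (Igh.const_mul 2)
    have e3 : ∫ a, 2 * (g * h) a ∂ν = 2 * ∫ a, (g * h) a ∂ν := integral_const_mul 2 _
    rw [e1, e2, e3]
    linarith [T1, T2]
  have T4 : h =ᵐ[ν] g := by
    have h5 := (integral_eq_zero_iff_of_nonneg_ae
      (Filter.Eventually.of_forall fun x => sq_nonneg (h x - g x)) hsq).mp T3
    filter_upwards [h5] with x hx
    have hx' : (h x - g x) ^ 2 = 0 := hx
    exact sub_eq_zero.mp ((pow_eq_zero_iff two_ne_zero).mp hx')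
  exact (hgsm.aestronglyMeasurable).congr T4.symm
end

section
/- Let U=(U_{i,j}) be a measure-preserving ℤ²-action on a probability space (X,B,ν), let J be the σ-algebra of U-invariant sets, let F be a U-invariant sub-σ-algebra of B, and let C be a sub-σ-algebra of F. Then the conditional expectations with respect to F and with respect to J∨C commute: for all f ∈ L²(B), E[E[f | J∨C] | F] = E[E[f | F] | J∨C] = E[f | F ∩ (J∨C)]. -/
open MeasureTheory

open Filter

set_option linter.unusedSectionVars false
set_option linter.unusedVariables false


section Helpers

variable {X : Type*} {m : MeasurableSpace X} [m0 : MeasurableSpace X] {ν : Measure X}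
  [IsProbabilityMeasure ν]

/-- a.e. bound for the conditional expectation of an indicator. -/
lemma condexp_indicator_norm_le (hm : m ≤ m0)
    {s : Set X} (hs : MeasurableSet[m0] s) :
    ∀ᵐ x ∂ν, ‖(ν[s.indicator (fun _ => (1:ℝ))|m]) x‖ ≤ 1 := by
  have hint : Integrable (s.indicator fun _ => (1:ℝ)) ν := (integrable_const 1).indicator hs
  have h0 : 0 ≤ᵐ[ν] ν[s.indicator (fun _ => (1:ℝ))|m] :=
    condExp_nonneg (Eventually.of_forall fun x =>
      Set.indicator_nonneg (fun _ _ => zero_le_one) x)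
  have h1 : ν[s.indicator (fun _ => (1:ℝ))|m] ≤ᵐ[ν] ν[(fun _ => (1:ℝ))|m] :=
    condExp_mono hint (integrable_const 1)
      (Eventually.of_forall fun x => by
        by_cases hx : x ∈ s <;> simp [Set.indicator_apply, hx])
  rw [condExp_const hm] at h1
  filter_upwards [h0, h1] with x hx0 hx1
  simp only [Pi.zero_apply] at hx0
  rw [Real.norm_eq_abs, abs_le]
  exact ⟨by linarith, hx1⟩

/-- Adjoint-type identity: pairing an `m`-measurable function against a conditional
expectation. -/
lemma integral_mul_condexp (hm : m ≤ m0)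
    {w h : X → ℝ} (hw : StronglyMeasurable[m] w)
    (hwh : Integrable (w * h) ν) (hh : Integrable h ν) :
    ∫ x, w x * (ν[h|m]) x ∂ν = ∫ x, w x * h x ∂ν := by
  have h1 : ν[w * h|m] =ᵐ[ν] w * ν[h|m] := condExp_mul_of_stronglyMeasurable_left hw hwh hh
  have h2 : ∫ x, w x * (ν[h|m]) x ∂ν = ∫ x, (ν[w * h|m]) x ∂ν :=
    (integral_congr_ae h1).symm
  rw [h2, integral_condExp hm]
  rfl

end Helpers
section Step1

variable {X : Type*} {F K : MeasurableSpace X} [m0 : MeasurableSpace X] {ν : Measure X}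
  [IsProbabilityMeasure ν]

/-- The conditional expectation (w.r.t. an invariant σ-algebra `F`) of the indicator of an
invariant set is a.e. equal to its conditional expectation w.r.t. any `K` between
`invariantSets m0 U ⊓ F` and `F`. -/
lemma condexp_indicator_invariant
    {U : ℤ × ℤ → X → X}
    (hU0 : U 0 = id) (hUadd : ∀ p q : ℤ × ℤ, U (p + q) = U p ∘ U q)
    (hUmp : ∀ p, MeasurePreserving (U p) ν ν)
    (hF : F ≤ m0)
    (hFinv : ∀ (p : ℤ × ℤ) (s : Set X), MeasurableSet[F] s → MeasurableSet[F] (U p ⁻¹' s))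
    (hKF : K ≤ F) (hJK : invariantSets m0 U ⊓ F ≤ K)
    {A : Set X} (hA : MeasurableSet[invariantSets m0 U] A) :
    ν[A.indicator (fun _ => (1:ℝ))|F] =ᵐ[ν] ν[A.indicator (fun _ => (1:ℝ))|K] := by
  have hK : K ≤ m0 := hKF.trans hF
  obtain ⟨hAm, hAinv⟩ := hA
  set e : X → ℝ := A.indicator (fun _ => (1:ℝ)) with he
  have hint : Integrable e ν := (integrable_const 1).indicator hAm
  set g : X → ℝ := ν[e|F] with hg
  have hUpt : ∀ (p : ℤ × ℤ) (x : X), U (-p) (U p x) = x := by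
    intro p x
    have : U (-p) ∘ U p = id := by rw [← hUadd]; simp [hU0]
    exact congrFun this x
  have hUmeasF : ∀ p : ℤ × ℤ, @Measurable X X F F (U p) := fun p s hs => hFinv p s hs
  -- a.e. invariance of g
  have hinv : ∀ p : ℤ × ℤ, (fun x => g (U p x)) =ᵐ[ν] g := by
    intro p
    have hcomp_sm : StronglyMeasurable[F] (fun x => g (U p x)) :=
      stronglyMeasurable_condExp.comp_measurable (hUmeasF p)
    have : (fun x => g (U p x)) =ᵐ[ν] ν[e|F] := by
      refine ae_eq_condExp_of_forall_setIntegral_eq hF hint ?_ ?_ ?_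
      · intro s _ _
        exact (((hUmp p).integrable_comp
          (stronglyMeasurable_condExp.mono hF).aestronglyMeasurable).mpr
          integrable_condExp).integrableOn
      · intro s hs _
        have hs' : MeasurableSet[F] (U (-p) ⁻¹' s) := hFinv (-p) s hs
        have hind : ∀ x, s.indicator (fun x => g (U p x)) x
            = ((U (-p) ⁻¹' s).indicator g) (U p x) := by
          intro x
          by_cases hx : x ∈ s
          · simp [Set.indicator_of_mem hx, Set.indicator_of_mem, Set.mem_preimage, hUpt p x, hx]
          · rw [Set.indicator_of_notMem hx, Set.indicator_of_notMem]
            simp [Set.mem_preimage, hUpt p x, hx]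
        have hsm0 : MeasurableSet[m0] s := hF s hs
        have hsm0' : MeasurableSet[m0] (U (-p) ⁻¹' s) := hF _ hs'
        have haesm : AEStronglyMeasurable ((U (-p) ⁻¹' s).indicator g) ν :=
          ((stronglyMeasurable_condExp.mono hF).indicator hsm0').aestronglyMeasurable
        have step : ∫ x in s, g (U p x) ∂ν = ∫ x in U (-p) ⁻¹' s, g x ∂ν := by
          rw [← integral_indicator hsm0, ← integral_indicator hsm0']
          calc ∫ x, s.indicator (fun x => g (U p x)) x ∂ν
              = ∫ x, ((U (-p) ⁻¹' s).indicator g) (U p x) ∂ν :=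
                integral_congr_ae (Eventually.of_forall hind)
            _ = ∫ y, ((U (-p) ⁻¹' s).indicator g) y ∂ν := by
                conv_rhs => rw [← (hUmp p).map_eq]
                rw [integral_map (hUmp p).measurable.aemeasurable]
                rw [(hUmp p).map_eq]
                exact haesm
        rw [step, setIntegral_condExp hF hint hs']
        -- now both sides are set integrals of the indicator e
        rw [setIntegral_indicator hAm, setIntegral_indicator hAm]
        rw [setIntegral_const, setIntegral_const]
        have hmeq : ν (U (-p) ⁻¹' s ∩ A) = ν (s ∩ A) := by
          have : U (-p) ⁻¹' s ∩ A = U (-p) ⁻¹' (s ∩ A) := by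
            rw [Set.preimage_inter, hAinv (-p)]
          rw [this, (hUmp (-p)).measure_preimage (hsm0.inter hAm).nullMeasurableSet]
        simp only [Measure.real, hmeq]
      · exact ⟨_, hcomp_sm, EventuallyEq.rfl⟩
    exact this
  -- truncation of g to [0,1]
  set gb : X → ℝ := fun x => max 0 (min (g x) 1) with hgb
  have hg_meas : @Measurable X ℝ F _ g := stronglyMeasurable_condExp.measurable
  have hgb_meas : @Measurable X ℝ F _ gb :=
    measurable_const.max (hg_meas.min measurable_const)
  have hgb_ae : gb =ᵐ[ν] g := by
    have h0 : 0 ≤ᵐ[ν] g :=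
      condExp_nonneg (Eventually.of_forall fun x =>
        Set.indicator_nonneg (fun _ _ => zero_le_one) x)
    have h1 : g ≤ᵐ[ν] fun _ => (1:ℝ) := by
      have h1' : ν[e|F] ≤ᵐ[ν] ν[(fun _ => (1:ℝ))|F] :=
        condExp_mono hint (integrable_const 1)
          (Eventually.of_forall fun x => by
            by_cases hx : x ∈ A <;> simp [e, Set.indicator_apply, hx])
      rwa [condExp_const hF] at h1'
    filter_upwards [h0, h1] with x h0x h1x
    simp only [Pi.zero_apply] at h0x
    simp only [gb]
    rw [min_eq_left h1x, max_eq_right h0x]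
  have hgb_inv : ∀ p : ℤ × ℤ, (fun x => gb (U p x)) =ᵐ[ν] gb := by
    intro p
    filter_upwards [hinv p] with x hx
    simp only [gb, hx]
  have hgb_le : ∀ x, gb x ≤ 1 := fun x => max_le zero_le_one (min_le_right _ _)
  -- the invariant modification
  set gT : X → ℝ := fun x => ⨆ p : ℤ × ℤ, gb (U p x) with hgT
  have hbdd : ∀ x, BddAbove (Set.range fun p : ℤ × ℤ => gb (U p x)) := fun x =>
    ⟨1, by rintro y ⟨p, rfl⟩; exact hgb_le _⟩
  have hgT_meas : @Measurable X ℝ F _ gT :=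
    Measurable.iSup fun p => hgb_meas.comp (hUmeasF p)
  have hgT_inv : ∀ (q : ℤ × ℤ) (x : X), gT (U q x) = gT x := by
    intro q x
    apply le_antisymm
    · refine ciSup_le fun p => ?_
      have h1 : gb (U p (U q x)) = gb (U (p + q) x) := by rw [hUadd p q]; rfl
      rw [h1]
      exact le_ciSup (hbdd x) (p + q)
    · refine ciSup_le fun p => ?_
      have h1 : gb (U p x) = gb (U (p + -q) (U q x)) := by
        have e1 : U p = U (p + -q) ∘ U q := by rw [← hUadd, neg_add_cancel_right]
        rw [e1]; rfl
      rw [h1]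
      exact le_ciSup (hbdd (U q x)) (p + -q)
  have hgT_ae : gT =ᵐ[ν] g := by
    have hall : ∀ᵐ x ∂ν, ∀ p : ℤ × ℤ, gb (U p x) = gb x :=
      ae_all_iff.mpr fun p => hgb_inv p
    filter_upwards [hall, hgb_ae] with x hx hgx
    have h1 : gT x = gb x := by
      simp only [gT]
      rw [show (fun p : ℤ × ℤ => gb (U p x)) = fun _ => gb x from funext hx]
      exact ciSup_const
    rw [h1, hgx]
  have hgT_measK : @Measurable X ℝ K _ gT := by
    intro s hs
    have hFm : MeasurableSet[F] (gT ⁻¹' s) := hgT_meas hs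
    have hJm : MeasurableSet[invariantSets m0 U] (gT ⁻¹' s) := by
      refine ⟨hF _ hFm, fun p => ?_⟩
      ext x
      simp [Set.mem_preimage, hgT_inv p x]
    exact hJK _ (MeasurableSpace.measurableSet_inf.mpr ⟨hJm, hFm⟩)
  exact ae_eq_condExp_of_forall_setIntegral_eq hK hint
    (fun s _ _ => integrable_condExp.integrableOn)
    (fun s hs _ => setIntegral_condExp hF hint (hKF s hs))
    ⟨gT, hgT_measK.stronglyMeasurable, hgT_ae.symm⟩

end Step1
section StepP

variable {X : Type*} {F C K : MeasurableSpace X} [m0 : MeasurableSpace X] {ν : Measure X}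
  [IsProbabilityMeasure ν]

/-- For every set `S` measurable w.r.t. `J ⊔ C`, the conditional expectations of its
indicator w.r.t. `F` and w.r.t. `K = F ⊓ (J ⊔ C)` agree a.e. -/
lemma condexp_indicator_join
    {U : ℤ × ℤ → X → X}
    (hU0 : U 0 = id) (hUadd : ∀ p q : ℤ × ℤ, U (p + q) = U p ∘ U q)
    (hUmp : ∀ p, MeasurePreserving (U p) ν ν)
    (hF : F ≤ m0)
    (hFinv : ∀ (p : ℤ × ℤ) (s : Set X), MeasurableSet[F] s → MeasurableSet[F] (U p ⁻¹' s))
    (hC : C ≤ F)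
    (hKdef : K = F ⊓ (invariantSets m0 U ⊔ C)) :
    ∀ S : Set X, MeasurableSet[invariantSets m0 U ⊔ C] S →
      ν[S.indicator (fun _ => (1:ℝ))|F] =ᵐ[ν] ν[S.indicator (fun _ => (1:ℝ))|K] := by
  have hG : invariantSets m0 U ⊔ C ≤ m0 :=
    sup_le (fun s hs => hs.1) (hC.trans hF)
  have hKF : K ≤ F := hKdef ▸ inf_le_left
  have hK : K ≤ m0 := hKF.trans hF
  have hJK : invariantSets m0 U ⊓ F ≤ K :=
    hKdef ▸ le_inf inf_le_right (inf_le_left.trans le_sup_left)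
  -- the generating π-system
  have h_eq : (invariantSets m0 U ⊔ C : MeasurableSpace X) = MeasurableSpace.generateFrom
      {s : Set X | ∃ a b : Set X,
        MeasurableSet[invariantSets m0 U] a ∧ MeasurableSet[C] b ∧ s = a ∩ b} := by
    apply le_antisymm
    · refine sup_le ?_ ?_
      · intro s hs
        exact MeasurableSpace.measurableSet_generateFrom
          ⟨s, Set.univ, hs, MeasurableSet.univ, (Set.inter_univ s).symm⟩
      · intro s hs
        exact MeasurableSpace.measurableSet_generateFrom
          ⟨Set.univ, s, MeasurableSet.univ, hs, (Set.univ_inter s).symm⟩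
    · refine MeasurableSpace.generateFrom_le ?_
      rintro t ⟨a, b, ha, hb, rfl⟩
      exact ((le_sup_left : invariantSets m0 U ≤ invariantSets m0 U ⊔ C) a ha).inter
        ((le_sup_right : C ≤ invariantSets m0 U ⊔ C) b hb)
  have h_pi : IsPiSystem {s : Set X | ∃ a b : Set X,
      MeasurableSet[invariantSets m0 U] a ∧ MeasurableSet[C] b ∧ s = a ∩ b} := by
    rintro s ⟨a, b, ha, hb, rfl⟩ t ⟨a', b', ha', hb', rfl⟩ _
    exact ⟨a ∩ a', b ∩ b', ha.inter ha', hb.inter hb', by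
      rw [Set.inter_inter_inter_comm]⟩
  have h_empty : ν[(∅ : Set X).indicator (fun _ => (1:ℝ))|F]
      =ᵐ[ν] ν[(∅ : Set X).indicator (fun _ => (1:ℝ))|K] := by
    have hz : (∅ : Set X).indicator (fun _ => (1:ℝ)) = (0 : X → ℝ) := by
      funext x; simp
    rw [hz, condExp_zero, condExp_zero]
  refine MeasurableSpace.induction_on_inter (m := invariantSets m0 U ⊔ C)
    (C := fun S _ => ν[S.indicator (fun _ => (1:ℝ))|F] =ᵐ[ν] ν[S.indicator (fun _ => (1:ℝ))|K])
    h_eq h_pi h_empty ?_ ?_ ?_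
  · -- basic case: π-system elements
    rintro t ⟨a, b, ha, hb, rfl⟩
    have hbF : MeasurableSet[F] b := hC b hb
    have hbK : MeasurableSet[K] b := by
      rw [hKdef]
      exact MeasurableSpace.measurableSet_inf.mpr
        ⟨hbF, (le_sup_right : C ≤ invariantSets m0 U ⊔ C) b hb⟩
    have ham0 : MeasurableSet[m0] a := ha.1
    have hbm0 : MeasurableSet[m0] b := hF b hbF
    have hmul : (a ∩ b).indicator (fun _ => (1:ℝ))
        = b.indicator (fun _ => (1:ℝ)) * a.indicator (fun _ => (1:ℝ)) := by
      funext x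
      by_cases hxa : x ∈ a <;> by_cases hxb : x ∈ b <;>
        simp [Set.indicator_apply, hxa, hxb]
    have hint_a : Integrable (a.indicator fun _ => (1:ℝ)) ν :=
      (integrable_const 1).indicator ham0
    have hint_ba : Integrable
        (b.indicator (fun _ => (1:ℝ)) * a.indicator (fun _ => (1:ℝ))) ν := by
      rw [← hmul]; exact (integrable_const 1).indicator (ham0.inter hbm0)
    have h1 := condExp_mul_of_stronglyMeasurable_left (μ := ν)
      (stronglyMeasurable_const.indicator hbF) hint_ba hint_a
    have h2 := condExp_mul_of_stronglyMeasurable_left (μ := ν)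
      (stronglyMeasurable_const.indicator hbK) hint_ba hint_a
    have hstep : ν[a.indicator (fun _ => (1:ℝ))|F] =ᵐ[ν] ν[a.indicator (fun _ => (1:ℝ))|K] :=
      condexp_indicator_invariant hU0 hUadd hUmp hF hFinv hKF hJK ha
    rw [hmul]
    exact h1.trans ((EventuallyEq.mul EventuallyEq.rfl hstep).trans h2.symm)
  · -- complements
    intro t htm ht
    have htm0 : MeasurableSet[m0] t := hG t htm
    have hint_t : Integrable (t.indicator fun _ => (1:ℝ)) ν :=
      (integrable_const 1).indicator htm0
    have hcompl : tᶜ.indicator (fun _ => (1:ℝ))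
        = (fun _ => (1:ℝ)) - t.indicator (fun _ => (1:ℝ)) := by
      funext x
      by_cases hx : x ∈ t <;> simp [Set.indicator_apply, hx]
    rw [hcompl]
    have e1 : ν[(fun _ => (1:ℝ)) - t.indicator (fun _ => (1:ℝ))|F]
        =ᵐ[ν] ν[(fun _ => (1:ℝ))|F] - ν[t.indicator (fun _ => (1:ℝ))|F] :=
      condExp_sub (integrable_const 1) hint_t F
    have e2 : ν[(fun _ => (1:ℝ)) - t.indicator (fun _ => (1:ℝ))|K]
        =ᵐ[ν] ν[(fun _ => (1:ℝ))|K] - ν[t.indicator (fun _ => (1:ℝ))|K] :=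
      condExp_sub (integrable_const 1) hint_t K
    refine e1.trans (EventuallyEq.trans ?_ e2.symm)
    rw [condExp_const hF, condExp_const hK]
    exact EventuallyEq.sub EventuallyEq.rfl ht
  · -- countable disjoint unions
    intro f hdisj hmeas hP
    have hSm0 : MeasurableSet[m0] (⋃ i, f i) := hG _ (MeasurableSet.iUnion hmeas)
    set T : ℕ → Set X := fun N => ⋃ i ∈ Finset.range N, f i with hTdef
    have hTm0 : ∀ N, MeasurableSet[m0] (T N) := fun N =>
      (Finset.range N).measurableSet_biUnion fun i _ => hG _ (hmeas i)
    have hTS : ∀ N, T N ⊆ ⋃ i, f i := fun N =>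
      Set.iUnion₂_subset fun i _ => Set.subset_iUnion f i
    have hTmono : Monotone T := fun a b hab =>
      Set.biUnion_subset_biUnion_left (Finset.range_subset_range.mpr hab)
    have hPT : ∀ N, ν[(T N).indicator (fun _ => (1:ℝ))|F]
        =ᵐ[ν] ν[(T N).indicator (fun _ => (1:ℝ))|K] := by
      intro N
      induction N with
      | zero =>
        have h0 : T 0 = ∅ := by simp [T]
        rw [h0]; exact h_empty
      | succ N ih =>
        have hTsucc : T (N + 1) = T N ∪ f N := by
          simp only [T, Finset.range_add_one, Finset.set_biUnion_insert]
          rw [Set.union_comm]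
        have hdisjN : Disjoint (T N) (f N) := by
          rw [Set.disjoint_left]
          intro x hx hxf
          obtain ⟨i, hi, hxi⟩ := Set.mem_iUnion₂.mp hx
          have hiN : i ≠ N := by
            intro h
            rw [h] at hi
            simp at hi
          exact Set.disjoint_left.mp (hdisj hiN) hxi hxf
        have hind : (T (N + 1)).indicator (fun _ => (1:ℝ))
            = (T N).indicator (fun _ => (1:ℝ)) + (f N).indicator (fun _ => (1:ℝ)) := by
          funext x
          rw [hTsucc]
          by_cases hx1 : x ∈ T N
          · have hx2 : x ∉ f N := Set.disjoint_left.mp hdisjN hx1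
            simp [Set.indicator_apply, hx1, hx2]
          · by_cases hx2 : x ∈ f N <;> simp [Set.indicator_apply, hx1, hx2]
        have hintT : Integrable ((T N).indicator fun _ => (1:ℝ)) ν :=
          (integrable_const 1).indicator (hTm0 N)
        have hintf : Integrable ((f N).indicator fun _ => (1:ℝ)) ν :=
          (integrable_const 1).indicator (hG _ (hmeas N))
        rw [hind]
        have e1 := condExp_add (μ := ν) (m := F) hintT hintf
        have e2 := condExp_add (μ := ν) (m := K) hintT hintf
        refine e1.trans (EventuallyEq.trans ?_ e2.symm)
        exact EventuallyEq.add ih (hP N)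
    -- pass to the limit
    have hiS_int : Integrable ((⋃ i, f i).indicator fun _ => (1:ℝ)) ν :=
      (integrable_const 1).indicator hSm0
    have hDint : Integrable (fun x => (ν[(⋃ i, f i).indicator (fun _ => (1:ℝ))|F]) x
        - (ν[(⋃ i, f i).indicator (fun _ => (1:ℝ))|K]) x) ν :=
      integrable_condExp.sub integrable_condExp
    have hmain : ∀ N, ∫ x, |(ν[(⋃ i, f i).indicator (fun _ => (1:ℝ))|F]) x
        - (ν[(⋃ i, f i).indicator (fun _ => (1:ℝ))|K]) x| ∂ν
        ≤ 2 * (ν ((⋃ i, f i) \ T N)).toReal := by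
      intro N
      have hiT_int : Integrable ((T N).indicator fun _ => (1:ℝ)) ν :=
        (integrable_const 1).indicator (hTm0 N)
      have hδint : Integrable ((⋃ i, f i).indicator (fun _ => (1:ℝ))
          - (T N).indicator (fun _ => (1:ℝ))) ν := hiS_int.sub hiT_int
      have habs : ∀ x, |((⋃ i, f i).indicator (fun _ => (1:ℝ))
          - (T N).indicator (fun _ => (1:ℝ))) x|
          = ((⋃ i, f i) \ T N).indicator (fun _ => (1:ℝ)) x := by
        intro x
        simp only [Pi.sub_apply]
        by_cases hxS : x ∈ ⋃ i, f i
        · by_cases hxT : x ∈ T N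
          · simp [Set.indicator_apply, hxS, hxT]
          · simp [Set.indicator_apply, hxS, hxT]
        · have hxT : x ∉ T N := fun h => hxS (hTS N h)
          simp [Set.indicator_apply, hxS, hxT]
      have hδabs : ∫ x, |((⋃ i, f i).indicator (fun _ => (1:ℝ))
          - (T N).indicator (fun _ => (1:ℝ))) x| ∂ν = (ν ((⋃ i, f i) \ T N)).toReal := by
        rw [integral_congr_ae (Eventually.of_forall habs),
          integral_indicator_const (1:ℝ) (hSm0.diff (hTm0 N)), smul_eq_mul, mul_one]; rfl
      have hF1 := le_of_le_of_eq (integral_abs_condExp_le (m := F) (μ := ν)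
        ((⋃ i, f i).indicator (fun _ => (1:ℝ)) - (T N).indicator (fun _ => (1:ℝ)))) hδabs
      have hK1 := le_of_le_of_eq (integral_abs_condExp_le (m := K) (μ := ν)
        ((⋃ i, f i).indicator (fun _ => (1:ℝ)) - (T N).indicator (fun _ => (1:ℝ)))) hδabs
      have hae : (fun x => |(ν[(⋃ i, f i).indicator (fun _ => (1:ℝ))|F]) x
          - (ν[(⋃ i, f i).indicator (fun _ => (1:ℝ))|K]) x|)
          ≤ᵐ[ν] fun x => |(ν[(⋃ i, f i).indicator (fun _ => (1:ℝ))
              - (T N).indicator (fun _ => (1:ℝ))|F]) x|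
            + |(ν[(⋃ i, f i).indicator (fun _ => (1:ℝ))
              - (T N).indicator (fun _ => (1:ℝ))|K]) x| := by
        have e1 := condExp_sub (μ := ν) (m := F) hiS_int hiT_int
        have e2 := condExp_sub (μ := ν) (m := K) hiS_int hiT_int
        filter_upwards [e1, e2, hPT N] with x h1x h2x h3x
        simp only [Pi.sub_apply] at h1x h2x
        rw [h1x, h2x]
        have heq : (ν[(⋃ i, f i).indicator (fun _ => (1:ℝ))|F]) x
            - (ν[(⋃ i, f i).indicator (fun _ => (1:ℝ))|K]) x
            = ((ν[(⋃ i, f i).indicator (fun _ => (1:ℝ))|F]) x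
              - (ν[(T N).indicator (fun _ => (1:ℝ))|F]) x)
            - ((ν[(⋃ i, f i).indicator (fun _ => (1:ℝ))|K]) x
              - (ν[(T N).indicator (fun _ => (1:ℝ))|K]) x) := by
          rw [h3x]; ring
        rw [heq]
        exact abs_sub _ _
      calc ∫ x, |(ν[(⋃ i, f i).indicator (fun _ => (1:ℝ))|F]) x
          - (ν[(⋃ i, f i).indicator (fun _ => (1:ℝ))|K]) x| ∂ν
          ≤ ∫ x, (|(ν[(⋃ i, f i).indicator (fun _ => (1:ℝ))
              - (T N).indicator (fun _ => (1:ℝ))|F]) x|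
            + |(ν[(⋃ i, f i).indicator (fun _ => (1:ℝ))
              - (T N).indicator (fun _ => (1:ℝ))|K]) x|) ∂ν :=
            integral_mono_ae hDint.abs (integrable_condExp.abs.add integrable_condExp.abs) hae
        _ = _ + _ := integral_add integrable_condExp.abs integrable_condExp.abs
        _ ≤ 2 * (ν ((⋃ i, f i) \ T N)).toReal := by linarith
    have htend : Tendsto (fun N => 2 * (ν ((⋃ i, f i) \ T N)).toReal) atTop (nhds 0) := by
      have hanti : Antitone fun N => (⋃ i, f i) \ T N := fun a b hab =>
        Set.diff_subset_diff_right (hTmono hab)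
      have hiInter : ⋂ N, ((⋃ i, f i) \ T N) = ∅ := by
        apply Set.eq_empty_iff_forall_notMem.mpr
        intro x hx
        have hx0 := Set.mem_iInter.mp hx 0
        obtain ⟨i, hxi⟩ := Set.mem_iUnion.mp hx0.1
        have hxi1 := Set.mem_iInter.mp hx (i + 1)
        exact hxi1.2 (Set.mem_biUnion (Finset.mem_range.mpr (Nat.lt_succ_self i)) hxi)
      have h1 : Tendsto (fun N => ν ((⋃ i, f i) \ T N)) atTop (nhds 0) := by
        have := tendsto_measure_iInter_atTop (μ := ν)
          (fun N => ((hSm0.diff (hTm0 N)).nullMeasurableSet))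
          hanti ⟨0, measure_ne_top ν _⟩
        rwa [hiInter, measure_empty] at this
      have h2 : Tendsto (fun N => (ν ((⋃ i, f i) \ T N)).toReal) atTop (nhds 0) := by
        have := (ENNReal.tendsto_toReal (show (0:ENNReal) ≠ ⊤ by simp)).comp h1
        simpa [Function.comp_def] using this
      simpa using h2.const_mul 2
    have hle := ge_of_tendsto' htend hmain
    have hzero : ∫ x, |(ν[(⋃ i, f i).indicator (fun _ => (1:ℝ))|F]) x
        - (ν[(⋃ i, f i).indicator (fun _ => (1:ℝ))|K]) x| ∂ν = 0 :=
      le_antisymm hle (integral_nonneg fun x => abs_nonneg _)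
    have hae0 := (integral_eq_zero_iff_of_nonneg (fun x => abs_nonneg _) hDint.abs).mp hzero
    filter_upwards [hae0] with x hx
    simp only [Pi.zero_apply] at hx
    have := abs_eq_zero.mp hx
    linarith

end StepP
section Step4

variable {X : Type*} {F C K : MeasurableSpace X} [m0 : MeasurableSpace X] {ν : Measure X}
  [IsProbabilityMeasure ν]

lemma int_bdd_mul {w φ : X → ℝ} (hw : AEStronglyMeasurable w ν)
    (hwb : ∀ᵐ x ∂ν, ‖w x‖ ≤ 1) (hφ : Integrable φ ν) : Integrable (w * φ) ν :=
  hφ.bdd_mul hw hwb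

lemma int_mul_bdd {w φ : X → ℝ} (hw : AEStronglyMeasurable w ν)
    (hwb : ∀ᵐ x ∂ν, ‖w x‖ ≤ 1) (hφ : Integrable φ ν) : Integrable (φ * w) ν :=
  (int_bdd_mul hw hwb hφ).congr (Filter.Eventually.of_forall fun x => mul_comm _ _)

lemma integral_mul_comm (a b : X → ℝ) {ν : Measure X} :
    ∫ x, a x * b x ∂ν = ∫ x, b x * a x ∂ν :=
  integral_congr_ae (Filter.Eventually.of_forall fun x => mul_comm _ _)

lemma indicator_norm_le_one (s : Set X) (x : X) :
    ‖s.indicator (fun _ => (1:ℝ)) x‖ ≤ 1 := by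
  by_cases hx : x ∈ s <;> simp [Set.indicator_apply, hx]

/-- Dual claim: for `B ∈ F`, the conditional expectations of its indicator w.r.t.
`J ⊔ C` and `K` agree a.e. -/
lemma condexp_indicator_F_to_join
    {U : ℤ × ℤ → X → X}
    (hU0 : U 0 = id) (hUadd : ∀ p q : ℤ × ℤ, U (p + q) = U p ∘ U q)
    (hUmp : ∀ p, MeasurePreserving (U p) ν ν)
    (hF : F ≤ m0)
    (hFinv : ∀ (p : ℤ × ℤ) (s : Set X), MeasurableSet[F] s → MeasurableSet[F] (U p ⁻¹' s))
    (hC : C ≤ F)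
    (hKdef : K = F ⊓ (invariantSets m0 U ⊔ C))
    {B : Set X} (hB : MeasurableSet[F] B) :
    ν[B.indicator (fun _ => (1:ℝ))|invariantSets m0 U ⊔ C]
      =ᵐ[ν] ν[B.indicator (fun _ => (1:ℝ))|K] := by
  have hG : invariantSets m0 U ⊔ C ≤ m0 := sup_le (fun s hs => hs.1) (hC.trans hF)
  have hKF : K ≤ F := hKdef ▸ inf_le_left
  have hKG : K ≤ invariantSets m0 U ⊔ C := hKdef ▸ inf_le_right
  have hK : K ≤ m0 := hKF.trans hF
  have hBm0 : MeasurableSet[m0] B := hF B hB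
  have hiB_int : Integrable (B.indicator fun _ => (1:ℝ)) ν :=
    (integrable_const 1).indicator hBm0
  have hiB_aesm : AEStronglyMeasurable (B.indicator fun _ => (1:ℝ)) ν :=
    ((stronglyMeasurable_const.indicator hBm0)).aestronglyMeasurable
  symm
  refine ae_eq_condExp_of_forall_setIntegral_eq hG hiB_int
    (fun s _ _ => integrable_condExp.integrableOn) (fun s hs _ => ?_)
    ⟨ν[B.indicator (fun _ => (1:ℝ))|K], stronglyMeasurable_condExp.mono hKG,
      EventuallyEq.rfl⟩
  -- ∫ x in s, ν[iB|K] = ∫ x in s, iB  for s ∈ J ⊔ C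
  have hsm0 : MeasurableSet[m0] s := hG s hs
  have his_int : Integrable (s.indicator fun _ => (1:ℝ)) ν :=
    (integrable_const 1).indicator hsm0
  have his_aesm : AEStronglyMeasurable (s.indicator fun _ => (1:ℝ)) ν :=
    ((stronglyMeasurable_const.indicator hsm0)).aestronglyMeasurable
  have his_bdd : ∀ᵐ x ∂ν, ‖s.indicator (fun _ => (1:ℝ)) x‖ ≤ 1 :=
    Filter.Eventually.of_forall (indicator_norm_le_one s)
  have hiB_bdd : ∀ᵐ x ∂ν, ‖B.indicator (fun _ => (1:ℝ)) x‖ ≤ 1 :=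
    Filter.Eventually.of_forall (indicator_norm_le_one B)
  have hEBK_aesm : AEStronglyMeasurable (ν[B.indicator (fun _ => (1:ℝ))|K]) ν :=
    (stronglyMeasurable_condExp.mono hK).aestronglyMeasurable
  have hEBK_bdd := condexp_indicator_norm_le (ν := ν) hK hBm0
  have hEsK_aesm : AEStronglyMeasurable (ν[s.indicator (fun _ => (1:ℝ))|K]) ν :=
    (stronglyMeasurable_condExp.mono hK).aestronglyMeasurable
  have hEsK_bdd := condexp_indicator_norm_le (ν := ν) hK hsm0
  have hEsF_aesm : AEStronglyMeasurable (ν[s.indicator (fun _ => (1:ℝ))|F]) ν :=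
    (stronglyMeasurable_condExp.mono hF).aestronglyMeasurable
  have hEsF_bdd := condexp_indicator_norm_le (ν := ν) hF hsm0
  have hset : ∀ g : X → ℝ, ∫ x in s, g x ∂ν
      = ∫ x, s.indicator (fun _ => (1:ℝ)) x * g x ∂ν := by
    intro g
    rw [← integral_indicator hsm0]
    congr 1
    funext x
    by_cases hx : x ∈ s <;> simp [Set.indicator_apply, hx]
  have hP : ν[s.indicator (fun _ => (1:ℝ))|F] =ᵐ[ν] ν[s.indicator (fun _ => (1:ℝ))|K] :=
    condexp_indicator_join hU0 hUadd hUmp hF hFinv hC hKdef s hs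
  calc ∫ x in s, (ν[B.indicator (fun _ => (1:ℝ))|K]) x ∂ν
      = ∫ x, s.indicator (fun _ => (1:ℝ)) x * (ν[B.indicator (fun _ => (1:ℝ))|K]) x ∂ν :=
        hset _
    _ = ∫ x, (ν[B.indicator (fun _ => (1:ℝ))|K]) x * s.indicator (fun _ => (1:ℝ)) x ∂ν :=
        integral_mul_comm _ _
    _ = ∫ x, (ν[B.indicator (fun _ => (1:ℝ))|K]) x * (ν[s.indicator (fun _ => (1:ℝ))|K]) x ∂ν :=
        (integral_mul_condexp hK stronglyMeasurable_condExp
          (int_bdd_mul hEBK_aesm hEBK_bdd his_int) his_int).symm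
    _ = ∫ x, (ν[s.indicator (fun _ => (1:ℝ))|K]) x * (ν[B.indicator (fun _ => (1:ℝ))|K]) x ∂ν :=
        integral_mul_comm _ _
    _ = ∫ x, (ν[s.indicator (fun _ => (1:ℝ))|K]) x * B.indicator (fun _ => (1:ℝ)) x ∂ν :=
        integral_mul_condexp hK stronglyMeasurable_condExp
          (int_bdd_mul hEsK_aesm hEsK_bdd hiB_int) hiB_int
    _ = ∫ x, (ν[s.indicator (fun _ => (1:ℝ))|F]) x * B.indicator (fun _ => (1:ℝ)) x ∂ν :=
        integral_congr_ae (hP.symm.mul EventuallyEq.rfl)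
    _ = ∫ x, B.indicator (fun _ => (1:ℝ)) x * (ν[s.indicator (fun _ => (1:ℝ))|F]) x ∂ν :=
        integral_mul_comm _ _
    _ = ∫ x, B.indicator (fun _ => (1:ℝ)) x * s.indicator (fun _ => (1:ℝ)) x ∂ν :=
        integral_mul_condexp hF (stronglyMeasurable_const.indicator hB)
          (int_bdd_mul hiB_aesm hiB_bdd his_int) his_int
    _ = ∫ x, s.indicator (fun _ => (1:ℝ)) x * B.indicator (fun _ => (1:ℝ)) x ∂ν :=
        integral_mul_comm _ _
    _ = ∫ x in s, B.indicator (fun _ => (1:ℝ)) x ∂ν := (hset _).symm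

end Step4
section Main

variable {X : Type*} {F C K : MeasurableSpace X} [m0 : MeasurableSpace X] {ν : Measure X}
  [IsProbabilityMeasure ν]

lemma condexp_commute_invariant_join_aux
    {U : ℤ × ℤ → X → X}
    (hU0 : U 0 = id) (hUadd : ∀ p q : ℤ × ℤ, U (p + q) = U p ∘ U q)
    (hUmp : ∀ p, MeasurePreserving (U p) ν ν)
    (hF : F ≤ m0)
    (hFinv : ∀ (p : ℤ × ℤ) (s : Set X), MeasurableSet[F] s → MeasurableSet[F] (U p ⁻¹' s))
    (hC : C ≤ F)
    (hKdef : K = F ⊓ (invariantSets m0 U ⊔ C))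
    {f : X → ℝ} (hfi : Integrable f ν) :
    ν[ν[f|invariantSets m0 U ⊔ C]|F] =ᵐ[ν] ν[ν[f|F]|invariantSets m0 U ⊔ C] ∧
    ν[ν[f|F]|invariantSets m0 U ⊔ C] =ᵐ[ν] ν[f|K] := by
  have hG : invariantSets m0 U ⊔ C ≤ m0 := sup_le (fun s hs => hs.1) (hC.trans hF)
  have hKF : K ≤ F := hKdef ▸ inf_le_left
  have hKG : K ≤ invariantSets m0 U ⊔ C := hKdef ▸ inf_le_right
  have hK : K ≤ m0 := hKF.trans hF
  have hEfK_smF : StronglyMeasurable[F] (ν[f|K]) := stronglyMeasurable_condExp.mono hKF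
  have hEfK_smG : StronglyMeasurable[invariantSets m0 U ⊔ C] (ν[f|K]) :=
    stronglyMeasurable_condExp.mono hKG
  -- X2 : ν[ν[f|F]|G] =ᵐ ν[f|K]
  have X2 : ν[ν[f|F]|invariantSets m0 U ⊔ C] =ᵐ[ν] ν[f|K] := by
    refine ae_eq_of_forall_setIntegral_eq_of_sigmaFinite' hG
      (fun s _ _ => integrable_condExp.integrableOn)
      (fun s _ _ => integrable_condExp.integrableOn)
      (fun s hs _ => ?_)
      stronglyMeasurable_condExp.aestronglyMeasurable
      ⟨ν[f|K], hEfK_smG, EventuallyEq.rfl⟩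
    have hsm0 : MeasurableSet[m0] s := hG s hs
    have his_int : Integrable (s.indicator fun _ => (1:ℝ)) ν :=
      (integrable_const 1).indicator hsm0
    have his_aesm : AEStronglyMeasurable (s.indicator fun _ => (1:ℝ)) ν :=
      ((stronglyMeasurable_const.indicator hsm0)).aestronglyMeasurable
    have his_bdd : ∀ᵐ x ∂ν, ‖s.indicator (fun _ => (1:ℝ)) x‖ ≤ 1 :=
      Filter.Eventually.of_forall (indicator_norm_le_one s)
    have hEsK_aesm : AEStronglyMeasurable (ν[s.indicator (fun _ => (1:ℝ))|K]) ν :=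
      (stronglyMeasurable_condExp.mono hK).aestronglyMeasurable
    have hEsK_bdd := condexp_indicator_norm_le (ν := ν) hK hsm0
    have hset : ∀ g : X → ℝ, ∫ x in s, g x ∂ν
        = ∫ x, s.indicator (fun _ => (1:ℝ)) x * g x ∂ν := by
      intro g
      rw [← integral_indicator hsm0]
      congr 1
      funext x
      by_cases hx : x ∈ s <;> simp [Set.indicator_apply, hx]
    have hP : ν[s.indicator (fun _ => (1:ℝ))|F] =ᵐ[ν] ν[s.indicator (fun _ => (1:ℝ))|K] :=
      condexp_indicator_join hU0 hUadd hUmp hF hFinv hC hKdef s hs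
    calc ∫ x in s, (ν[ν[f|F]|invariantSets m0 U ⊔ C]) x ∂ν
        = ∫ x in s, (ν[f|F]) x ∂ν := setIntegral_condExp hG integrable_condExp hs
      _ = ∫ x, s.indicator (fun _ => (1:ℝ)) x * (ν[f|F]) x ∂ν := hset _
      _ = ∫ x, (ν[f|F]) x * s.indicator (fun _ => (1:ℝ)) x ∂ν := integral_mul_comm _ _
      _ = ∫ x, (ν[f|F]) x * (ν[s.indicator (fun _ => (1:ℝ))|F]) x ∂ν :=
          (integral_mul_condexp hF stronglyMeasurable_condExp
            (int_mul_bdd his_aesm his_bdd integrable_condExp) his_int).symm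
      _ = ∫ x, (ν[f|F]) x * (ν[s.indicator (fun _ => (1:ℝ))|K]) x ∂ν :=
          integral_congr_ae (EventuallyEq.mul EventuallyEq.rfl hP)
      _ = ∫ x, (ν[s.indicator (fun _ => (1:ℝ))|K]) x * (ν[f|F]) x ∂ν := integral_mul_comm _ _
      _ = ∫ x, (ν[s.indicator (fun _ => (1:ℝ))|K]) x * f x ∂ν :=
          integral_mul_condexp hF (stronglyMeasurable_condExp.mono hKF)
            (int_bdd_mul hEsK_aesm hEsK_bdd hfi) hfi
      _ = ∫ x, (ν[s.indicator (fun _ => (1:ℝ))|K]) x * (ν[f|K]) x ∂ν :=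
          (integral_mul_condexp hK stronglyMeasurable_condExp
            (int_bdd_mul hEsK_aesm hEsK_bdd hfi) hfi).symm
      _ = ∫ x, (ν[f|K]) x * (ν[s.indicator (fun _ => (1:ℝ))|K]) x ∂ν := integral_mul_comm _ _
      _ = ∫ x, (ν[f|K]) x * s.indicator (fun _ => (1:ℝ)) x ∂ν :=
          integral_mul_condexp hK stronglyMeasurable_condExp
            (int_mul_bdd his_aesm his_bdd integrable_condExp) his_int
      _ = ∫ x, s.indicator (fun _ => (1:ℝ)) x * (ν[f|K]) x ∂ν := integral_mul_comm _ _
      _ = ∫ x in s, (ν[f|K]) x ∂ν := (hset _).symm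
  -- X1 : ν[ν[f|G]|F] =ᵐ ν[f|K]
  have X1 : ν[ν[f|invariantSets m0 U ⊔ C]|F] =ᵐ[ν] ν[f|K] := by
    refine ae_eq_of_forall_setIntegral_eq_of_sigmaFinite' hF
      (fun s _ _ => integrable_condExp.integrableOn)
      (fun s _ _ => integrable_condExp.integrableOn)
      (fun B hB _ => ?_)
      stronglyMeasurable_condExp.aestronglyMeasurable
      ⟨ν[f|K], hEfK_smF, EventuallyEq.rfl⟩
    have hBm0 : MeasurableSet[m0] B := hF B hB
    have hiB_int : Integrable (B.indicator fun _ => (1:ℝ)) ν :=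
      (integrable_const 1).indicator hBm0
    have hiB_aesm : AEStronglyMeasurable (B.indicator fun _ => (1:ℝ)) ν :=
      ((stronglyMeasurable_const.indicator hBm0)).aestronglyMeasurable
    have hiB_bdd : ∀ᵐ x ∂ν, ‖B.indicator (fun _ => (1:ℝ)) x‖ ≤ 1 :=
      Filter.Eventually.of_forall (indicator_norm_le_one B)
    have hEBK_aesm : AEStronglyMeasurable (ν[B.indicator (fun _ => (1:ℝ))|K]) ν :=
      (stronglyMeasurable_condExp.mono hK).aestronglyMeasurable
    have hEBK_bdd := condexp_indicator_norm_le (ν := ν) hK hBm0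
    have hset : ∀ g : X → ℝ, ∫ x in B, g x ∂ν
        = ∫ x, B.indicator (fun _ => (1:ℝ)) x * g x ∂ν := by
      intro g
      rw [← integral_indicator hBm0]
      congr 1
      funext x
      by_cases hx : x ∈ B <;> simp [Set.indicator_apply, hx]
    have hP' : ν[B.indicator (fun _ => (1:ℝ))|invariantSets m0 U ⊔ C]
        =ᵐ[ν] ν[B.indicator (fun _ => (1:ℝ))|K] :=
      condexp_indicator_F_to_join hU0 hUadd hUmp hF hFinv hC hKdef hB
    calc ∫ x in B, (ν[ν[f|invariantSets m0 U ⊔ C]|F]) x ∂ν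
        = ∫ x in B, (ν[f|invariantSets m0 U ⊔ C]) x ∂ν :=
          setIntegral_condExp hF integrable_condExp hB
      _ = ∫ x, B.indicator (fun _ => (1:ℝ)) x * (ν[f|invariantSets m0 U ⊔ C]) x ∂ν := hset _
      _ = ∫ x, (ν[f|invariantSets m0 U ⊔ C]) x * B.indicator (fun _ => (1:ℝ)) x ∂ν :=
          integral_mul_comm _ _
      _ = ∫ x, (ν[f|invariantSets m0 U ⊔ C]) x
            * (ν[B.indicator (fun _ => (1:ℝ))|invariantSets m0 U ⊔ C]) x ∂ν :=
          (integral_mul_condexp hG stronglyMeasurable_condExp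
            (int_mul_bdd hiB_aesm hiB_bdd integrable_condExp) hiB_int).symm
      _ = ∫ x, (ν[f|invariantSets m0 U ⊔ C]) x * (ν[B.indicator (fun _ => (1:ℝ))|K]) x ∂ν :=
          integral_congr_ae (EventuallyEq.mul EventuallyEq.rfl hP')
      _ = ∫ x, (ν[B.indicator (fun _ => (1:ℝ))|K]) x * (ν[f|invariantSets m0 U ⊔ C]) x ∂ν :=
          integral_mul_comm _ _
      _ = ∫ x, (ν[B.indicator (fun _ => (1:ℝ))|K]) x * f x ∂ν :=
          integral_mul_condexp hG (stronglyMeasurable_condExp.mono hKG)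
            (int_bdd_mul hEBK_aesm hEBK_bdd hfi) hfi
      _ = ∫ x, (ν[B.indicator (fun _ => (1:ℝ))|K]) x * (ν[f|K]) x ∂ν :=
          (integral_mul_condexp hK stronglyMeasurable_condExp
            (int_bdd_mul hEBK_aesm hEBK_bdd hfi) hfi).symm
      _ = ∫ x, (ν[f|K]) x * (ν[B.indicator (fun _ => (1:ℝ))|K]) x ∂ν := integral_mul_comm _ _
      _ = ∫ x, (ν[f|K]) x * B.indicator (fun _ => (1:ℝ)) x ∂ν :=
          integral_mul_condexp hK stronglyMeasurable_condExp
            (int_mul_bdd hiB_aesm hiB_bdd integrable_condExp) hiB_int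
      _ = ∫ x, B.indicator (fun _ => (1:ℝ)) x * (ν[f|K]) x ∂ν := integral_mul_comm _ _
      _ = ∫ x in B, (ν[f|K]) x ∂ν := (hset _).symm
  exact ⟨X1.trans X2.symm, X2⟩

end Main

/-- **Commutation of conditional expectations.**
Let `U` be a measure-preserving `ℤ²`-action on a probability space `(X, B, ν)`, `J` the
σ-algebra of `U`-invariant sets, `F` a `U`-invariant sub-σ-algebra of `B` and `C` a
sub-σ-algebra of `F`.  Then for all `f ∈ L²(B)`,
`E[E[f | J ∨ C] | F] = E[E[f | F] | J ∨ C] = E[f | F ∩ (J ∨ C)]` ν-a.s. -/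
theorem condexp_commute_invariant_join
    {X : Type*} [m0 : MeasurableSpace X] (ν : Measure X) [IsProbabilityMeasure ν]
    (U : ℤ × ℤ → X → X)
    (hU0 : U 0 = id)
    (hUadd : ∀ p q : ℤ × ℤ, U (p + q) = U p ∘ U q)
    (hUmp : ∀ p, MeasurePreserving (U p) ν ν)
    (F : MeasurableSpace X) (hF : F ≤ m0)
    (hFinv : ∀ (p : ℤ × ℤ) (s : Set X), MeasurableSet[F] s → MeasurableSet[F] (U p ⁻¹' s))
    (C : MeasurableSpace X) (hC : C ≤ F)
    (f : X → ℝ) (hf2 : MemLp f 2 ν) :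
    ν[ν[f|invariantSets m0 U ⊔ C]|F] =ᵐ[ν] ν[ν[f|F]|invariantSets m0 U ⊔ C] ∧
    ν[ν[f|F]|invariantSets m0 U ⊔ C] =ᵐ[ν] ν[f|F ⊓ (invariantSets m0 U ⊔ C)] :=
  condexp_commute_invariant_join_aux (m0 := m0) (ν := ν) (F := F) (C := C)
    hU0 hUadd hUmp hF hFinv hC rfl (MemLp.integrable (μ := ν) one_le_two hf2)
end

section
/- Let S be a measure-preserving invertible transformation of a probability space (X,B,ν), let F₀ be a sub-σ-algebra of B with S^{-1}F₀ ⊇ F₀, set F_n = S^{-n}F₀ (an increasing filtration), F_∞ = ∨_{n∈ℤ} F_n and F_{-∞} = ∩_{n∈ℤ} F_n, and let K denote the σ-algebra of S-invariant sets. Then K ∩ F_∞ = K ∩ F_{-∞} modulo ν-null sets. In particular, if K ⊆ F_∞ then K ⊆ F_{-∞}. -/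
open MeasureTheory
open scoped symmDiff

open MeasureTheory MeasurableSpace Filter ENNReal
open scoped symmDiff

section Aux

variable {X : Type*}

/-- Combining a sequence of approximations with null symmetric difference. -/
lemma aux_symmDiff_iInter_iUnion_null [MeasurableSpace X] (ν : Measure X) (s : Set X)
    (g : ℕ → Set X) (h : ∀ k, ν (s ∆ g k) = 0) :
    ν (s ∆ ⋂ i, ⋃ k, g (i + k)) = 0 := by
  refine measure_mono_null ?_ (measure_iUnion_null (fun k => h k))
  intro x hx
  rcases Set.mem_symmDiff.1 hx with ⟨hxs, hxt⟩ | ⟨hxt, hxs⟩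
  · simp only [Set.mem_iInter, Set.mem_iUnion, not_forall, not_exists] at hxt
    obtain ⟨i, hi⟩ := hxt
    exact Set.mem_iUnion.2 ⟨i, Set.mem_symmDiff.2 (Or.inl ⟨hxs, by simpa using hi 0⟩)⟩
  · obtain ⟨k, hk⟩ := Set.mem_iUnion.1 (Set.mem_iInter.1 hxt 0)
    exact Set.mem_iUnion.2 ⟨k, Set.mem_symmDiff.2 (Or.inr ⟨by simpa using hk, hxs⟩)⟩

lemma aux_measurableSet_iInter_iUnion {m : MeasurableSpace X} (g : ℕ → Set X)
    (m₀ : ℕ) (h : ∀ k, m₀ ≤ k → MeasurableSet[m] (g k)) :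
    MeasurableSet[m] (⋂ i, ⋃ k, g (i + k)) := by
  have heq : (⋂ i, ⋃ k, g (i + k)) = ⋂ i, ⋃ k, g (m₀ + i + k) := by
    apply Set.Subset.antisymm
    · intro x hx
      refine Set.mem_iInter.2 fun i => ?_
      exact Set.mem_iInter.1 hx (m₀ + i)
    · intro x hx
      refine Set.mem_iInter.2 fun i => ?_
      obtain ⟨k, hk⟩ := Set.mem_iUnion.1 (Set.mem_iInter.1 hx i)
      exact Set.mem_iUnion.2 ⟨m₀ + k, by rwa [show i + (m₀ + k) = m₀ + i + k by omega]⟩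
  rw [heq]
  exact MeasurableSet.iInter fun i => MeasurableSet.iUnion fun k => h _ (by omega)

lemma aux_preimage_iInter_iUnion_shift (S : X → X) (g : ℕ → Set X)
    (hg : ∀ k, S ⁻¹' g k = g (k + 1)) :
    S ⁻¹' (⋂ i, ⋃ k, g (i + k)) = ⋂ i, ⋃ k, g (i + k) := by
  ext x
  simp only [Set.mem_preimage, Set.mem_iInter, Set.mem_iUnion]
  constructor
  · intro h i
    obtain ⟨k, hk⟩ := h i
    have hx : x ∈ S ⁻¹' g (i + k) := hk
    rw [hg] at hx
    exact ⟨k + 1, by rwa [show i + (k + 1) = i + k + 1 by omega]⟩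
  · intro h i
    obtain ⟨k, hk⟩ := h (i + 1)
    have hx : x ∈ g (i + k + 1) := by rwa [show i + 1 + k = i + k + 1 by omega] at hk
    rw [← hg] at hx
    exact ⟨k, hx⟩

/-- From arbitrarily good approximations in a σ-algebra, get an exact (null symm-diff)
approximation. -/
lemma aux_exists_null_symmDiff [MeasurableSpace X] (ν : Measure X)
    (m : MeasurableSpace X) (s : Set X)
    (h : ∀ ε : ℝ≥0∞, ε ≠ 0 → ∃ t, MeasurableSet[m] t ∧ ν (s ∆ t) < ε) :
    ∃ t, MeasurableSet[m] t ∧ ν (s ∆ t) = 0 := by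
  have h2 : ∀ k : ℕ, ∃ t, MeasurableSet[m] t ∧ ν (s ∆ t) < 2⁻¹ ^ k := fun k =>
    h _ (by simp)
  choose t ht hlt using h2
  refine ⟨limsup t atTop, ?_, ?_⟩
  · rw [limsup_eq_iInf_iSup_of_nat]
    exact MeasurableSet.iInter fun i => MeasurableSet.iUnion fun k =>
      MeasurableSet.iUnion fun _ => ht k
  · have hsum : ∑' k, ν (s ∆ t k) ≠ ∞ := by
      refine ne_top_of_le_ne_top ?_ (ENNReal.tsum_le_tsum fun k => (hlt k).le)
      rw [ENNReal.tsum_geometric]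
      simp
    refine measure_mono_null ?_ (measure_limsup_atTop_eq_zero hsum)
    intro x hx
    rw [Filter.mem_limsup_iff_frequently_mem]
    rcases Set.mem_symmDiff.1 hx with ⟨hxs, hxt⟩ | ⟨hxt, hxs⟩
    · rw [Filter.mem_limsup_iff_frequently_mem, Filter.not_frequently] at hxt
      exact hxt.mono (fun k hk => Set.mem_symmDiff.2 (Or.inl ⟨hxs, hk⟩)) |>.frequently
    · exact (Filter.mem_limsup_iff_frequently_mem.1 hxt).mono
        (fun k hk => Set.mem_symmDiff.2 (Or.inr ⟨hk, hxs⟩))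

/-- Approximation of sets in a supremum of a monotone family of σ-algebras. -/
lemma aux_approx_iSup [m0 : MeasurableSpace X] (ν : Measure X) [IsFiniteMeasure ν]
    (F : ℤ → MeasurableSpace X) (hFle : ∀ n, F n ≤ m0) (hFmono : Monotone F)
    (s : Set X) (hs : MeasurableSet[⨆ n, F n] s) (ε : ℝ≥0∞) (hε : ε ≠ 0) :
    ∃ n t, MeasurableSet[F n] t ∧ ν (s ∆ t) < ε := by
  have hm1 : (⨆ n, F n) ≤ m0 := iSup_le hFle
  set μ1 : @Measure X (⨆ n, F n) := ν.trim hm1 with hμ1def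
  haveI : IsFiniteMeasure μ1 := isFiniteMeasure_trim hm1
  set 𝒜 : Set (Set X) := ⋃ n, {u | MeasurableSet[F n] u} with h𝒜def
  have h𝒜 : IsSetAlgebra 𝒜 := by
    constructor
    · refine Set.mem_iUnion.2 ⟨0, ?_⟩
      show MeasurableSet[F 0] ∅
      exact (F 0).measurableSet_empty
    · rintro u hu
      obtain ⟨n, hn⟩ := Set.mem_iUnion.1 hu
      refine Set.mem_iUnion.2 ⟨n, ?_⟩
      show MeasurableSet[F n] uᶜ
      exact (F n).measurableSet_compl u hn
    · rintro u v hu hv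
      obtain ⟨n, hn⟩ := Set.mem_iUnion.1 hu
      obtain ⟨p, hp⟩ := Set.mem_iUnion.1 hv
      refine Set.mem_iUnion.2 ⟨max n p, ?_⟩
      show MeasurableSet[F (max n p)] (u ∪ v)
      exact MeasurableSet.union (hFmono (le_max_left n p) _ hn) (hFmono (le_max_right n p) _ hp)
  have hgen : (⨆ n, F n) = generateFrom 𝒜 := (generateFrom_iUnion_measurableSet F).symm
  have hdense := Measure.MeasureDense.of_generateFrom_isSetAlgebra_finite
    (m := ⨆ n, F n) (μ := μ1) h𝒜 hgen
  obtain ⟨ε', hε'pos, hε'le⟩ : ∃ ε' : ℝ, 0 < ε' ∧ ENNReal.ofReal ε' ≤ ε := by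
    rcases eq_or_ne ε ∞ with rfl | hne
    · exact ⟨1, one_pos, le_top⟩
    · exact ⟨ε.toReal, ENNReal.toReal_pos hε hne, by rw [ENNReal.ofReal_toReal hne]⟩
  have hfin : μ1 s ≠ ∞ := measure_ne_top μ1 s
  obtain ⟨u, hu𝒜, hu⟩ := Measure.MeasureDense.approx (m := ⨆ n, F n) hdense s hs hfin ε' hε'pos
  obtain ⟨n, hn⟩ := Set.mem_iUnion.1 hu𝒜
  refine ⟨n, u, hn, ?_⟩
  have hun : MeasurableSet[⨆ n, F n] u := (le_iSup F n) _ hn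
  have hmeas : MeasurableSet[⨆ n, F n] (s ∆ u) := by
    show MeasurableSet[⨆ n, F n] (s ∆ u)
    exact MeasurableSet.symmDiff hs hun
  have : μ1 (s ∆ u) = ν (s ∆ u) := trim_measurableSet_eq hm1 hmeas
  calc ν (s ∆ u) = μ1 (s ∆ u) := this.symm
  _ < ENNReal.ofReal ε' := hu
  _ ≤ ε := hε'le

end Aux

lemma aux_core {X : Type*} [m0 : MeasurableSpace X] (ν : Measure X) [IsProbabilityMeasure ν]
    (S : X → X) (hS : MeasurePreserving S ν ν)
    (F : ℤ → MeasurableSpace X) (hFle : ∀ n, F n ≤ m0)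
    (hFsucc : ∀ n, F (n + 1) = (F n).comap S) (hFmono : Monotone F)
    (s : Set X) (hsm : MeasurableSet[m0] s) (hsinv : S ⁻¹' s = s)
    (hssup : MeasurableSet[⨆ n, F n] s) :
    ∃ t : Set X, MeasurableSet[m0] t ∧ S ⁻¹' t = t ∧ MeasurableSet[⨅ n, F n] t ∧
      ν (s ∆ t) = 0 := by
  -- one-step descent of approximations
  have hdown : ∀ n : ℤ, ∀ t : Set X, MeasurableSet[F (n + 1)] t →
      ∃ u, MeasurableSet[F n] u ∧ ν (s ∆ u) = ν (s ∆ t) := by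
    intro n t ht
    rw [hFsucc n] at ht
    obtain ⟨u, hu, hut⟩ := MeasurableSpace.measurableSet_comap.1 ht
    refine ⟨u, hu, ?_⟩
    have hum : MeasurableSet[m0] u := hFle n u hu
    have hm : NullMeasurableSet (s ∆ u) ν := (hsm.symmDiff hum).nullMeasurableSet
    calc ν (s ∆ u) = ν (S ⁻¹' (s ∆ u)) := (hS.measure_preimage hm).symm
      _ = ν (s ∆ t) := by rw [Set.preimage_symmDiff, hsinv, hut]
  -- approximations at every level
  have hall : ∀ ε : ℝ≥0∞, ε ≠ 0 → ∀ n : ℤ, ∃ t, MeasurableSet[F n] t ∧ ν (s ∆ t) < ε := by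
    intro ε hε n
    obtain ⟨n₀, t₀, ht₀, hlt₀⟩ := aux_approx_iSup ν F hFle hFmono s hssup ε hε
    rcases le_total n₀ n with h | h
    · exact ⟨t₀, hFmono h _ ht₀, hlt₀⟩
    · have key : ∀ k : ℕ, ∃ t, MeasurableSet[F (n₀ - k)] t ∧ ν (s ∆ t) < ε := by
        intro k
        induction k with
        | zero => exact ⟨t₀, by rw [Nat.cast_zero, sub_zero]; exact ht₀, hlt₀⟩
        | succ k ih =>
          obtain ⟨u, hu, hlt'⟩ := ih
          have hu' : MeasurableSet[F ((n₀ - ((k : ℕ) + 1 : ℤ)) + 1)] u := by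
            rwa [show (n₀ - ((k : ℕ) + 1 : ℤ) + 1 : ℤ) = n₀ - (k : ℕ) by ring]
          obtain ⟨v, hv, hveq⟩ := hdown _ u hu'
          refine ⟨v, by rwa [show ((k : ℕ) + 1 : ℤ) = ((k + 1 : ℕ) : ℤ) by push_cast; ring] at hv,
            by rw [hveq]; exact hlt'⟩
      obtain ⟨t, ht, hlt⟩ := key (n₀ - n).toNat
      have heq : n₀ - ((n₀ - n).toNat : ℤ) = n := by omega
      rw [heq] at ht
      exact ⟨t, ht, hlt⟩
  -- exact (null) approximations at every level
  have hnull : ∀ n : ℤ, ∃ t, MeasurableSet[F n] t ∧ ν (s ∆ t) = 0 := fun n =>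
    aux_exists_null_symmDiff ν (F n) s (fun ε hε => hall ε hε n)
  choose w hw hwnull using hnull
  -- stage 1: a set in the intersection σ-algebra
  set g : ℕ → Set X := fun j => w (-(j : ℤ)) with hgdef
  set t' : Set X := ⋂ i : ℕ, ⋃ k : ℕ, g (i + k) with ht'def
  have ht'inf : ∀ n : ℤ, MeasurableSet[F n] t' := by
    intro n
    exact aux_measurableSet_iInter_iUnion g (-n).toNat
      (fun k hk => hFmono (show (-(k : ℤ)) ≤ n by omega) _ (hw _))
  have ht'null : ν (s ∆ t') = 0 :=
    aux_symmDiff_iInter_iUnion_null ν s g (fun k => hwnull _)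
  -- stage 2: an invariant version
  set g2 : ℕ → Set X := fun k => S^[k] ⁻¹' t' with hg2def
  have hg2succ : ∀ k, S ⁻¹' g2 k = g2 (k + 1) := by
    intro k
    show S ⁻¹' (S^[k] ⁻¹' t') = S^[k + 1] ⁻¹' t'
    rw [Function.iterate_succ, Set.preimage_comp]
  have hg2mem : ∀ k, ∀ n : ℤ, MeasurableSet[F n] (g2 k) := by
    intro k
    induction k with
    | zero =>
      intro n
      have : g2 0 = t' := by
        show S^[0] ⁻¹' t' = t'
        simp
      rw [this]; exact ht'inf n
    | succ k ih =>
      intro n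
      rw [← hg2succ k]
      have h1 : MeasurableSet[F (n - 1)] (g2 k) := ih (n - 1)
      have h2 : MeasurableSet[(F (n - 1)).comap S] (S ⁻¹' g2 k) :=
        MeasurableSpace.measurableSet_comap.2 ⟨g2 k, h1, rfl⟩
      rw [← hFsucc (n - 1)] at h2
      rwa [show (n - 1 + 1 : ℤ) = n by ring] at h2
  have hg2null : ∀ k, ν (s ∆ g2 k) = 0 := by
    intro k
    have hsiter : S^[k] ⁻¹' s = s := by
      induction k with
      | zero => simp
      | succ k ih => rw [Function.iterate_succ, Set.preimage_comp, ih, hsinv]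
    have hm : NullMeasurableSet (s ∆ t') ν :=
      (hsm.symmDiff (hFle 0 _ (ht'inf 0))).nullMeasurableSet
    calc ν (s ∆ g2 k) = ν (S^[k] ⁻¹' (s ∆ t')) := by
          show _ = ν (S^[k] ⁻¹' (s ∆ t'))
          rw [Set.preimage_symmDiff, hsiter]
      _ = ν (s ∆ t') := (hS.iterate k).measure_preimage hm
      _ = 0 := ht'null
  refine ⟨⋂ i, ⋃ k, g2 (i + k), ?_, ?_, ?_, ?_⟩
  · exact hFle 0 _ (aux_measurableSet_iInter_iUnion g2 0 (fun k _ => hg2mem k 0))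
  · exact aux_preimage_iInter_iUnion_shift S g2 hg2succ
  · rw [measurableSet_iInf]
    intro n
    exact aux_measurableSet_iInter_iUnion g2 0 (fun k _ => hg2mem k n)
  · exact aux_symmDiff_iInter_iUnion_null ν s g2 hg2null


/-- **Invariant sets and tail σ-algebras.**
Let `S` be an invertible measure-preserving transformation of a probability space
`(X, B, ν)`, let `F₀ ⊆ B` satisfy `S⁻¹F₀ ⊇ F₀`, and set `F n = S^{-n} F₀` (encoded by the
recurrence `F (n+1) = (F n).comap S` together with monotonicity).  Let `K` be the
σ-algebra of `S`-invariant (measurable) sets.  Then `K ⊓ F_∞ = K ⊓ F_{-∞}` modulo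
`ν`-null sets; in particular, if `K ≤ F_∞` then `K ≤ F_{-∞}` modulo `ν`-null sets. -/
theorem invariant_inter_tail_sigma_algebras
    {X : Type*} [m0 : MeasurableSpace X] (ν : Measure X) [IsProbabilityMeasure ν]
    (S S' : X → X) (hSS' : Function.LeftInverse S' S) (hS'S : Function.RightInverse S' S)
    (hS : MeasurePreserving S ν ν) (hS' : MeasurePreserving S' ν ν)
    (F : ℤ → MeasurableSpace X)
    (hFle : ∀ n, F n ≤ m0)
    (hFsucc : ∀ n, F (n + 1) = (F n).comap S)
    (hFmono : Monotone F) :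
    ((∀ s : Set X, MeasurableSet[invariantSets m0 (fun _ : Unit => S) ⊓ ⨆ n, F n] s →
        ∃ t : Set X, MeasurableSet[invariantSets m0 (fun _ : Unit => S) ⊓ ⨅ n, F n] t ∧
          ν (s ∆ t) = 0) ∧
      (∀ s : Set X, MeasurableSet[invariantSets m0 (fun _ : Unit => S) ⊓ ⨅ n, F n] s →
        ∃ t : Set X, MeasurableSet[invariantSets m0 (fun _ : Unit => S) ⊓ ⨆ n, F n] t ∧
          ν (s ∆ t) = 0)) ∧
    ((∀ s : Set X, MeasurableSet[invariantSets m0 (fun _ : Unit => S)] s →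
        MeasurableSet[⨆ n, F n] s) →
      ∀ s : Set X, MeasurableSet[invariantSets m0 (fun _ : Unit => S)] s →
        ∃ t : Set X, MeasurableSet[⨅ n, F n] t ∧ ν (s ∆ t) = 0) := by
  have hKdef : ∀ s : Set X, MeasurableSet[invariantSets m0 (fun _ : Unit => S)] s ↔
      MeasurableSet[m0] s ∧ S ⁻¹' s = s := by
    intro s
    constructor
    · intro h
      exact ⟨h.1, h.2 ()⟩
    · intro h
      exact ⟨h.1, fun _ => h.2⟩
  have main : ∀ s : Set X,
      MeasurableSet[invariantSets m0 (fun _ : Unit => S) ⊓ ⨆ n, F n] s →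
      ∃ t : Set X, MeasurableSet[invariantSets m0 (fun _ : Unit => S) ⊓ ⨅ n, F n] t ∧
        ν (s ∆ t) = 0 := by
    intro s hs
    obtain ⟨hK, hsup⟩ := MeasurableSpace.measurableSet_inf.1 hs
    obtain ⟨hsm, hsinv⟩ := (hKdef s).1 hK
    obtain ⟨t, htm, htinv, htinf, htnull⟩ :=
      aux_core ν S hS F hFle hFsucc hFmono s hsm hsinv hsup
    exact ⟨t, MeasurableSpace.measurableSet_inf.2 ⟨(hKdef t).2 ⟨htm, htinv⟩, htinf⟩, htnull⟩
  refine ⟨⟨main, ?_⟩, ?_⟩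
  · intro s hs
    obtain ⟨hK, hinf⟩ := MeasurableSpace.measurableSet_inf.1 hs
    refine ⟨s, MeasurableSpace.measurableSet_inf.2 ⟨hK, ?_⟩, by simp⟩
    exact (le_iSup F 0) _ (MeasurableSpace.measurableSet_iInf.1 hinf 0)
  · intro hKle s hsK
    obtain ⟨t, ht, htnull⟩ := main s
      (MeasurableSpace.measurableSet_inf.2 ⟨hsK, hKle s hsK⟩)
    exact ⟨t, (MeasurableSpace.measurableSet_inf.1 ht).2, htnull⟩
end

section
/- Let T be an ergodic measure-preserving ℤ²-action on (Ω,A,μ) with completely commuting invariant filtration (F_{i,j}), let I₁, I₂ be the σ-algebras of T_{1,0}-, respectively T_{0,1}-invariant sets and I = I₁ ∨ I₂, and let f be a square-integrable martingale difference adapted to (F_{i,j}). Write H = E[f|I] and H̄ = f − E[f|I], and suppose that the normalized partial sums (1/√(mn))Σ_{i=1}^m Σ_{j=1}^n f∘T_{i,j}, (1/√(mn))Σ Σ H∘T_{i,j} and (1/√(mn))Σ Σ H̄∘T_{i,j} converge in distribution, as min(m,n)→∞, to laws with characteristic functions φ₁(t)=E[exp(−t²η₁²/2)], φ₂(t)=E[exp(−t²η₂²/2)],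 φ₃(t)=E[exp(−t²η₃²/2)], where η_r² is the limit in distribution, as v→∞, of the conditional second moments E[((1/√v)Σ_{j=1}^v g∘T_{1,j})² | I₁] for g = f, H, H̄ respectively. If η₃² is almost surely constant, then φ₁(t) = φ₂(t)φ₃(t) for all t, i.e. the limit law for f is the convolution of the limit laws for E[f|I] and f−E[f|I]. -/
open MeasureTheory

/-- `f` is a martingale difference adapted to the `ℤ²`-indexed filtration `G`:
`f ∈ L²(μ)` is `G 0 0`-measurable and `E[f | G_{-1,∞}] = E[f | G_{∞,-1}] = 0`. -/
def IsMartingaleDifference2 {Ω : Type*} {mΩ : MeasurableSpace Ω} (μ : Measure Ω)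
    (G : ℤ → ℤ → MeasurableSpace Ω) (f : Ω → ℝ) : Prop :=
  MemLp f 2 μ ∧ AEStronglyMeasurable[G 0 0] f μ ∧
    μ[f|⨆ j : ℤ, G (-1) j] =ᵐ[μ] 0 ∧ μ[f|⨆ i : ℤ, G i (-1)] =ᵐ[μ] 0

section AuxBCF

/-- `exp (-(K⁺ · x⁺))`, as a bounded continuous function of `x`. -/
noncomputable def expBCF (K : ℝ) : BoundedContinuousFunction ℝ ℝ :=
  ⟨⟨fun x => Real.exp (-(max K 0 * max x 0)), by fun_prop⟩, by
    refine ⟨1, fun x y => ?_⟩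
    have hx : Real.exp (-(max K 0 * max x 0)) ∈ Set.Ioc (0:ℝ) 1 :=
      ⟨Real.exp_pos _, Real.exp_le_one_iff.2 (neg_nonpos.2 (mul_nonneg (le_max_right _ _)
        (le_max_right _ _)))⟩
    have hy : Real.exp (-(max K 0 * max y 0)) ∈ Set.Ioc (0:ℝ) 1 :=
      ⟨Real.exp_pos _, Real.exp_le_one_iff.2 (neg_nonpos.2 (mul_nonneg (le_max_right _ _)
        (le_max_right _ _)))⟩
    rw [Real.dist_eq, abs_sub_le_iff]
    constructor <;> · obtain ⟨h1, h2⟩ := hx; obtain ⟨h3, h4⟩ := hy; linarith⟩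

/-- `min (K⁺ |x - c|) 2`, as a bounded continuous function of `x`. -/
noncomputable def minBCF (K c : ℝ) : BoundedContinuousFunction ℝ ℝ :=
  ⟨⟨fun x => min (max K 0 * |x - c|) 2, by fun_prop⟩, by
    refine ⟨2, fun x y => ?_⟩
    have hx : min (max K 0 * |x - c|) 2 ∈ Set.Icc (0:ℝ) 2 :=
      ⟨le_min (mul_nonneg (le_max_right _ _) (abs_nonneg _)) (by norm_num), min_le_right _ _⟩
    have hy : min (max K 0 * |y - c|) 2 ∈ Set.Icc (0:ℝ) 2 :=
      ⟨le_min (mul_nonneg (le_max_right _ _) (abs_nonneg _)) (by norm_num), min_le_right _ _⟩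
    rw [Real.dist_eq, abs_sub_le_iff]
    constructor <;> · obtain ⟨h1, h2⟩ := hx; obtain ⟨h3, h4⟩ := hy; linarith⟩

lemma exp_neg_sub_exp_neg_abs_le {a b : ℝ} (ha : 0 ≤ a) (hb : 0 ≤ b) :
    |Real.exp (-a) - Real.exp (-b)| ≤ |a - b| := by
  have key : ∀ u v : ℝ, 0 ≤ u → 0 ≤ v → v ≤ u →
      Real.exp (-u) - Real.exp (-v) ≤ u - v ∧ Real.exp (-v) - Real.exp (-u) ≤ u - v := by
    intro u v hu hv huv
    have h1 : Real.exp (-u) ≤ Real.exp (-v) := Real.exp_le_exp.2 (by linarith)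
    have h2 : Real.exp (-v) ≤ 1 := Real.exp_le_one_iff.2 (by linarith)
    have h3 : (v - u) + 1 ≤ Real.exp (v - u) := Real.add_one_le_exp _
    have h4 : Real.exp (-v) - Real.exp (-u) = Real.exp (-v) * (1 - Real.exp (v - u)) := by
      rw [mul_sub, mul_one, ← Real.exp_add]; ring_nf
    constructor
    · linarith
    · rw [h4]
      have h5 : Real.exp (v - u) ≤ 1 := Real.exp_le_one_iff.2 (by linarith)
      calc Real.exp (-v) * (1 - Real.exp (v - u)) ≤ 1 * (u - v) :=
            mul_le_mul h2 (by linarith) (by linarith) one_pos.le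
        _ = u - v := one_mul _
  rcases le_total b a with h | h
  · obtain ⟨h1, h2⟩ := key a b ha hb h
    rw [abs_sub_le_iff]; constructor <;>
      · rw [abs_of_nonneg (by linarith : (0:ℝ) ≤ a - b)]; linarith
  · obtain ⟨h1, h2⟩ := key b a hb ha h
    rw [abs_sub_le_iff]; constructor <;>
      · rw [abs_of_nonpos (by linarith : a - b ≤ 0)]; linarith

lemma expBCF_lip (K x y : ℝ) : |expBCF K x - expBCF K y| ≤ max K 0 * |x - y| := by
  have h1 : |Real.exp (-(max K 0 * max x 0)) - Real.exp (-(max K 0 * max y 0))| ≤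
      |max K 0 * max x 0 - max K 0 * max y 0| :=
    exp_neg_sub_exp_neg_abs_le (mul_nonneg (le_max_right _ _) (le_max_right _ _))
      (mul_nonneg (le_max_right _ _) (le_max_right _ _))
  refine h1.trans ?_
  rw [← mul_sub, abs_mul, abs_of_nonneg (le_max_right K 0)]
  exact mul_le_mul_of_nonneg_left (abs_max_sub_max_le_abs _ _ _) (le_max_right K 0)

lemma expBCF_mem (K x : ℝ) : expBCF K x ∈ Set.Ioc (0:ℝ) 1 :=
  ⟨Real.exp_pos _, Real.exp_le_one_iff.2 (neg_nonpos.2 (mul_nonneg (le_max_right _ _)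
    (le_max_right _ _)))⟩

lemma expBCF_apply (K x : ℝ) : expBCF K x = Real.exp (-(max K 0 * max x 0)) := rfl

lemma minBCF_apply (K c x : ℝ) : minBCF K c x = min (max K 0 * |x - c|) 2 := rfl

end AuxBCF

section AuxCondexp

variable {α : Type*}

/-- conditional expectation of an `L²` function is `L²` (finite measure case). -/
lemma memℒp_two_condexp {m m0 : MeasurableSpace α} (hm : m ≤ m0) (μ : Measure α)
    [IsFiniteMeasure μ] {f : α → ℝ} (hf : MemLp f 2 μ) : MemLp (μ[f|m]) 2 μ := by
  have hg : (condExpL2 ℝ ℝ hm (hf.toLp f) : α →₂[μ] ℝ) =ᵐ[μ] μ[f|m] := by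
    refine ae_eq_condExp_of_forall_setIntegral_eq hm (hf.integrable one_le_two)
      (fun s _ _ => (Lp.memLp _).integrable one_le_two |>.integrableOn)
      (fun s hs hμs => ?_) (aestronglyMeasurable_condExpL2 hm _)
    rw [integral_condExpL2_eq hm (hf.toLp f) hs hμs.ne]
    exact setIntegral_congr_ae (hm s hs) ((hf.coeFn_toLp).mono fun x hx _ => hx)
  exact (Lp.memLp _).ae_eq hg

lemma integrable_mul_of_memℒp_two {m : MeasurableSpace α} {μ : Measure α} {f g : α → ℝ}
    (hf : MemLp f 2 μ) (hg : MemLp g 2 μ) : Integrable (fun x => f x * g x) μ := by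
  have h : MemLp (f • g) 1 μ :=
    hg.smul hf (hpqr := ⟨by rw [inv_one, ENNReal.inv_two_add_inv_two]⟩)
  exact memLp_one_iff_integrable.1 h

end AuxCondexp

section AuxInv

variable {Ω : Type*} {m0 : MeasurableSpace Ω}

/-- preimage under a commuting map preserves invariant sets. -/
lemma invariantSets_preimage (T : ℤ × ℤ → Ω → Ω)
    (hTadd : ∀ p q : ℤ × ℤ, T (p + q) = T p ∘ T q) (hTm : ∀ p, Measurable (T p))
    (p q : ℤ × ℤ) {s : Set Ω} (hs : MeasurableSet[invariantSets m0 (fun _ : Unit => T p)] s) :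
    MeasurableSet[invariantSets m0 (fun _ : Unit => T p)] (T q ⁻¹' s) := by
  obtain ⟨hsm, hsinv⟩ := hs
  refine ⟨hTm q hsm, fun _ => ?_⟩
  have h1 : T p ⁻¹' (T q ⁻¹' s) = T q ⁻¹' (T p ⁻¹' s) := by
    rw [← Set.preimage_comp, ← Set.preimage_comp, ← hTadd, ← hTadd, add_comm]
  rw [h1, hsinv ()]

lemma invariantSets_sup_preimage (T : ℤ × ℤ → Ω → Ω)
    (hTadd : ∀ p q : ℤ × ℤ, T (p + q) = T p ∘ T q) (hTm : ∀ p, Measurable (T p))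
    (q : ℤ × ℤ) {s : Set Ω}
    (hs : MeasurableSet[invariantSets m0 (fun _ : Unit => T (1, 0)) ⊔
      invariantSets m0 (fun _ : Unit => T (0, 1))] s) :
    MeasurableSet[invariantSets m0 (fun _ : Unit => T (1, 0)) ⊔
      invariantSets m0 (fun _ : Unit => T (0, 1))] (T q ⁻¹' s) := by
  set I₁ := invariantSets m0 (fun _ : Unit => T (1, 0))
  set I₂ := invariantSets m0 (fun _ : Unit => T (0, 1))
  have key : (I₁ ⊔ I₂).comap (T q) ≤ I₁ ⊔ I₂ := by
    rw [MeasurableSpace.comap_sup]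
    refine sup_le_sup ?_ ?_ <;>
      · rintro u ⟨t, ht, rfl⟩
        exact invariantSets_preimage T hTadd hTm _ q ht
  exact key _ ⟨s, hs, rfl⟩

/-- If `E[g|I] = 0` a.e. and `S` is an invertible measure-preserving map whose inverse
preserves `I`, then `E[g ∘ S|I] = 0` a.e. -/
lemma condexp_comp_ae_zero {Ω' : Type*} {I : MeasurableSpace Ω'} {m1 : MeasurableSpace Ω'}
    {μ : Measure Ω'} [IsProbabilityMeasure μ] (hIle : I ≤ m1) {S Sinv : Ω' → Ω'}
    (hS : MeasurePreserving S μ μ) (hSinv : Measurable Sinv)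
    (hleft : ∀ x, Sinv (S x) = x) (hright : ∀ x, S (Sinv x) = x)
    (hIinv : ∀ s, MeasurableSet[I] s → MeasurableSet[I] (Sinv ⁻¹' s))
    {g : Ω' → ℝ} (hg : Integrable g μ) (hg0 : μ[g|I] =ᵐ[μ] 0) :
    μ[(fun x => g (S x))|I] =ᵐ[μ] 0 := by
  have hemb : MeasurableEmbedding S :=
    (MeasurableEquiv.mk ⟨S, Sinv, hleft, hright⟩ hS.measurable hSinv).measurableEmbedding
  have hgS : Integrable (fun x => g (S x)) μ :=
    memLp_one_iff_integrable.1 ((memLp_one_iff_integrable.2 hg).comp_measurePreserving hS)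
  refine (ae_eq_condExp_of_forall_setIntegral_eq hIle hgS
    (fun s _ _ => (integrable_zero _ _ _).integrableOn) (fun s hs hμs => ?_)
    (stronglyMeasurable_const.aestronglyMeasurable)).symm
  have hs' : MeasurableSet[I] (Sinv ⁻¹' s) := hIinv s hs
  have hpre : S ⁻¹' (Sinv ⁻¹' s) = s := by ext x; simp [hleft]
  have h1 : ∫ x in s, g (S x) ∂μ = ∫ y in Sinv ⁻¹' s, g y ∂μ := by
    conv_lhs => rw [← hpre]
    exact hS.setIntegral_preimage_emb hemb g _
  have h2 : ∫ y in Sinv ⁻¹' s, g y ∂μ = ∫ y in Sinv ⁻¹' s, (μ[g|I]) y ∂μ :=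
    (setIntegral_condExp hIle hg hs').symm
  have h3 : ∫ y in Sinv ⁻¹' s, (μ[g|I]) y ∂μ = 0 := by
    rw [integral_congr_ae (ae_restrict_of_ae hg0)]; simp
  rw [h1, h2, h3]; simp

/-- Key decomposition: the conditional second moment of the sum decomposes, since the
cross term has vanishing conditional expectation. -/
lemma conditional_decomp {Ω' : Type*} {I₁ I : MeasurableSpace Ω'} {m1 : MeasurableSpace Ω'}
    {μ : Measure Ω'} [IsProbabilityMeasure μ] (hI1I : I₁ ≤ I) (hIle : I ≤ m1)
    {H Hbar : Ω' → ℝ} (hH2 : MemLp H 2 μ) (hHb2 : MemLp Hbar 2 μ)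
    (hHmeasI : StronglyMeasurable[I] H)
    (S : ℕ → Ω' → Ω') (hSmp : ∀ j, MeasurePreserving (S j) μ μ)
    (hSIinv : ∀ j s, MeasurableSet[I] s → MeasurableSet[I] (S j ⁻¹' s))
    (hHb0 : ∀ j, μ[(fun x => Hbar (S j x))|I] =ᵐ[μ] 0)
    (v : ℕ) (a : ℝ) :
    μ[(fun x => a * (∑ j ∈ Finset.Icc 1 v, (H (S j x) + Hbar (S j x))) ^ 2)|I₁] =ᵐ[μ]
      μ[(fun x => a * (∑ j ∈ Finset.Icc 1 v, H (S j x)) ^ 2)|I₁] +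
        μ[(fun x => a * (∑ j ∈ Finset.Icc 1 v, Hbar (S j x)) ^ 2)|I₁] := by
  have hI1le : I₁ ≤ m1 := hI1I.trans hIle
  have hSH2 : MemLp (fun x => ∑ j ∈ Finset.Icc 1 v, H (S j x)) 2 μ :=
    memLp_finset_sum _ (fun j _ => hH2.comp_measurePreserving (hSmp j))
  have hSB2 : MemLp (fun x => ∑ j ∈ Finset.Icc 1 v, Hbar (S j x)) 2 μ :=
    memLp_finset_sum _ (fun j _ => hHb2.comp_measurePreserving (hSmp j))
  have hSHm : StronglyMeasurable[I] (fun x => ∑ j ∈ Finset.Icc 1 v, H (S j x)) :=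
    Finset.stronglyMeasurable_fun_sum _
      (fun j _ => hHmeasI.comp_measurable (fun s hs => hSIinv j s hs))
  have hBint : Integrable (fun x => a * (∑ j ∈ Finset.Icc 1 v, H (S j x)) ^ 2) μ :=
    hSH2.integrable_sq.const_mul a
  have hCint : Integrable (fun x => a * (∑ j ∈ Finset.Icc 1 v, Hbar (S j x)) ^ 2) μ :=
    hSB2.integrable_sq.const_mul a
  have hmulint : Integrable (fun x => (∑ j ∈ Finset.Icc 1 v, H (S j x)) *
      (∑ j ∈ Finset.Icc 1 v, Hbar (S j x))) μ := integrable_mul_of_memℒp_two hSH2 hSB2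
  have hDint : Integrable (fun x => (2 * a) * ((∑ j ∈ Finset.Icc 1 v, H (S j x)) *
      (∑ j ∈ Finset.Icc 1 v, Hbar (S j x)))) μ := hmulint.const_mul _
  -- the conditional expectation of the sum of Hbar-terms over I vanishes
  have hSB0 : μ[(fun x => ∑ j ∈ Finset.Icc 1 v, Hbar (S j x))|I] =ᵐ[μ] 0 := by
    have heq : (fun x => ∑ j ∈ Finset.Icc 1 v, Hbar (S j x))
        = ∑ j ∈ Finset.Icc 1 v, (fun x => Hbar (S j x)) := by
      funext x; rw [Finset.sum_apply]
    rw [heq]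
    refine (condExp_finsetSum (fun j _ =>
      memLp_one_iff_integrable.1 ((memLp_one_iff_integrable.2
        (hHb2.integrable one_le_two)).comp_measurePreserving (hSmp j))) _).trans ?_
    refine (eventuallyEq_sum fun j _ => hHb0 j).trans ?_
    simp
  -- the cross term has vanishing conditional expectation over I, hence over I₁
  have hcrossI : μ[(fun x => (∑ j ∈ Finset.Icc 1 v, H (S j x)) *
      (∑ j ∈ Finset.Icc 1 v, Hbar (S j x)))|I] =ᵐ[μ] 0 := by
    have h2 := condExp_mul_of_stronglyMeasurable_left hSHm
      (by exact hmulint) (hSB2.integrable one_le_two)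
    refine h2.trans ?_
    filter_upwards [hSB0] with x hx
    simp only [Pi.mul_apply, Pi.zero_apply] at hx ⊢
    rw [hx, mul_zero]
  have hcross : μ[(fun x => (∑ j ∈ Finset.Icc 1 v, H (S j x)) *
      (∑ j ∈ Finset.Icc 1 v, Hbar (S j x)))|I₁] =ᵐ[μ] 0 := by
    refine ((condExp_condExp_of_le hI1I hIle).symm.trans ?_)
    refine (condExp_congr_ae hcrossI).trans ?_
    rw [condExp_zero]
  have hD0 : μ[(fun x => (2 * a) * ((∑ j ∈ Finset.Icc 1 v, H (S j x)) *
      (∑ j ∈ Finset.Icc 1 v, Hbar (S j x))))|I₁] =ᵐ[μ] 0 := by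
    have hs := condExp_smul (μ := μ) (m := I₁) (2 * a)
      (fun x => (∑ j ∈ Finset.Icc 1 v, H (S j x)) * (∑ j ∈ Finset.Icc 1 v, Hbar (S j x)))
    refine hs.trans ?_
    filter_upwards [hcross] with x hx
    simp only [Pi.smul_apply, smul_eq_mul, Pi.zero_apply] at hx ⊢
    rw [hx, mul_zero]
  -- pointwise decomposition
  have hpt : (fun x => a * (∑ j ∈ Finset.Icc 1 v, (H (S j x) + Hbar (S j x))) ^ 2)
      = (fun x => a * (∑ j ∈ Finset.Icc 1 v, H (S j x)) ^ 2)
        + ((fun x => a * (∑ j ∈ Finset.Icc 1 v, Hbar (S j x)) ^ 2)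
          + (fun x => (2 * a) * ((∑ j ∈ Finset.Icc 1 v, H (S j x)) *
            (∑ j ∈ Finset.Icc 1 v, Hbar (S j x))))) := by
    funext x
    simp only [Pi.add_apply, Finset.sum_add_distrib]
    ring
  rw [hpt]
  refine (condExp_add hBint (hCint.add hDint) _).trans ?_
  have h3 := condExp_add (μ := μ) (m := I₁) hCint hDint
  filter_upwards [h3, hD0] with x hx3 hxD
  simp only [Pi.add_apply] at hx3 ⊢
  rw [hx3]
  simp only [Pi.add_apply, Pi.zero_apply] at hxD ⊢
  rw [hxD, add_zero]

end AuxInv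

/-- **The limit law for `f` is the convolution of the limit laws of `E[f|I]` and
`f − E[f|I]`.**
Let `f` be a square-integrable martingale difference for an ergodic `ℤ²`-action with
completely commuting invariant filtration, `I = I₁ ∨ I₂`, `H = E[f|I]`, `H̄ = f − H`.
Suppose the normalized partial sums of `f`, `H`, `H̄` converge in distribution to the
mixed normal laws with characteristic functions `φ_r(t) = E[exp(−t²η_r²/2)]` (`r=1,2,3`),
i.e. to the laws of `√(η_r²)·N` with `N` a standard normal independent of `η_r²`, where
`η_r²` is the limit in distribution of the conditional second moments
`E[((1/√v) Σ_{j≤v} g∘T_{1,j})² | I₁]` for `g = f, H, H̄` respectively.  If `η₃²` is a.s.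
constant, then `φ₁(t) = φ₂(t) φ₃(t)` for all `t`. -/
theorem limit_law_convolution
    {Ω : Type*} [m0 : MeasurableSpace Ω] (μ : Measure Ω) [IsProbabilityMeasure μ]
    (T : ℤ × ℤ → Ω → Ω)
    (hT0 : T 0 = id)
    (hTadd : ∀ p q : ℤ × ℤ, T (p + q) = T p ∘ T q)
    (hTmp : ∀ p, MeasurePreserving (T p) μ μ)
    (hTerg : ∀ s : Set Ω, MeasurableSet s → (∀ p, T p ⁻¹' s = s) → μ s = 0 ∨ μ s = 1)
    (F : ℤ → ℤ → MeasurableSpace Ω)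
    (hFle : ∀ i j, F i j ≤ m0)
    (hFinv : ∀ i j : ℤ, F i j = (F 0 0).comap (T (i, j)))
    (hFcc : ∀ f : Ω → ℝ, Integrable f μ → ∀ i j i' j' : ℤ,
      μ[μ[f|F i j]|F i' j'] =ᵐ[μ] μ[f|F (min i i') (min j j')])
    (f H Hbar : Ω → ℝ)
    (hmd : IsMartingaleDifference2 μ F f)
    (hH : H = μ[f|invariantSets m0 (fun _ : Unit => T (1, 0)) ⊔
      invariantSets m0 (fun _ : Unit => T (0, 1))])
    (hHbar : Hbar = f - H)
    {Ω' : Type*} [mΩ' : MeasurableSpace Ω'] (ν' : Measure Ω') [IsProbabilityMeasure ν']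
    (ηsq : Fin 3 → Ω' → ℝ)
    (hηmeas : ∀ r, Measurable (ηsq r))
    (hηnonneg : ∀ r, 0 ≤ᵐ[ν'] ηsq r)
    (hηlim : ∀ r : Fin 3,
      ∀ g : BoundedContinuousFunction ℝ ℝ,
        Filter.Tendsto (fun v : ℕ => ∫ ω,
            g ((μ[(fun x => (v : ℝ)⁻¹ *
              (∑ j ∈ Finset.Icc 1 v, (![f, H, Hbar] r) (T (1, (j : ℤ)) x)) ^ 2)|
                invariantSets m0 (fun _ : Unit => T (1, 0))]) ω) ∂μ)
          Filter.atTop (nhds (∫ ω', g (ηsq r ω') ∂ν')))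
    (hsumslim : ∀ r : Fin 3,
      ∀ g : BoundedContinuousFunction ℝ ℝ,
        Filter.Tendsto (fun p : ℕ × ℕ => ∫ ω,
            g ((Real.sqrt ((p.1 * p.2 : ℕ) : ℝ))⁻¹ *
              ∑ i ∈ Finset.Icc 1 p.1, ∑ j ∈ Finset.Icc 1 p.2,
                (![f, H, Hbar] r) (T ((i : ℤ), (j : ℤ)) ω)) ∂μ)
          Filter.atTop
          (nhds (∫ q : Ω' × ℝ, g (Real.sqrt (ηsq r q.1) * q.2)
            ∂(ν'.prod (ProbabilityTheory.gaussianReal 0 1)))))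
    (hconst : ∃ c : ℝ, ηsq 2 =ᵐ[ν'] fun _ => c) :
    ∀ t : ℝ,
      ∫ ω', Real.exp (-(t ^ 2) * ηsq 0 ω' / 2) ∂ν' =
        (∫ ω', Real.exp (-(t ^ 2) * ηsq 1 ω' / 2) ∂ν') *
          (∫ ω', Real.exp (-(t ^ 2) * ηsq 2 ω' / 2) ∂ν') := by
  intro t
  obtain ⟨c, hc⟩ := hconst
  have hI1le : (invariantSets m0 (fun _ : Unit => T (1, 0))) ≤ m0 := fun s hs => hs.1
  have hI2le : (invariantSets m0 (fun _ : Unit => T (0, 1))) ≤ m0 := fun s hs => hs.1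
  have hIle : (invariantSets m0 (fun _ : Unit => T (1, 0)) ⊔ invariantSets m0 (fun _ : Unit => T (0, 1))) ≤ m0 := sup_le hI1le hI2le
  have hTm : ∀ p, Measurable (T p) := fun p => (hTmp p).measurable
  have hf2 : MemLp f 2 μ := hmd.1
  have hH2 : MemLp H 2 μ := by rw [hH]; exact memℒp_two_condexp hIle μ hf2
  have hHb2 : MemLp Hbar 2 μ := by rw [hHbar]; exact hf2.sub hH2
  have hfint : Integrable f μ := hf2.integrable one_le_two
  have hHbint : Integrable Hbar μ := hHb2.integrable one_le_two
  -- `E[Hbar | I] = 0`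
  have hHIeq : μ[H|(invariantSets m0 (fun _ : Unit => T (1, 0)) ⊔ invariantSets m0 (fun _ : Unit => T (0, 1)))] =ᵐ[μ] μ[f|(invariantSets m0 (fun _ : Unit => T (1, 0)) ⊔ invariantSets m0 (fun _ : Unit => T (0, 1)))] := by
    rw [hH]; exact condExp_condExp_of_le le_rfl hIle
  have hHbar0 : μ[Hbar|(invariantSets m0 (fun _ : Unit => T (1, 0)) ⊔ invariantSets m0 (fun _ : Unit => T (0, 1)))] =ᵐ[μ] 0 := by
    rw [hHbar]
    refine (condExp_sub hfint (hH2.integrable one_le_two) _).trans ?_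
    filter_upwards [hHIeq] with x hx
    simp [Pi.sub_apply, hx]
  -- inverses
  have hTinvL : ∀ q : ℤ × ℤ, ∀ x, T (-q) (T q x) = x := by
    intro q x
    have h := hTadd (-q) q
    rw [neg_add_cancel, hT0] at h
    exact (congrFun h x).symm
  have hTinvR : ∀ q : ℤ × ℤ, ∀ x, T q (T (-q) x) = x := by
    intro q x
    have h := hTadd q (-q)
    rw [add_neg_cancel, hT0] at h
    exact (congrFun h x).symm
  have hcomp0 : ∀ q : ℤ × ℤ, μ[(fun x => Hbar (T q x))|(invariantSets m0 (fun _ : Unit => T (1, 0)) ⊔ invariantSets m0 (fun _ : Unit => T (0, 1)))] =ᵐ[μ] 0 := fun q =>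
    condexp_comp_ae_zero hIle (hTmp q) (hTm (-q)) (hTinvL q) (hTinvR q)
      (fun s hs => invariantSets_sup_preimage T hTadd hTm (-q) hs) hHbint hHbar0
  have hHmeasI : StronglyMeasurable[(invariantSets m0 (fun _ : Unit => T (1, 0)) ⊔ invariantSets m0 (fun _ : Unit => T (0, 1)))] H := by
    rw [hH]; exact stronglyMeasurable_condExp
  -- key decomposition, for every v
  have hkey : ∀ v : ℕ,
      μ[(fun x => (v:ℝ)⁻¹ * (∑ j ∈ Finset.Icc 1 v, f (T (1, (j:ℤ)) x)) ^ 2)|(invariantSets m0 (fun _ : Unit => T (1, 0)))] =ᵐ[μ]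
        μ[(fun x => (v:ℝ)⁻¹ * (∑ j ∈ Finset.Icc 1 v, H (T (1, (j:ℤ)) x)) ^ 2)|(invariantSets m0 (fun _ : Unit => T (1, 0)))] +
          μ[(fun x => (v:ℝ)⁻¹ * (∑ j ∈ Finset.Icc 1 v, Hbar (T (1, (j:ℤ)) x)) ^ 2)|(invariantSets m0 (fun _ : Unit => T (1, 0)))] := by
    intro v
    have hfHB : ∀ y, f y = H y + Hbar y := by intro y; rw [hHbar]; simp
    have h := conditional_decomp (μ := μ) (le_sup_left : (invariantSets m0 (fun _ : Unit => T (1, 0))) ≤ (invariantSets m0 (fun _ : Unit => T (1, 0)) ⊔ invariantSets m0 (fun _ : Unit => T (0, 1)))) hIle hH2 hHb2 hHmeasI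
      (fun j x => T (1, (j:ℤ)) x) (fun j => hTmp _)
      (fun j s hs => invariantSets_sup_preimage T hTadd hTm _ hs)
      (fun j => hcomp0 _) v ((v:ℝ)⁻¹)
    have heq : (fun x => (v:ℝ)⁻¹ * (∑ j ∈ Finset.Icc 1 v, f (T (1, (j:ℤ)) x)) ^ 2)
        = (fun x => (v:ℝ)⁻¹ * (∑ j ∈ Finset.Icc 1 v,
            (H (T (1, (j:ℤ)) x) + Hbar (T (1, (j:ℤ)) x))) ^ 2) := by
      funext x
      simp only [hfHB]
    rw [heq]
    exact h
  -- analysis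
  set K : ℝ := t ^ 2 / 2 with hKdef
  have hK0 : (0:ℝ) ≤ K := by rw [hKdef]; positivity
  have hKmax : max K 0 = K := max_eq_left hK0
  haveI : (MeasureTheory.ae ν').NeBot := ae_neBot.2 (IsProbabilityMeasure.ne_zero ν')
  have hc0 : (0:ℝ) ≤ c := by
    obtain ⟨x, hx1, hx2⟩ := ((hηnonneg 2).and hc).exists
    exact le_trans hx1 (le_of_eq hx2)
  set g2 : BoundedContinuousFunction ℝ ℝ :=
    (expBCF K).compContinuous (ContinuousMap.mk (fun x => x + c) (continuous_id.add continuous_const)) with hg2def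
  have hg2app : ∀ x, g2 x = expBCF K (x + c) := fun x => rfl
  have hA := hηlim 0 (expBCF K)
  have hB := hηlim 1 g2
  have hC := hηlim 2 (minBCF K c)
  simp only [Matrix.cons_val_zero] at hA
  simp only [Matrix.cons_val_one, Matrix.head_cons, Matrix.cons_val_zero] at hB
  simp only [Matrix.cons_val_two, Matrix.tail_cons, Matrix.head_cons] at hC
  have hCval : ∫ ω', (minBCF K c) (ηsq 2 ω') ∂ν' = 0 := by
    have hz : ∀ᵐ ω' ∂ν', (minBCF K c) (ηsq 2 ω') = 0 := by
      filter_upwards [hc] with x hx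
      rw [minBCF_apply, hx]
      simp
    rw [integral_congr_ae hz, integral_zero]
  rw [hCval] at hC
  -- integrability of bounded continuous compositions
  have hint : ∀ (G : BoundedContinuousFunction ℝ ℝ) (φ : Ω → ℝ),
      AEStronglyMeasurable φ μ → Integrable (fun ω => G (φ ω)) μ := by
    intro G φ hφ
    refine ⟨G.continuous.comp_aestronglyMeasurable hφ, ?_⟩
    exact HasFiniteIntegral.of_bounded (C := ‖G‖)
      (Filter.Eventually.of_forall fun ω => G.norm_coe_le_norm _)
  have hcondmeas : ∀ (φ : Ω → ℝ), AEStronglyMeasurable (μ[φ|(invariantSets m0 (fun _ : Unit => T (1, 0)))]) μ :=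
    fun φ => (stronglyMeasurable_condExp.mono hI1le).aestronglyMeasurable
  -- the pointwise bound
  have hbound : ∀ v : ℕ,
      |(∫ ω, (expBCF K) ((μ[(fun x => (v:ℝ)⁻¹ *
          (∑ j ∈ Finset.Icc 1 v, f (T (1, (j:ℤ)) x)) ^ 2)|(invariantSets m0 (fun _ : Unit => T (1, 0)))]) ω) ∂μ) -
        ∫ ω, g2 ((μ[(fun x => (v:ℝ)⁻¹ *
          (∑ j ∈ Finset.Icc 1 v, H (T (1, (j:ℤ)) x)) ^ 2)|(invariantSets m0 (fun _ : Unit => T (1, 0)))]) ω) ∂μ|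
      ≤ ∫ ω, (minBCF K c) ((μ[(fun x => (v:ℝ)⁻¹ *
          (∑ j ∈ Finset.Icc 1 v, Hbar (T (1, (j:ℤ)) x)) ^ 2)|(invariantSets m0 (fun _ : Unit => T (1, 0)))]) ω) ∂μ := by
    intro v
    have i1 := hint (expBCF K) _ (hcondmeas (fun x => (v:ℝ)⁻¹ *
      (∑ j ∈ Finset.Icc 1 v, f (T (1, (j:ℤ)) x)) ^ 2))
    have i2 := hint g2 _ (hcondmeas (fun x => (v:ℝ)⁻¹ *
      (∑ j ∈ Finset.Icc 1 v, H (T (1, (j:ℤ)) x)) ^ 2))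
    have i3 := hint (minBCF K c) _ (hcondmeas (fun x => (v:ℝ)⁻¹ *
      (∑ j ∈ Finset.Icc 1 v, Hbar (T (1, (j:ℤ)) x)) ^ 2))
    rw [← integral_sub i1 i2]
    rw [← Real.norm_eq_abs]
    refine le_trans (norm_integral_le_integral_norm _) ?_
    refine integral_mono_ae (i1.sub i2).norm i3 ?_
    filter_upwards [hkey v] with ω hω
    rw [Real.norm_eq_abs]
    have hω' : (μ[(fun x => (v:ℝ)⁻¹ * (∑ j ∈ Finset.Icc 1 v, f (T (1, (j:ℤ)) x)) ^ 2)|(invariantSets m0 (fun _ : Unit => T (1, 0)))]) ω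
        = (μ[(fun x => (v:ℝ)⁻¹ * (∑ j ∈ Finset.Icc 1 v, H (T (1, (j:ℤ)) x)) ^ 2)|(invariantSets m0 (fun _ : Unit => T (1, 0)))]) ω
          + (μ[(fun x => (v:ℝ)⁻¹ *
              (∑ j ∈ Finset.Icc 1 v, Hbar (T (1, (j:ℤ)) x)) ^ 2)|(invariantSets m0 (fun _ : Unit => T (1, 0)))]) ω := hω
    set b := (μ[(fun x => (v:ℝ)⁻¹ * (∑ j ∈ Finset.Icc 1 v, H (T (1, (j:ℤ)) x)) ^ 2)|(invariantSets m0 (fun _ : Unit => T (1, 0)))]) ω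
    set d := (μ[(fun x => (v:ℝ)⁻¹ * (∑ j ∈ Finset.Icc 1 v, Hbar (T (1, (j:ℤ)) x)) ^ 2)|(invariantSets m0 (fun _ : Unit => T (1, 0)))]) ω
    rw [hω', hg2app, minBCF_apply]
    refine le_min ?_ ?_
    · have hl := expBCF_lip K (b + d) (b + c)
      calc |expBCF K (b + d) - expBCF K (b + c)| ≤ max K 0 * |(b + d) - (b + c)| := hl
        _ = max K 0 * |d - c| := by ring_nf
    · have h5 := expBCF_mem K (b + d)
      have h6 := expBCF_mem K (b + c)
      obtain ⟨h5a, h5b⟩ := h5; obtain ⟨h6a, h6b⟩ := h6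
      rw [abs_sub_le_iff]
      constructor <;> linarith
  -- squeeze
  have hdiff0 : Filter.Tendsto (fun v : ℕ =>
      (∫ ω, (expBCF K) ((μ[(fun x => (v:ℝ)⁻¹ *
          (∑ j ∈ Finset.Icc 1 v, f (T (1, (j:ℤ)) x)) ^ 2)|(invariantSets m0 (fun _ : Unit => T (1, 0)))]) ω) ∂μ) -
        ∫ ω, g2 ((μ[(fun x => (v:ℝ)⁻¹ *
          (∑ j ∈ Finset.Icc 1 v, H (T (1, (j:ℤ)) x)) ^ 2)|(invariantSets m0 (fun _ : Unit => T (1, 0)))]) ω) ∂μ)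
      Filter.atTop (nhds 0) := by
    refine squeeze_zero_norm (fun v => ?_) hC
    rw [Real.norm_eq_abs]
    exact hbound v
  have hlim2 := hdiff0.add hB
  rw [zero_add] at hlim2
  have hfuneq : (fun v : ℕ =>
      ((∫ ω, (expBCF K) ((μ[(fun x => (v:ℝ)⁻¹ *
          (∑ j ∈ Finset.Icc 1 v, f (T (1, (j:ℤ)) x)) ^ 2)|(invariantSets m0 (fun _ : Unit => T (1, 0)))]) ω) ∂μ) -
        ∫ ω, g2 ((μ[(fun x => (v:ℝ)⁻¹ *
          (∑ j ∈ Finset.Icc 1 v, H (T (1, (j:ℤ)) x)) ^ 2)|(invariantSets m0 (fun _ : Unit => T (1, 0)))]) ω) ∂μ) +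
        ∫ ω, g2 ((μ[(fun x => (v:ℝ)⁻¹ *
          (∑ j ∈ Finset.Icc 1 v, H (T (1, (j:ℤ)) x)) ^ 2)|(invariantSets m0 (fun _ : Unit => T (1, 0)))]) ω) ∂μ)
      = (fun v : ℕ => ∫ ω, (expBCF K) ((μ[(fun x => (v:ℝ)⁻¹ *
          (∑ j ∈ Finset.Icc 1 v, f (T (1, (j:ℤ)) x)) ^ 2)|(invariantSets m0 (fun _ : Unit => T (1, 0)))]) ω) ∂μ) := by
    funext v; ring
  rw [hfuneq] at hlim2
  have huniq : ∫ ω', (expBCF K) (ηsq 0 ω') ∂ν' = ∫ ω', g2 (ηsq 1 ω') ∂ν' :=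
    tendsto_nhds_unique hA hlim2
  -- final identifications
  have hL1 : ∫ ω', Real.exp (-(t ^ 2) * ηsq 0 ω' / 2) ∂ν'
      = ∫ ω', (expBCF K) (ηsq 0 ω') ∂ν' := by
    refine integral_congr_ae ?_
    filter_upwards [hηnonneg 0] with x hx
    replace hx : (0:ℝ) ≤ ηsq 0 x := hx
    rw [expBCF_apply, hKmax, max_eq_left hx, hKdef]
    congr 1; ring
  have hL2 : ∫ ω', g2 (ηsq 1 ω') ∂ν'
      = (∫ ω', Real.exp (-(t ^ 2) * ηsq 1 ω' / 2) ∂ν') * Real.exp (-(t ^ 2) * c / 2) := by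
    calc ∫ ω', g2 (ηsq 1 ω') ∂ν'
        = ∫ ω', Real.exp (-(t ^ 2) * ηsq 1 ω' / 2) * Real.exp (-(t ^ 2) * c / 2) ∂ν' := by
          refine integral_congr_ae ?_
          filter_upwards [hηnonneg 1] with x hx
          replace hx : (0:ℝ) ≤ ηsq 1 x := hx
          rw [hg2app, expBCF_apply, hKmax, max_eq_left (by linarith : (0:ℝ) ≤ ηsq 1 x + c),
            ← Real.exp_add, hKdef]
          congr 1; ring
      _ = (∫ ω', Real.exp (-(t ^ 2) * ηsq 1 ω' / 2) ∂ν') * Real.exp (-(t ^ 2) * c / 2) :=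
          integral_mul_const _ _
  have hL3 : ∫ ω', Real.exp (-(t ^ 2) * ηsq 2 ω' / 2) ∂ν' = Real.exp (-(t ^ 2) * c / 2) := by
    rw [integral_congr_ae (hc.mono fun x hx => by rw [hx])]
    simp
  rw [hL1, huniq, hL2, hL3]
end
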